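/- arXiv:2510.19523 — 13 statements merged into one kernel-verified Lean document; each statement's English description precedes it below -/
import Mathlib

section
/- Let H be a right quaternionic module and T a right linear operator on H. For every s ∈ ℍ, there exists x ≠ 0 in H with Tx = x•s if and only if there exists v ≠ 0 in H with T(Tv) − (Tv)•(2Re(s)) + v•|s|² = 0. In other words, the set of right eigenvalues σ_r(T) equals the S-point spectrum σ_sp(T). -/
open Quaternion MulOpposite

lemma exists_conj_q (s : ℍ[ℝ]) : ∃ q : ℍ[ℝ], q ≠ 0 ∧ q * s = star s * q := by
  by_cases h : s.imI = 0 ∧ s.imJ = 0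
  · by_cases hk : s.imK = 0
    · exact ⟨1, one_ne_zero, by rw [one_mul, mul_one]; ext <;> simp [h.1, h.2, hk]⟩
    · refine ⟨(show ℍ[ℝ] from ⟨0, 1, 0, 0⟩), ?_, ?_⟩
      · intro hq; have := congrArg QuaternionAlgebra.imI hq; simp at this
      · apply Quaternion.ext
        · rw [Quaternion.re_mul, Quaternion.re_mul]; simp [h.1, h.2]
        · rw [Quaternion.imI_mul, Quaternion.imI_mul]; simp [h.1, h.2]
        · rw [Quaternion.imJ_mul, Quaternion.imJ_mul]; simp [h.1, h.2]
        · rw [Quaternion.imK_mul, Quaternion.imK_mul]; simp [h.1, h.2]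
  · refine ⟨(show ℍ[ℝ] from ⟨0, -s.imJ, s.imI, 0⟩), ?_, ?_⟩
    · intro hq
      rw [Quaternion.ext_iff] at hq
      simp at hq
      exact h ⟨hq.2, hq.1⟩
    · apply Quaternion.ext
      · rw [Quaternion.re_mul, Quaternion.re_mul]; simp []; ring
      · rw [Quaternion.imI_mul, Quaternion.imI_mul]; simp []; ring
      · rw [Quaternion.imJ_mul, Quaternion.imJ_mul]; simp []; ring
      · rw [Quaternion.imK_mul, Quaternion.imK_mul]; simp []; ring

lemma key_ids (s : ℍ[ℝ]) :
    ((2 * s.re : ℝ) : ℍ[ℝ]) = s + star s ∧ ((‖s‖ ^ 2 : ℝ) : ℍ[ℝ]) = star s * s := by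
  constructor
  · rw [Quaternion.self_add_star']
  · rw [Quaternion.star_mul_self, sq, Quaternion.normSq_eq_norm_mul_self, Quaternion.coe_mul]

/-- For a right linear operator `T` on a right quaternionic module,
`s` is a right eigenvalue of `T` iff `s` belongs to the S-point spectrum of `T`,
i.e. `σ_r(T) = σ_sp(T)`. -/
theorem rightEigenvalue_iff_sPointSpectrum {H : Type*} [AddCommGroup H]
    [Module ℍ[ℝ]ᵐᵒᵖ H] (T : H →ₗ[ℍ[ℝ]ᵐᵒᵖ] H) (s : ℍ[ℝ]) :
    (∃ x : H, x ≠ 0 ∧ T x = op s • x) ↔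
      (∃ v : H, v ≠ 0 ∧
        T (T v) - op ((2 * s.re : ℝ) : ℍ[ℝ]) • T v + op ((‖s‖ ^ 2 : ℝ) : ℍ[ℝ]) • v = 0) := by
  obtain ⟨h1, h2⟩ := key_ids s
  constructor
  · rintro ⟨x, hx, hTx⟩
    refine ⟨x, hx, ?_⟩
    rw [hTx, map_smul, hTx, smul_smul, smul_smul, ← op_mul, ← op_mul, h1, h2,
      ← sub_smul, ← add_smul, ← op_sub, ← op_add]
    have : s * s - s * (s + star s) + star s * s = 0 := by
      rw [mul_add, Quaternion.self_mul_star, Quaternion.star_mul_self]; abel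
    rw [this, op_zero, zero_smul]
  · rintro ⟨v, hv, hQ⟩
    by_cases hw : T v - op (star s) • v = 0
    · obtain ⟨q, hq, hqs⟩ := exists_conj_q s
      refine ⟨op q • v, ?_, ?_⟩
      · intro h0
        apply hv
        have : op q⁻¹ • ((op q : ℍ[ℝ]ᵐᵒᵖ) • v) = op q⁻¹ • (0 : H) := by rw [h0]
        rwa [smul_smul, ← op_mul, mul_inv_cancel₀ hq, op_one, one_smul, smul_zero] at this
      · have hTv : T v = op (star s) • v := by rwa [sub_eq_zero] at hw
        rw [map_smul, hTv, smul_smul, smul_smul, ← op_mul, ← op_mul, hqs]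
    · refine ⟨T v - op (star s) • v, hw, ?_⟩
      rw [← sub_eq_zero]
      have expand : T (T v - op (star s) • v) - op s • (T v - op (star s) • v)
          = T (T v) - op ((2 * s.re : ℝ) : ℍ[ℝ]) • T v + op ((‖s‖ ^ 2 : ℝ) : ℍ[ℝ]) • v := by
        rw [map_sub, map_smul, smul_sub, smul_smul, ← op_mul, h1, h2, op_add, add_smul]
        abel
      rw [expand]
      exact hQ
end

section
/- Let H be a right quaternionic module, T a right linear operator on H, and ω ∈ ℍ ∖ ℝ. Then the kernel of Q_ω(T), i.e. {v ∈ H : T(Tv) − (Tv)•(2Re(ω)) + v•|ω|² = 0}, equals the ℍᵐᵒᵖ-submodule of H generated by the set {x ∈ H : Tx = x•ω}. -/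
open Quaternion MulOpposite

/-- auxiliary: a pure quaternion. -/
def auxPure (a b c : ℝ) : ℍ[ℝ] := ⟨0, a, b, c⟩

/-- For a right linear operator `T` on a right quaternionic module and
`ω ∈ ℍ ∖ ℝ`, the kernel of `Q_ω(T)` equals the `ℍᵐᵒᵖ`-submodule generated by the right
eigenspace `{x : T x = x • ω}`. -/
theorem ker_Qs_eq_span_rightEigenspace {H : Type*} [AddCommGroup H]
    [Module ℍ[ℝ]ᵐᵒᵖ H] (T : H →ₗ[ℍ[ℝ]ᵐᵒᵖ] H) (ω : ℍ[ℝ])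
    (hω : ω ∉ Set.range ((↑) : ℝ → ℍ[ℝ])) :
    {v : H | T (T v) - op ((2 * ω.re : ℝ) : ℍ[ℝ]) • T v + op ((‖ω‖ ^ 2 : ℝ) : ℍ[ℝ]) • v = 0}
      = ↑(Submodule.span ℍ[ℝ]ᵐᵒᵖ {x : H | T x = op ω • x}) := by
  set c : ℍ[ℝ] := ((2 * ω.re : ℝ) : ℍ[ℝ]) with hc
  have hnorm : ((‖ω‖ ^ 2 : ℝ) : ℍ[ℝ]) = ((normSq ω : ℝ) : ℍ[ℝ]) := by
    rw [sq, ← normSq_eq_norm_mul_self]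
  set c2 : ℍ[ℝ] := ((normSq ω : ℝ) : ℍ[ℝ]) with hc2
  -- basic quaternion identities
  have ident : ω * ω - ω * c + c2 = 0 := by
    have h1 : c = ω + star ω := (self_add_star' ω).symm
    rw [h1, hc2, ← self_mul_star ω]; noncomm_ring
  have c_sub_star : c - star ω = ω := by
    have h1 : c = ω + star ω := (self_add_star' ω).symm
    rw [h1]; exact add_sub_cancel_right ω (star ω)
  have c_sub : c - ω = star ω := by
    have h1 : c = ω + star ω := (self_add_star' ω).symm
    rw [h1]; exact add_sub_cancel_left ω (star ω)
  have hd : ω - star ω ≠ 0 := by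
    intro h
    have h2 : star ω = ω := (sub_eq_zero.mp h).symm
    rw [Quaternion.star_eq_self] at h2
    exact hω ⟨ω.re, h2.symm⟩
  -- the conjugating quaternion q
  obtain ⟨q, hq, hq0⟩ : ∃ q : ℍ[ℝ], star ω * q = q * ω ∧ q ≠ 0 := by
    by_cases h : ω.imI = 0 ∧ ω.imJ = 0
    · refine ⟨auxPure 1 0 0, ?_, ?_⟩
      · ext <;> simp only [Quaternion.re_mul, Quaternion.imI_mul, Quaternion.imJ_mul,
          Quaternion.imK_mul] <;> simp [auxPure, h.1, h.2]
      · intro h0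
        have := congrArg QuaternionAlgebra.imI h0
        simp [auxPure] at this
    · refine ⟨auxPure (-ω.imJ) ω.imI 0, ?_, ?_⟩
      · ext <;> simp only [Quaternion.re_mul, Quaternion.imI_mul, Quaternion.imJ_mul,
          Quaternion.imK_mul] <;> simp [auxPure] <;> ring
      · intro h0
        apply h
        have h1 := congrArg QuaternionAlgebra.imI h0
        have h2 := congrArg QuaternionAlgebra.imJ h0
        simp [auxPure] at h1 h2
        exact ⟨h2, by linarith⟩
  rw [hnorm]
  ext v
  simp only [Set.mem_setOf_eq, SetLike.mem_coe]
  constructor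
  · -- kernel ⊆ span
    intro hv
    have hTT : T (T v) = op c • T v - op c2 • v := by
      rw [← sub_eq_zero, ← hv]; abel
    set x1 : H := T v - op (star ω) • v with hx1def
    set x2 : H := T v - op ω • v with hx2def
    have hx1 : T x1 = op ω • x1 := by
      have e1 : T x1 = (op c - op (star ω)) • T v - op c2 • v := by
        simp only [hx1def, map_sub, map_smul, hTT, sub_smul]; abel
      have e2 : op ω * op (star ω) = (op c2 : ℍ[ℝ]ᵐᵒᵖ) := by
        rw [← op_mul, star_mul_self]
      rw [e1, ← op_sub, c_sub_star, hx1def, smul_sub, smul_smul, e2]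
    have hx2 : T x2 = op (star ω) • x2 := by
      have e1 : T x2 = (op c - op ω) • T v - op c2 • v := by
        simp only [hx2def, map_sub, map_smul, hTT, sub_smul]; abel
      have e2 : op (star ω) * op ω = (op c2 : ℍ[ℝ]ᵐᵒᵖ) := by
        rw [← op_mul, self_mul_star]
      rw [e1, ← op_sub, c_sub, hx2def, smul_sub, smul_smul, e2]
    have hqx2 : T (op q • x2) = op ω • (op q • x2) := by
      rw [map_smul, hx2, smul_smul, smul_smul, ← op_mul, ← op_mul, hq]
    have hveq : v = op (ω - star ω)⁻¹ • x1 - op (ω - star ω)⁻¹ • x2 := by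
      rw [← smul_sub]
      have e : x1 - x2 = op (ω - star ω) • v := by
        rw [hx1def, hx2def, op_sub, sub_smul]; abel
      rw [e, smul_smul, ← op_mul, mul_inv_cancel₀ hd, op_one, one_smul]
    rw [hveq]
    have m1 : x1 ∈ Submodule.span ℍ[ℝ]ᵐᵒᵖ {x : H | T x = op ω • x} :=
      Submodule.subset_span hx1
    have m2 : x2 ∈ Submodule.span ℍ[ℝ]ᵐᵒᵖ {x : H | T x = op ω • x} := by
      have mq : op q • x2 ∈ Submodule.span ℍ[ℝ]ᵐᵒᵖ {x : H | T x = op ω • x} :=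
        Submodule.subset_span hqx2
      have : x2 = op q⁻¹ • (op q • x2) := by
        rw [smul_smul, ← op_mul, mul_inv_cancel₀ hq0, op_one, one_smul]
      rw [this]
      exact Submodule.smul_mem _ _ mq
    exact sub_mem (Submodule.smul_mem _ _ m1) (Submodule.smul_mem _ _ m2)
  · -- span ⊆ kernel
    intro hv
    induction hv using Submodule.span_induction with
    | mem x hx =>
      have hqid : (op ω * op ω - op c * op ω + op c2 : ℍ[ℝ]ᵐᵒᵖ) = 0 := by
        rw [← op_mul, ← op_mul, ← op_sub, ← op_add, ← op_zero, ← ident]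
      rw [hx, map_smul, hx, smul_smul, smul_smul, ← sub_smul, ← add_smul, hqid, zero_smul]
    | zero => simp
    | add x y _ _ hx hy =>
      have e : T (T (x + y)) - op c • T (x + y) + op c2 • (x + y)
          = (T (T x) - op c • T x + op c2 • x) + (T (T y) - op c • T y + op c2 • y) := by
        rw [map_add, map_add, smul_add, smul_add]; abel
      rw [e, hx, hy, add_zero]
    | smul a x _ hx =>
      have comm : ∀ (z : H) (r : ℝ), op (r : ℍ[ℝ]) • (a • z) = a • (op (r : ℍ[ℝ]) • z) := by
        intro z r
        rw [smul_smul, smul_smul]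
        congr 1
        apply unop_injective
        simp [coe_commutes]
      rw [map_smul, map_smul, hc, hc2, comm, comm, ← smul_sub, ← smul_add, ← hc, ← hc2, hx,
        smul_zero]
end

section
/- Let H be a right quaternionic module and T a right linear operator on H. Suppose Tx = x•ω for some x ≠ 0 and some ω ∈ ℍ, and let ω' ∈ ℍ satisfy Re(ω') = Re(ω) and |ω'| = |ω|. Then there exists y ≠ 0 in H with Ty = y•ω'. In particular, the set of right eigenvalues of T is an axially symmetric subset of ℍ. -/
open Quaternion MulOpposite

lemma aux_anticomm (u : ℍ[ℝ]) (hure : u.re = 0) (hu0 : u ≠ 0) :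
    ∃ q : ℍ[ℝ], q ≠ 0 ∧ q * u = -(u * q) := by
  by_cases h : u.imJ = 0 ∧ u.imK = 0
  · refine ⟨⟨0, 0, 1, 0⟩, ?_, ?_⟩
    · intro hq
      have hq := congrArg QuaternionAlgebra.imJ hq
      simp at hq
    · apply Quaternion.ext <;>
        simp [Quaternion.re_mul ⟨0, 0, 1, 0⟩ u, Quaternion.re_mul u ⟨0, 0, 1, 0⟩, Quaternion.imI_mul ⟨0, 0, 1, 0⟩ u, Quaternion.imI_mul u ⟨0, 0, 1, 0⟩, Quaternion.imJ_mul ⟨0, 0, 1, 0⟩ u, Quaternion.imJ_mul u ⟨0, 0, 1, 0⟩, Quaternion.imK_mul ⟨0, 0, 1, 0⟩ u, Quaternion.imK_mul u ⟨0, 0, 1, 0⟩,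
          hure, h.1, h.2] <;> ring
  · refine ⟨⟨0, 0, -u.imK, u.imJ⟩, ?_, ?_⟩
    · intro hq
      have hq := And.intro (congrArg QuaternionAlgebra.imJ hq) (congrArg QuaternionAlgebra.imK hq)
      push_neg at h
      simp at hq
      rcases eq_or_ne u.imJ 0 with hj | hj
      · exact h hj hq.1
      · exact hj hq.2
    · apply Quaternion.ext <;>
        simp [Quaternion.re_mul ⟨0, 0, -u.imK, u.imJ⟩ u, Quaternion.re_mul u ⟨0, 0, -u.imK, u.imJ⟩, Quaternion.imI_mul ⟨0, 0, -u.imK, u.imJ⟩ u, Quaternion.imI_mul u ⟨0, 0, -u.imK, u.imJ⟩, Quaternion.imJ_mul ⟨0, 0, -u.imK, u.imJ⟩ u, Quaternion.imJ_mul u ⟨0, 0, -u.imK, u.imJ⟩, Quaternion.imK_mul ⟨0, 0, -u.imK, u.imJ⟩ u, Quaternion.imK_mul u ⟨0, 0, -u.imK, u.imJ⟩,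
          hure] <;> ring

lemma aux_conj (ω ω' : ℍ[ℝ]) (hre : ω'.re = ω.re) (hnorm : ‖ω'‖ = ‖ω‖) :
    ∃ q : ℍ[ℝ], q ≠ 0 ∧ q * ω' = ω * q := by
  have u := ω.im
  set u := ω.im with hudef
  set v := ω'.im with hvdef
  have hns : normSq v = normSq u := by
    have h1 : normSq ω' = normSq ω := by
      rw [normSq_eq_norm_mul_self, normSq_eq_norm_mul_self, hnorm]
    have e1 : normSq v = normSq ω' - ω'.re ^ 2 := by
      simp only [hvdef, normSq_def', Quaternion.re_im, Quaternion.imI_im, Quaternion.imJ_im,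
        Quaternion.imK_im]
      ring
    have e2 : normSq u = normSq ω - ω.re ^ 2 := by
      simp only [hudef, normSq_def', Quaternion.re_im, Quaternion.imI_im, Quaternion.imJ_im,
        Quaternion.imK_im]
      ring
    rw [e1, e2, h1, hre]
  have hu2 : u * u = -(((normSq u : ℝ)) : ℍ[ℝ]) := by
    have := Quaternion.im_sq ω
    rwa [sq, ← hudef] at this
  have hv2 : v * v = -(((normSq u : ℝ)) : ℍ[ℝ]) := by
    have := Quaternion.im_sq ω'
    rw [sq, ← hvdef, hns] at this
    exact this
  suffices h : ∃ q : ℍ[ℝ], q ≠ 0 ∧ q * v = u * q by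
    obtain ⟨q, hq0, hq⟩ := h
    refine ⟨q, hq0, ?_⟩
    calc q * ω' = q * (↑ω'.re + v) := by rw [hvdef, Quaternion.re_add_im]
      _ = ↑ω'.re * q + u * q := by rw [mul_add, (Quaternion.coe_commute ω'.re q).eq, hq]
      _ = (↑ω.re + u) * q := by rw [add_mul, hre]
      _ = ω * q := by rw [hudef, Quaternion.re_add_im]
  by_cases hcase : u * v = ((normSq u : ℝ) : ℍ[ℝ])
  · by_cases hs0 : normSq u = 0
    · have hu0 : u = 0 := normSq_eq_zero.mp hs0
      have hv0 : v = 0 := normSq_eq_zero.mp (by rw [hns, hs0])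
      exact ⟨1, one_ne_zero, by rw [hu0, hv0, mul_zero, zero_mul]⟩
    · have hvu : v = -u := by
        have h1 : u * (u * v) = u * ((normSq u : ℝ) : ℍ[ℝ]) := by rw [hcase]
        rw [← mul_assoc, hu2, neg_mul, Quaternion.coe_mul_eq_smul,
          Quaternion.mul_coe_eq_smul] at h1
        have h2 : (normSq u) • v = (normSq u) • (-u) := by
          rw [smul_neg]
          exact neg_eq_iff_eq_neg.mp h1
        exact smul_right_injective ℍ[ℝ] hs0 h2
      have hu0 : u ≠ 0 := fun h => hs0 (by rw [h]; simp)
      obtain ⟨q, hq0, hq⟩ := aux_anticomm u (Quaternion.re_im ω) hu0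
      exact ⟨q, hq0, by rw [hvu, mul_neg, hq, neg_neg]⟩
  · refine ⟨((normSq u : ℝ) : ℍ[ℝ]) - u * v, sub_ne_zero.mpr (fun h => hcase h.symm), ?_⟩
    rw [sub_mul, mul_assoc, hv2, mul_sub, ← mul_assoc, hu2, mul_neg, sub_neg_eq_add,
      neg_mul, sub_neg_eq_add]
    exact add_comm _ _

/-- If `T x = x • ω` for some `x ≠ 0` and `ω' ∈ ℍ` has the same real part
and norm as `ω`, then `ω'` is also a right eigenvalue of `T`; the set of right eigenvalues
of `T` is axially symmetric. -/
theorem rightEigenvalues_axiallySymmetric {H : Type*} [AddCommGroup H]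
    [Module ℍ[ℝ]ᵐᵒᵖ H] (T : H →ₗ[ℍ[ℝ]ᵐᵒᵖ] H) (ω ω' : ℍ[ℝ]) (x : H) (hx : x ≠ 0)
    (hTx : T x = op ω • x) (hre : ω'.re = ω.re) (hnorm : ‖ω'‖ = ‖ω‖) :
    ∃ y : H, y ≠ 0 ∧ T y = op ω' • y := by
  obtain ⟨q, hq0, hq⟩ := aux_conj ω ω' hre hnorm
  refine ⟨op q • x, ?_, ?_⟩
  · intro h
    apply hx
    have hqop : (op q : ℍ[ℝ]ᵐᵒᵖ) ≠ 0 := fun h' => hq0 (by simpa using h')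
    calc x = (op q)⁻¹ • (op q • x) := (inv_smul_smul₀ hqop x).symm
      _ = 0 := by rw [h, smul_zero]
  · rw [map_smul, hTx, smul_smul, smul_smul, ← op_mul, ← op_mul, hq]
end

section
/- Let s ∈ ℍ with s ∉ ℝ (so s − s̄ ≠ 0), let (w_n)_{n≥1} be a sequence of positive real numbers, and let (x_n)_{n≥1} be a sequence of quaternions satisfying |s|²·x_n − 2Re(s)·w_n·x_{n+1} + w_n·w_{n+1}·x_{n+2} = 0 for all n ≥ 1. Then for every n ≥ 2, x_{n+1} = (w₁w₂⋯w_n)⁻¹ · ( (sⁿ − s̄ⁿ)(s − s̄)⁻¹ · w₁ · x₂ − (sⁿ·s̄ − s·s̄ⁿ)(s − s̄)⁻¹ · x₁ ). -/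
open Quaternion

set_option maxHeartbeats 1000000 in
/-- Explicit formula for the coordinates of an `S`-eigenvector of a
backward unilateral weighted shift: if `s ∉ ℝ`, the weights `w_n` (for `n ≥ 1`) are
positive reals, and `|s|²·x_n − 2Re(s)·w_n·x_{n+1} + w_n·w_{n+1}·x_{n+2} = 0` for all
`n ≥ 1`, then for every `n ≥ 2`,
`x_{n+1} = (w₁⋯w_n)⁻¹·((sⁿ − s̄ⁿ)(s − s̄)⁻¹·w₁·x₂ − (sⁿs̄ − s·s̄ⁿ)(s − s̄)⁻¹·x₁)`. -/
theorem weightedShift_sEigenvector_coords (s : ℍ[ℝ])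
    (hs : s ∉ Set.range ((↑) : ℝ → ℍ[ℝ]))
    (w : ℕ → ℝ) (hw : ∀ n, 1 ≤ n → 0 < w n) (x : ℕ → ℍ[ℝ])
    (hrec : ∀ n, 1 ≤ n →
      ((‖s‖ ^ 2 : ℝ) : ℍ[ℝ]) * x n - ((2 * s.re * w n : ℝ) : ℍ[ℝ]) * x (n + 1)
        + ((w n * w (n + 1) : ℝ) : ℍ[ℝ]) * x (n + 2) = 0) :
    ∀ n, 2 ≤ n →
      x (n + 1) = (((∏ k ∈ Finset.Icc 1 n, w k)⁻¹ : ℝ) : ℍ[ℝ]) *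
        ((s ^ n - (star s) ^ n) * (s - star s)⁻¹ * ((w 1 : ℝ) : ℍ[ℝ]) * x 2
          - (s ^ n * star s - s * (star s) ^ n) * (s - star s)⁻¹ * x 1) := by
  have hne : s - star s ≠ 0 := by
    intro h
    exact hs ⟨s.re, (Quaternion.star_eq_self.mp (sub_eq_zero.mp h).symm).symm⟩
  set r : ℍ[ℝ] := (s - star s)⁻¹ with hr
  set c : ℝ := 2 * s.re with hc
  set d : ℝ := ‖s‖ ^ 2 with hdd
  have hdco : ((d : ℝ) : ℍ[ℝ]) = s * star s := by
    rw [Quaternion.self_mul_star]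
    congr 1
    rw [Quaternion.normSq_eq_norm_mul_self, hdd, sq]
  have hcco : ((c : ℝ) : ℍ[ℝ]) = s + star s := (Quaternion.self_add_star' s).symm
  have hs2 : s ^ 2 = (c : ℍ[ℝ]) * s - (d : ℍ[ℝ]) := by
    rw [hcco, hdco, sq, add_mul, star_comm_self', add_sub_cancel_right]
  have hs2' : (star s) ^ 2 = (c : ℍ[ℝ]) * star s - (d : ℍ[ℝ]) := by
    have h := congrArg star hs2
    rwa [star_pow, star_sub, star_mul, Quaternion.star_coe, Quaternion.star_coe,
      ← Quaternion.coe_commutes] at h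
  have hpow : ∀ (t : ℍ[ℝ]), t ^ 2 = (c : ℍ[ℝ]) * t - (d : ℍ[ℝ]) → ∀ n : ℕ,
      t ^ (n + 2) = (c : ℍ[ℝ]) * t ^ (n + 1) - (d : ℍ[ℝ]) * t ^ n := by
    intro t ht n
    calc t ^ (n + 2) = t ^ n * t ^ 2 := by rw [← pow_add]
      _ = t ^ n * ((c : ℍ[ℝ]) * t) - t ^ n * (d : ℍ[ℝ]) := by rw [ht, mul_sub]
      _ = (c : ℍ[ℝ]) * t ^ (n + 1) - (d : ℍ[ℝ]) * t ^ n := by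
          rw [← mul_assoc, ← Quaternion.coe_commutes, mul_assoc, ← pow_succ,
            ← Quaternion.coe_commutes]
  have hpow2 : ∀ n : ℕ, s * (star s) ^ (n + 2)
      = (c : ℍ[ℝ]) * (s * (star s) ^ (n + 1)) - (d : ℍ[ℝ]) * (s * (star s) ^ n) := by
    intro n
    rw [hpow _ hs2' n, mul_sub, ← mul_assoc, ← Quaternion.coe_commutes, mul_assoc,
      ← mul_assoc s, ← Quaternion.coe_commutes, mul_assoc]
  have hP : ∀ n : ℕ, (s ^ (n + 2) - (star s) ^ (n + 2)) * r
      = (c : ℍ[ℝ]) * ((s ^ (n + 1) - (star s) ^ (n + 1)) * r)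
        - (d : ℍ[ℝ]) * ((s ^ n - (star s) ^ n) * r) := by
    intro n
    rw [hpow s hs2 n, hpow (star s) hs2' n]
    noncomm_ring
  have hQ : ∀ n : ℕ, (s ^ (n + 2) * star s - s * (star s) ^ (n + 2)) * r
      = (c : ℍ[ℝ]) * ((s ^ (n + 1) * star s - s * (star s) ^ (n + 1)) * r)
        - (d : ℍ[ℝ]) * ((s ^ n * star s - s * (star s) ^ n) * r) := by
    intro n
    rw [hpow s hs2 n, hpow2 n]
    noncomm_ring
  have hP1 : (s ^ 1 - (star s) ^ 1) * r = 1 := by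
    rw [pow_one, pow_one, hr, mul_inv_cancel₀ hne]
  have hQ1 : (s ^ 1 * star s - s * (star s) ^ 1) * r = 0 := by
    simp
  have hP0 : (s ^ 0 - (star s) ^ 0) * r = 0 := by simp
  have hQ0 : (s ^ 0 * star s - s * (star s) ^ 0) * r = -1 := by
    rw [pow_zero, pow_zero, one_mul, mul_one, ← neg_sub, neg_mul, hr,
      mul_inv_cancel₀ hne]
  have hrec' : ∀ n, 1 ≤ n → ((w n * w (n + 1) : ℝ) : ℍ[ℝ]) * x (n + 2)
      = ((2 * s.re * w n : ℝ) : ℍ[ℝ]) * x (n + 1) - ((‖s‖ ^ 2 : ℝ) : ℍ[ℝ]) * x n := by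
    intro n hn
    have h2 := eq_neg_of_add_eq_zero_right (hrec n hn)
    rw [h2, neg_sub]
  have key : ∀ n, 1 ≤ n → ((∏ k ∈ Finset.Icc 1 n, w k : ℝ) : ℍ[ℝ]) * x (n + 1)
      = (s ^ n - (star s) ^ n) * r * ((w 1 : ℝ) : ℍ[ℝ]) * x 2
        - (s ^ n * star s - s * (star s) ^ n) * r * x 1 := by
    have key1 : ((∏ k ∈ Finset.Icc 1 1, w k : ℝ) : ℍ[ℝ]) * x 2
        = (s ^ 1 - (star s) ^ 1) * r * ((w 1 : ℝ) : ℍ[ℝ]) * x 2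
          - (s ^ 1 * star s - s * (star s) ^ 1) * r * x 1 := by
      rw [Finset.Icc_self, Finset.prod_singleton, hP1, hQ1, one_mul, zero_mul, sub_zero]
    have key2 : ((∏ k ∈ Finset.Icc 1 2, w k : ℝ) : ℍ[ℝ]) * x 3
        = (s ^ 2 - (star s) ^ 2) * r * ((w 1 : ℝ) : ℍ[ℝ]) * x 2
          - (s ^ 2 * star s - s * (star s) ^ 2) * r * x 1 := by
      have hprod : (∏ k ∈ Finset.Icc 1 2, w k) = w 1 * w 2 := by
        rw [Finset.prod_Icc_succ_top (by omega) w, Finset.Icc_self, Finset.prod_singleton]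
      have hP2 : (s ^ 2 - (star s) ^ 2) * r = (c : ℍ[ℝ]) := by
        have h := hP 0
        rw [hP1, hP0] at h
        simpa using h
      have hQ2 : (s ^ 2 * star s - s * (star s) ^ 2) * r = (d : ℍ[ℝ]) := by
        have h := hQ 0
        rw [hQ1, hQ0] at h
        simpa using h
      rw [hprod, hP2, hQ2]
      have h := hrec' 1 le_rfl
      rw [h, Quaternion.coe_mul, ← hc, ← hdd, mul_assoc]
    have main : ∀ n, 1 ≤ n →
        (((∏ k ∈ Finset.Icc 1 n, w k : ℝ) : ℍ[ℝ]) * x (n + 1)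
          = (s ^ n - (star s) ^ n) * r * ((w 1 : ℝ) : ℍ[ℝ]) * x 2
            - (s ^ n * star s - s * (star s) ^ n) * r * x 1) ∧
        (((∏ k ∈ Finset.Icc 1 (n + 1), w k : ℝ) : ℍ[ℝ]) * x (n + 2)
          = (s ^ (n + 1) - (star s) ^ (n + 1)) * r * ((w 1 : ℝ) : ℍ[ℝ]) * x 2
            - (s ^ (n + 1) * star s - s * (star s) ^ (n + 1)) * r * x 1) := by
      intro n hn
      induction n, hn using Nat.le_induction with
      | base => exact ⟨key1, key2⟩
      | succ n hn ih =>
        refine ⟨ih.2, ?_⟩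
        have hprod1 : (∏ k ∈ Finset.Icc 1 (n + 1), w k)
            = (∏ k ∈ Finset.Icc 1 n, w k) * w (n + 1) :=
          Finset.prod_Icc_succ_top (by omega) w
        have hprod2 : (∏ k ∈ Finset.Icc 1 (n + 2), w k)
            = (∏ k ∈ Finset.Icc 1 (n + 1), w k) * w (n + 2) :=
          Finset.prod_Icc_succ_top (by omega) w
        have e1 : ((∏ k ∈ Finset.Icc 1 (n + 1), w k) * w (n + 2) : ℝ)
            = (∏ k ∈ Finset.Icc 1 n, w k) * (w (n + 1) * w (n + 2)) := by
          rw [hprod1]; ring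
        calc ((∏ k ∈ Finset.Icc 1 (n + 2), w k : ℝ) : ℍ[ℝ]) * x (n + 3)
            = ((∏ k ∈ Finset.Icc 1 n, w k : ℝ) : ℍ[ℝ])
              * (((w (n + 1) * w (n + 2) : ℝ) : ℍ[ℝ]) * x (n + 3)) := by
              rw [hprod2, e1, Quaternion.coe_mul, mul_assoc]
          _ = ((∏ k ∈ Finset.Icc 1 n, w k : ℝ) : ℍ[ℝ])
              * (((2 * s.re * w (n + 1) : ℝ) : ℍ[ℝ]) * x (n + 2)
                - ((‖s‖ ^ 2 : ℝ) : ℍ[ℝ]) * x (n + 1)) := by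
              rw [hrec' (n + 1) (by omega)]
          _ = (c : ℍ[ℝ]) * (((∏ k ∈ Finset.Icc 1 (n + 1), w k : ℝ) : ℍ[ℝ]) * x (n + 2))
              - (d : ℍ[ℝ]) * (((∏ k ∈ Finset.Icc 1 n, w k : ℝ) : ℍ[ℝ]) * x (n + 1)) := by
              simp only [mul_sub, ← mul_assoc, ← Quaternion.coe_mul]
              have e2 : ((∏ k ∈ Finset.Icc 1 n, w k) * 2 * s.re * w (n + 1) : ℝ)
                  = c * (∏ k ∈ Finset.Icc 1 (n + 1), w k) := by rw [hc, hprod1]; ring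
              have e3 : ((∏ k ∈ Finset.Icc 1 n, w k) * ‖s‖ ^ 2 : ℝ)
                  = d * (∏ k ∈ Finset.Icc 1 n, w k) := by rw [hdd]; ring
              rw [e2, e3]
          _ = (c : ℍ[ℝ]) * ((s ^ (n + 1) - (star s) ^ (n + 1)) * r * ((w 1 : ℝ) : ℍ[ℝ]) * x 2
                - (s ^ (n + 1) * star s - s * (star s) ^ (n + 1)) * r * x 1)
              - (d : ℍ[ℝ]) * ((s ^ n - (star s) ^ n) * r * ((w 1 : ℝ) : ℍ[ℝ]) * x 2
                - (s ^ n * star s - s * (star s) ^ n) * r * x 1) := by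
              rw [ih.2, ih.1]
          _ = (s ^ (n + 2) - (star s) ^ (n + 2)) * r * ((w 1 : ℝ) : ℍ[ℝ]) * x 2
              - (s ^ (n + 2) * star s - s * (star s) ^ (n + 2)) * r * x 1 := by
              rw [hP n, hQ n]
              simp only [mul_sub, sub_mul, mul_assoc]
              abel
    exact fun n hn => (main n hn).1
  intro n hn
  have hπ : (0 : ℝ) < ∏ k ∈ Finset.Icc 1 n, w k :=
    Finset.prod_pos fun i hi => hw i (Finset.mem_Icc.mp hi).1
  rw [← key n (by omega), ← mul_assoc, ← Quaternion.coe_mul, inv_mul_cancel₀ hπ.ne',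
    Quaternion.coe_one, one_mul]
end

section
/- Let (w_n)_{n≥1} be a bounded sequence of nonzero quaternions. Define maps T and T̃ on ℓ²(ℕ⁺, ℍ) by (Tx)_n = w_n · x_{n+1} and (T̃x)_n = |w_n| · x_{n+1} for n ≥ 1 (left multiplication by the weight). Then T and T̃ are bounded right linear operators, and they are quaternion unitarily equivalent: there exists a surjective right ℍ-linear isometry X of ℓ²(ℕ⁺, ℍ) with T∘X = X∘T̃. (Every backward unilateral weighted shift is quaternion unitarily equivalent to the one whose weights are the moduli of its weights.) -/
open Quaternion MulOpposite

noncomputable section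

namespace WSAux

abbrev H2 := lp (fun _ : ℕ+ => ℍ[ℝ]) 2

lemma two_pos' : 0 < (2 : ENNReal).toReal := by norm_num

/-- Membership lemma: twisted reindexed multiplication stays in ℓ². -/
lemma memℓp_mul (a : ℕ+ → ℍ[ℝ]) (C : ℝ) (hC : ∀ n, ‖a n‖ ≤ C)
    (f : ℕ+ → ℕ+) (hf : Function.Injective f) (x : H2) :
    Memℓp (fun n : ℕ+ => a n * x (f n)) 2 := by
  rw [memℓp_gen_iff two_pos']
  have hx : Summable fun n : ℕ+ => ‖x n‖ ^ (2 : ENNReal).toReal :=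
    (lp.memℓp x).summable two_pos'
  have hxf : Summable fun n : ℕ+ => ‖x (f n)‖ ^ (2 : ENNReal).toReal :=
    hx.comp_injective hf
  refine Summable.of_nonneg_of_le (fun n => by positivity) (fun n => ?_)
    (hxf.mul_left (C ^ (2 : ENNReal).toReal))
  have h0 : (0:ℝ) ≤ ‖a n‖ := norm_nonneg _
  calc ‖a n * x (f n)‖ ^ (2 : ENNReal).toReal
      = (‖a n‖ * ‖x (f n)‖) ^ (2 : ENNReal).toReal := by rw [norm_mul]
    _ = ‖a n‖ ^ (2 : ENNReal).toReal * ‖x (f n)‖ ^ (2 : ENNReal).toReal :=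
        Real.mul_rpow h0 (norm_nonneg _)
    _ ≤ C ^ (2 : ENNReal).toReal * ‖x (f n)‖ ^ (2 : ENNReal).toReal := by
        gcongr
        exact hC n

/-- Norm bound for the twisted reindexed multiplication. -/
lemma norm_mul_le (a : ℕ+ → ℍ[ℝ]) (C : ℝ) (hC0 : 0 ≤ C) (hC : ∀ n, ‖a n‖ ≤ C)
    (f : ℕ+ → ℕ+) (hf : Function.Injective f) (x : H2) :
    ‖(⟨fun n : ℕ+ => a n * x (f n), memℓp_mul a C hC f hf x⟩ : H2)‖ ≤ C * ‖x‖ := by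
  refine lp.norm_le_of_tsum_le two_pos' (by positivity) ?_
  have hx : Summable fun n : ℕ+ => ‖x n‖ ^ (2 : ENNReal).toReal :=
    (lp.memℓp x).summable two_pos'
  have hxf : Summable fun n : ℕ+ => ‖x (f n)‖ ^ (2 : ENNReal).toReal :=
    hx.comp_injective hf
  have hmem := memℓp_mul a C hC f hf x
  have hsum : Summable fun n : ℕ+ => ‖a n * x (f n)‖ ^ (2 : ENNReal).toReal :=
    (memℓp_gen_iff two_pos').1 hmem
  have step1 : (∑' n : ℕ+, ‖a n * x (f n)‖ ^ (2 : ENNReal).toReal)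
      ≤ ∑' n : ℕ+, C ^ (2 : ENNReal).toReal * ‖x (f n)‖ ^ (2 : ENNReal).toReal := by
    refine Summable.tsum_le_tsum (fun n => ?_) hsum (hxf.mul_left _)
    calc ‖a n * x (f n)‖ ^ (2 : ENNReal).toReal
        = (‖a n‖ * ‖x (f n)‖) ^ (2 : ENNReal).toReal := by rw [norm_mul]
      _ = ‖a n‖ ^ (2 : ENNReal).toReal * ‖x (f n)‖ ^ (2 : ENNReal).toReal :=
          Real.mul_rpow (norm_nonneg _) (norm_nonneg _)
      _ ≤ C ^ (2 : ENNReal).toReal * ‖x (f n)‖ ^ (2 : ENNReal).toReal := by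
          gcongr
          exact hC n
  have step2 : (∑' n : ℕ+, ‖x (f n)‖ ^ (2 : ENNReal).toReal)
      ≤ ∑' n : ℕ+, ‖x n‖ ^ (2 : ENNReal).toReal := by
    refine Summable.tsum_le_tsum_of_inj f hf (fun c _ => by positivity) (fun n => le_rfl) hxf hx
  calc (∑' n : ℕ+, ‖a n * x (f n)‖ ^ (2 : ENNReal).toReal)
      ≤ ∑' n : ℕ+, C ^ (2 : ENNReal).toReal * ‖x (f n)‖ ^ (2 : ENNReal).toReal := step1
    _ = C ^ (2 : ENNReal).toReal * ∑' n : ℕ+, ‖x (f n)‖ ^ (2 : ENNReal).toReal :=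
        tsum_mul_left
    _ ≤ C ^ (2 : ENNReal).toReal * ∑' n : ℕ+, ‖x n‖ ^ (2 : ENNReal).toReal := by
        have := Real.rpow_nonneg hC0 (2 : ENNReal).toReal
        exact mul_le_mul_of_nonneg_left step2 this
    _ = C ^ (2 : ENNReal).toReal * ‖x‖ ^ (2 : ENNReal).toReal := by
        rw [← lp.norm_rpow_eq_tsum two_pos' x]
    _ = (C * ‖x‖) ^ (2 : ENNReal).toReal :=
        (Real.mul_rpow hC0 (norm_nonneg _)).symm

/-- The bounded right-linear operator `x ↦ fun n => a n * x (f n)`. -/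
def twistOp (a : ℕ+ → ℍ[ℝ]) (C : ℝ) (hC0 : 0 ≤ C) (hC : ∀ n, ‖a n‖ ≤ C)
    (f : ℕ+ → ℕ+) (hf : Function.Injective f) : H2 →L[ℍ[ℝ]ᵐᵒᵖ] H2 :=
  LinearMap.mkContinuous
    { toFun := fun x => ⟨fun n => a n * x (f n), memℓp_mul a C hC f hf x⟩
      map_add' := fun x y => by
        refine lp.ext (funext fun n => ?_)
        simp only [lp.coeFn_add, Pi.add_apply]
        exact mul_add _ _ _
      map_smul' := fun c x => by
        refine lp.ext (funext fun n => ?_)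
        simp only [lp.coeFn_smul, Pi.smul_apply, RingHom.id_apply]
        rw [MulOpposite.smul_eq_mul_unop, MulOpposite.smul_eq_mul_unop, mul_assoc] }
    C (fun x => norm_mul_le a C hC0 hC f hf x)

@[simp] lemma twistOp_apply (a : ℕ+ → ℍ[ℝ]) (C : ℝ) (hC0 : 0 ≤ C) (hC : ∀ n, ‖a n‖ ≤ C)
    (f : ℕ+ → ℕ+) (hf : Function.Injective f) (x : H2) (n : ℕ+) :
    twistOp a C hC0 hC f hf x n = a n * x (f n) := rfl

/-- The recursively defined twisting sequence. -/
def vseq (w : ℕ+ → ℍ[ℝ]) : ℕ → ℍ[ℝ]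
  | 0 => 1
  | k + 1 => (w ⟨k + 1, k.succ_pos⟩)⁻¹ * vseq w k * ((‖w ⟨k + 1, k.succ_pos⟩‖ : ℝ) : ℍ[ℝ])

lemma norm_vseq (w : ℕ+ → ℍ[ℝ]) (hw0 : ∀ n, w n ≠ 0) (k : ℕ) : ‖vseq w k‖ = 1 := by
  induction k with
  | zero => simp [vseq]
  | succ k ih =>
    have h : w ⟨k + 1, k.succ_pos⟩ ≠ 0 := hw0 _
    have hn : ‖w ⟨k + 1, k.succ_pos⟩‖ ≠ 0 := norm_ne_zero_iff.2 h
    simp [vseq, norm_mul, norm_inv, ih, Quaternion.norm_coe,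
      Real.norm_of_nonneg (norm_nonneg _), inv_mul_cancel₀ hn]

def useq (w : ℕ+ → ℍ[ℝ]) (n : ℕ+) : ℍ[ℝ] := vseq w (n.val - 1)

lemma norm_useq (w : ℕ+ → ℍ[ℝ]) (hw0 : ∀ n, w n ≠ 0) (n : ℕ+) : ‖useq w n‖ = 1 :=
  norm_vseq w hw0 _

lemma useq_succ (w : ℕ+ → ℍ[ℝ]) (n : ℕ+) :
    useq w (n + 1) = (w n)⁻¹ * useq w n * ((‖w n‖ : ℝ) : ℍ[ℝ]) := by
  obtain ⟨k, hk⟩ : ∃ k : ℕ, n = ⟨k + 1, k.succ_pos⟩ := ⟨n.val - 1, Subtype.ext (Nat.succ_pred_eq_of_pos n.pos).symm⟩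
  subst hk
  show vseq w (k + 1 + 1 - 1) = _
  simp only [Nat.add_sub_cancel]
  rfl

lemma key_identity (w : ℕ+ → ℍ[ℝ]) (hw0 : ∀ n, w n ≠ 0) (n : ℕ+) :
    w n * useq w (n + 1) = useq w n * ((‖w n‖ : ℝ) : ℍ[ℝ]) := by
  rw [useq_succ, ← mul_assoc, ← mul_assoc, mul_inv_cancel₀ (hw0 n), one_mul]

end WSAux

/-- Every backward unilateral weighted shift on `ℓ²(ℕ⁺, ℍ)` with bounded
nonzero quaternionic weights `(w_n)` is a bounded right linear operator, and it is
quaternion unitarily equivalent to the backward unilateral weighted shift whose weights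
are the moduli `(|w_n|)`. -/
theorem weightedShift_unitarilyEquiv_modulusShift (w : ℕ+ → ℍ[ℝ])
    (hw0 : ∀ n, w n ≠ 0) (hwb : ∃ C : ℝ, ∀ n, ‖w n‖ ≤ C) :
    ∃ T Tt : lp (fun _ : ℕ+ => ℍ[ℝ]) 2 →L[ℍ[ℝ]ᵐᵒᵖ] lp (fun _ : ℕ+ => ℍ[ℝ]) 2,
      (∀ (x : lp (fun _ : ℕ+ => ℍ[ℝ]) 2) (n : ℕ+), T x n = w n * x (n + 1)) ∧
      (∀ (x : lp (fun _ : ℕ+ => ℍ[ℝ]) 2) (n : ℕ+),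
        Tt x n = ((‖w n‖ : ℝ) : ℍ[ℝ]) * x (n + 1)) ∧
      ∃ X : lp (fun _ : ℕ+ => ℍ[ℝ]) 2 ≃ₗᵢ[ℍ[ℝ]ᵐᵒᵖ] lp (fun _ : ℕ+ => ℍ[ℝ]) 2,
        ∀ x, T (X x) = X (Tt x) := by
  classical
  obtain ⟨C₀, hC₀⟩ := hwb
  set C : ℝ := max C₀ 0 with hCdef
  have hC0 : 0 ≤ C := le_max_right _ _
  have hC : ∀ n, ‖w n‖ ≤ C := fun n => le_trans (hC₀ n) (le_max_left _ _)
  have hC' : ∀ n, ‖((‖w n‖ : ℝ) : ℍ[ℝ])‖ ≤ C := fun n => by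
    rw [Quaternion.norm_coe, Real.norm_of_nonneg (norm_nonneg _)]
    exact hC n
  have hshift : Function.Injective (fun n : ℕ+ => n + 1) := fun a b h => by
    simpa using add_left_injective 1 h
  set u : ℕ+ → ℍ[ℝ] := WSAux.useq w with hu
  have hu1 : ∀ n, ‖u n‖ = 1 := WSAux.norm_useq w hw0
  have hu1' : ∀ n, ‖u n‖ ≤ 1 := fun n => (hu1 n).le
  have huinv : ∀ n, ‖(u n)⁻¹‖ ≤ 1 := fun n => by
    rw [norm_inv, hu1 n]; norm_num
  have hune : ∀ n, u n ≠ 0 := fun n => by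
    intro h; have := hu1 n; rw [h] at this; simp at this
  refine ⟨WSAux.twistOp w C hC0 hC _ hshift,
    WSAux.twistOp (fun n => ((‖w n‖ : ℝ) : ℍ[ℝ])) C hC0 hC' _ hshift,
    fun x n => rfl, fun x n => rfl, ?_⟩
  set D : WSAux.H2 →L[ℍ[ℝ]ᵐᵒᵖ] WSAux.H2 :=
    WSAux.twistOp u 1 zero_le_one hu1' id Function.injective_id with hD
  set Dinv : WSAux.H2 →L[ℍ[ℝ]ᵐᵒᵖ] WSAux.H2 :=
    WSAux.twistOp (fun n => (u n)⁻¹) 1 zero_le_one huinv id Function.injective_id with hDinv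
  have hleft : ∀ x, Dinv (D x) = x := fun x => by
    refine lp.ext (funext fun n => ?_)
    show (u n)⁻¹ * (u n * x n) = x n
    rw [← mul_assoc, inv_mul_cancel₀ (hune n), one_mul]
  have hright : ∀ x, D (Dinv x) = x := fun x => by
    refine lp.ext (funext fun n => ?_)
    show u n * ((u n)⁻¹ * x n) = x n
    rw [← mul_assoc, mul_inv_cancel₀ (hune n), one_mul]
  have hDnorm : ∀ x, ‖D x‖ = ‖x‖ := fun x => by
    have h1 : ‖D x‖ ≤ 1 * ‖x‖ :=
      WSAux.norm_mul_le u 1 zero_le_one hu1' id Function.injective_id x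
    have h2 : ‖Dinv (D x)‖ ≤ 1 * ‖D x‖ :=
      WSAux.norm_mul_le (fun n => (u n)⁻¹) 1 zero_le_one huinv id Function.injective_id (D x)
    rw [hleft x, one_mul] at h2
    rw [one_mul] at h1
    exact le_antisymm h1 h2
  refine ⟨LinearIsometryEquiv.mk
    { toLinearMap := (D : WSAux.H2 →ₗ[ℍ[ℝ]ᵐᵒᵖ] WSAux.H2)
      invFun := Dinv
      left_inv := hleft
      right_inv := hright } hDnorm, fun x => ?_⟩
  refine lp.ext (funext fun n => ?_)
  show w n * (u (n + 1) * x (n + 1)) = u n * (((‖w n‖ : ℝ) : ℍ[ℝ]) * x (n + 1))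
  rw [← mul_assoc, ← mul_assoc, WSAux.key_identity w hw0 n]
end
end

section
/- Let (w_n)_{n≥1} be a bounded sequence of positive real numbers, let T be the backward unilateral weighted shift on ℓ²(ℕ⁺, ℍ) given by (Tx)_n = w_n·x_{n+1}, and set r = liminf_{n→∞} (w₁w₂⋯w_n)^{1/n}. If s ∈ ℍ ∖ ℝ satisfies |s| < r, then the solution set V_s = {x ∈ ℓ²(ℕ⁺, ℍ) : T(Tx) − (Tx)•(2Re(s)) + x•|s|² = 0} is a right ℍ-submodule of ℓ²(ℕ⁺, ℍ) whose dimension over ℍ (rank as ℍᵐᵒᵖ-module) equals 2. -/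
open Quaternion MulOpposite Filter

noncomputable def WSpi (w : ℕ+ → ℝ) (k : ℕ) : ℝ := ∏ i ∈ Finset.range k, w i.succPNat

noncomputable def WSc (w : ℕ+ → ℝ) (g : ℍ[ℝ]) (n : ℕ+) : ℍ[ℝ] :=
  (WSpi w n.natPred)⁻¹ • g ^ n.natPred

lemma WSpi_pos {w : ℕ+ → ℝ} (hw : ∀ n, 0 < w n) (k : ℕ) : 0 < WSpi w k :=
  Finset.prod_pos fun i _ => hw _

lemma WSpi_succ (w : ℕ+ → ℝ) (k : ℕ) : WSpi w (k+1) = WSpi w k * w k.succPNat :=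
  Finset.prod_range_succ _ _

lemma quat_char (q : ℍ[ℝ]) :
    q * q - q * ((2*q.re : ℝ) : ℍ[ℝ]) + ((‖q‖^2 : ℝ) : ℍ[ℝ]) = 0 := by
  have h1 : ((2*q.re : ℝ) : ℍ[ℝ]) = q + star q := (Quaternion.self_add_star' q).symm
  have h2 : ((‖q‖^2 : ℝ) : ℍ[ℝ]) = q * star q := by
    rw [sq, ← Quaternion.normSq_eq_norm_mul_self, Quaternion.self_mul_star]
  rw [h1, h2]; noncomm_ring

lemma quat_sq (g s : ℍ[ℝ]) (h1 : g.re = s.re) (h2 : ‖g‖ = ‖s‖) :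
    g * g = (2*s.re : ℝ) • g - (‖s‖^2 : ℝ) • (1 : ℍ[ℝ]) := by
  have := quat_char g
  rw [h1, h2] at this
  rw [eq_sub_iff_add_eq, ← sub_eq_zero]
  calc g * g + (‖s‖^2 : ℝ) • (1:ℍ[ℝ]) - (2*s.re : ℝ) • g
      = g * g - g * ((2*s.re : ℝ) : ℍ[ℝ]) + ((‖s‖^2 : ℝ) : ℍ[ℝ]) := by
        rw [Quaternion.mul_coe_eq_smul, ← Quaternion.coe_mul_eq_smul]; noncomm_ring
    _ = 0 := this

lemma quat_pow_rec (g s : ℍ[ℝ]) (hgg : g * g = (2*s.re : ℝ) • g - (‖s‖^2 : ℝ) • (1 : ℍ[ℝ]))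
    (k : ℕ) : g ^ (k+2) = (2*s.re : ℝ) • g ^ (k+1) - (‖s‖^2 : ℝ) • g ^ k := by
  have : g ^ (k+2) = g ^ k * (g * g) := by rw [pow_add, pow_two]
  rw [this, hgg, mul_sub, mul_smul_comm, mul_smul_comm, mul_one, ← pow_succ]

lemma WSnatPred_succ (n : ℕ+) : (n+1).natPred = n.natPred + 1 := by
  have h : 0 < (n : ℕ) := n.2
  simp only [PNat.natPred, PNat.add_coe, PNat.one_coe]
  omega

lemma WSrec {w : ℕ+ → ℝ} (hw : ∀ n, 0 < w n) (g s : ℍ[ℝ])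
    (hgg : g * g = (2*s.re : ℝ) • g - (‖s‖^2 : ℝ) • (1 : ℍ[ℝ])) (n : ℕ+) :
    ((w n : ℝ) : ℍ[ℝ]) * (((w (n+1) : ℝ) : ℍ[ℝ]) * WSc w g (n+1+1))
      - (((w n : ℝ) : ℍ[ℝ]) * WSc w g (n+1)) * ((2*s.re : ℝ) : ℍ[ℝ])
      + WSc w g n * ((‖s‖^2 : ℝ) : ℍ[ℝ]) = 0 := by
  set k := n.natPred with hk
  have hn : n = k.succPNat := (PNat.succPNat_natPred n).symm
  have h1 : (n+1).natPred = k + 1 := WSnatPred_succ n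
  have h2 : (n+1+1).natPred = k + 2 := by rw [WSnatPred_succ, h1]
  have hwn : w n = w k.succPNat := by rw [← hn]
  have hwn1 : w (n+1) = w (k+1).succPNat := by
    congr 1
    rw [hn]; rfl
  unfold WSc
  rw [h1, h2, ← hk]
  have hπ1 : WSpi w (k+1) = WSpi w k * w n := by rw [WSpi_succ, ← hwn]
  have hπ2 : WSpi w (k+2) = WSpi w k * w n * w (n+1) := by
    rw [WSpi_succ, hπ1, ← hwn1]
  have hp0 := WSpi_pos hw k
  have hwnp := hw n
  have hwn1p := hw (n+1)
  simp only [Quaternion.coe_mul_eq_smul, Quaternion.mul_coe_eq_smul, mul_smul_comm,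
    smul_mul_assoc, smul_smul]
  rw [quat_pow_rec g s hgg k, hπ2, hπ1]
  match_scalars <;> field_simp <;> ring

lemma WSmem {w : ℕ+ → ℝ} (hw : ∀ n, 0 < w n) {ρ : ℝ} (hρ0 : 0 < ρ) {s : ℍ[ℝ]}
    (hsρ : ‖s‖ < ρ) {N : ℕ} (hb : ∀ k, N ≤ k → ρ ^ k ≤ WSpi w k)
    (g : ℍ[ℝ]) (hg : ‖g‖ = ‖s‖) : Memℓp (WSc w g) 2 := by
  apply memℓp_gen
  have h2 : ((2:ENNReal)).toReal = ((2:ℕ):ℝ) := by norm_num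
  have hfun : (fun n : ℕ+ => ‖WSc w g n‖ ^ ((2:ENNReal).toReal))
      = fun n : ℕ+ => ((WSpi w n.natPred)⁻¹ * ‖s‖ ^ n.natPred) ^ (2:ℕ) := by
    funext n
    rw [h2, Real.rpow_natCast]
    congr 1
    unfold WSc
    rw [norm_smul, norm_pow, hg, Real.norm_eq_abs,
      abs_of_pos (inv_pos.2 (WSpi_pos hw _))]
  rw [hfun]
  apply (Equiv.pnatEquivNat.symm.summable_iff
    (f := fun n : ℕ+ => ((WSpi w n.natPred)⁻¹ * ‖s‖ ^ n.natPred) ^ (2:ℕ))).mp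
  have hcomp : ((fun n : ℕ+ => ((WSpi w n.natPred)⁻¹ * ‖s‖ ^ n.natPred) ^ (2:ℕ))
      ∘ Equiv.pnatEquivNat.symm)
      = fun k : ℕ => ((WSpi w k)⁻¹ * ‖s‖ ^ k) ^ (2:ℕ) := rfl
  rw [hcomp]
  have hq0 : (0:ℝ) ≤ (‖s‖/ρ)^2 := by positivity
  have hq1 : (‖s‖/ρ)^2 < 1 := by
    have : ‖s‖/ρ < 1 := (div_lt_one hρ0).2 hsρ
    nlinarith [norm_nonneg s, div_nonneg (norm_nonneg s) hρ0.le]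
  apply summable_of_isBigO_nat (summable_geometric_of_lt_one hq0 hq1)
  rw [Asymptotics.isBigO_iff]
  refine ⟨1, eventually_atTop.2 ⟨N, fun k hk => ?_⟩⟩
  have hπk := WSpi_pos hw k
  have hρk : (0:ℝ) < ρ ^ k := pow_pos hρ0 k
  have hle : (WSpi w k)⁻¹ * ‖s‖ ^ k ≤ ‖s‖ ^ k / ρ ^ k := by
    rw [div_eq_inv_mul]
    exact mul_le_mul_of_nonneg_right (inv_anti₀ hρk (hb k hk))
      (pow_nonneg (norm_nonneg s) k)
  have hnn : (0:ℝ) ≤ (WSpi w k)⁻¹ * ‖s‖ ^ k := by positivity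
  rw [Real.norm_eq_abs, Real.norm_eq_abs, abs_of_nonneg (by positivity),
    abs_of_nonneg (pow_nonneg hq0 k), one_mul]
  calc ((WSpi w k)⁻¹ * ‖s‖ ^ k) ^ (2:ℕ) ≤ (‖s‖ ^ k / ρ ^ k) ^ (2:ℕ) :=
        pow_le_pow_left₀ hnn hle 2
    _ = ((‖s‖/ρ)^2)^k := by
        rw [div_pow, ← pow_mul, ← pow_mul, div_pow, div_pow, ← pow_mul, ← pow_mul, mul_comm]

lemma WSprod (w : ℕ+ → ℝ) (n : ℕ+) :
    ∏ k ∈ Finset.Icc 1 n, w k = WSpi w (n : ℕ) := by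
  unfold WSpi
  refine Finset.prod_nbij' (fun k => k.natPred) (fun k => k.succPNat) ?_ ?_ ?_ ?_ ?_
  · intro a ha
    simp only [Finset.mem_Icc] at ha
    simp only [Finset.mem_range]
    have h1 : (1:ℕ) ≤ (a:ℕ) := a.2
    have h2 : (a:ℕ) ≤ (n:ℕ) := ha.2
    simp only [PNat.natPred]
    omega
  · intro a ha
    simp only [Finset.mem_range] at ha
    simp only [Finset.mem_Icc]
    constructor
    · exact PNat.one_le _
    · rw [← PNat.coe_le_coe]
      simpa [Nat.succPNat] using ha
  · intro a _; exact PNat.succPNat_natPred a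
  · intro a _; exact Nat.natPred_succPNat a
  · intro a _; rw [PNat.succPNat_natPred]

lemma quat_star_ne {s : ℍ[ℝ]} (hs : s ∉ Set.range ((↑) : ℝ → ℍ[ℝ])) : s - star s ≠ 0 := by
  intro h
  apply hs
  have hss : star s = s := by rw [sub_eq_zero] at h; exact h.symm
  refine ⟨s.re, ?_⟩
  have h1 := congrArg QuaternionAlgebra.imI hss
  have h2 := congrArg QuaternionAlgebra.imJ hss
  have h3 := congrArg QuaternionAlgebra.imK hss
  simp at h1 h2 h3
  ext <;> simp <;> linarith

set_option maxHeartbeats 2000000 in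
/-- For a backward unilateral weighted shift `T` on `ℓ²(ℕ⁺, ℍ)` with
bounded positive real weights, and `s ∈ ℍ ∖ ℝ` with `‖s‖ < liminf (w₁⋯w_n)^{1/n}`, the
solution set of `Q_s(T) x = 0` is a right `ℍ`-submodule of dimension `2` over `ℍ`. -/
theorem weightedShift_sEigenspace_rank_two (w : ℕ+ → ℝ) (hw : ∀ n, 0 < w n)
    (hwb : ∃ C : ℝ, ∀ n, w n ≤ C)
    (T : lp (fun _ : ℕ+ => ℍ[ℝ]) 2 →L[ℍ[ℝ]ᵐᵒᵖ] lp (fun _ : ℕ+ => ℍ[ℝ]) 2)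
    (hT : ∀ (x : lp (fun _ : ℕ+ => ℍ[ℝ]) 2) (n : ℕ+), T x n = ((w n : ℝ) : ℍ[ℝ]) * x (n + 1))
    (s : ℍ[ℝ]) (hs : s ∉ Set.range ((↑) : ℝ → ℍ[ℝ]))
    (hsr : ‖s‖ <
      liminf (fun n : ℕ+ => (∏ k ∈ Finset.Icc 1 n, w k) ^ (((n : ℕ) : ℝ)⁻¹)) atTop) :
    ∃ V : Submodule ℍ[ℝ]ᵐᵒᵖ (lp (fun _ : ℕ+ => ℍ[ℝ]) 2),
      (V : Set (lp (fun _ : ℕ+ => ℍ[ℝ]) 2)) =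
        {x | T (T x) - op ((2 * s.re : ℝ) : ℍ[ℝ]) • T x
              + op ((‖s‖ ^ 2 : ℝ) : ℍ[ℝ]) • x = 0} ∧
      Module.rank ℍ[ℝ]ᵐᵒᵖ V = 2 := by
  classical
  -- coordinates of the defining expression
  have coord : ∀ (x : lp (fun _ : ℕ+ => ℍ[ℝ]) 2) (n : ℕ+),
      (T (T x) - op ((2 * s.re : ℝ) : ℍ[ℝ]) • T x + op ((‖s‖ ^ 2 : ℝ) : ℍ[ℝ]) • x) n
      = ((w n : ℝ) : ℍ[ℝ]) * (((w (n+1) : ℝ) : ℍ[ℝ]) * x (n+1+1))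
          - (((w n : ℝ) : ℍ[ℝ]) * x (n+1)) * ((2*s.re : ℝ) : ℍ[ℝ])
          + x n * ((‖s‖^2 : ℝ) : ℍ[ℝ]) := by
    intro x n
    have h0 : (T (T x) - op ((2 * s.re : ℝ) : ℍ[ℝ]) • T x
        + op ((‖s‖ ^ 2 : ℝ) : ℍ[ℝ]) • x) n
        = T (T x) n - (T x n) * ((2*s.re : ℝ) : ℍ[ℝ]) + (x n) * ((‖s‖^2 : ℝ) : ℍ[ℝ]) := by
      rw [lp.coeFn_add, lp.coeFn_sub, lp.coeFn_smul, lp.coeFn_smul]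
      simp [op_smul_eq_mul]
    rw [h0, hT, hT, hT]
  -- zero iff coordinates zero
  have zero_iff : ∀ (z : lp (fun _ : ℕ+ => ℍ[ℝ]) 2), z = 0 ↔ ∀ n, z n = 0 := by
    intro z
    constructor
    · intro h n; rw [h]
      exact congrFun (lp.coeFn_zero (fun _ : ℕ+ => ℍ[ℝ]) 2) n
    · intro h; apply lp.ext; funext n; rw [h n]
      exact (congrFun (lp.coeFn_zero (fun _ : ℕ+ => ℍ[ℝ]) 2) n).symm
  -- membership characterization
  have key : ∀ (x : lp (fun _ : ℕ+ => ℍ[ℝ]) 2),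
      (T (T x) - op ((2 * s.re : ℝ) : ℍ[ℝ]) • T x + op ((‖s‖ ^ 2 : ℝ) : ℍ[ℝ]) • x = 0)
      ↔ ∀ n : ℕ+, ((w n : ℝ) : ℍ[ℝ]) * (((w (n+1) : ℝ) : ℍ[ℝ]) * x (n+1+1))
          - (((w n : ℝ) : ℍ[ℝ]) * x (n+1)) * ((2*s.re : ℝ) : ℍ[ℝ])
          + x n * ((‖s‖^2 : ℝ) : ℍ[ℝ]) = 0 := by
    intro x
    rw [zero_iff]
    constructor
    · intro h n; rw [← coord x n]; exact h n
    · intro h n; rw [coord x n]; exact h n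
  -- commutation of real (central) op-scalars with arbitrary op-scalars
  have hc : ∀ (r : ℝ) (c : ℍ[ℝ]ᵐᵒᵖ), op ((r : ℍ[ℝ])) * c = c * op ((r : ℍ[ℝ])) := by
    intro r c
    apply unop_injective
    simp [Quaternion.coe_commutes]
  -- the submodule
  set V : Submodule ℍ[ℝ]ᵐᵒᵖ (lp (fun _ : ℕ+ => ℍ[ℝ]) 2) := {
    carrier := {x | T (T x) - op ((2 * s.re : ℝ) : ℍ[ℝ]) • T x
              + op ((‖s‖ ^ 2 : ℝ) : ℍ[ℝ]) • x = 0}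
    add_mem' := by
      intro a b ha hb
      simp only [Set.mem_setOf_eq] at ha hb ⊢
      rw [map_add, map_add, smul_add, smul_add]
      rw [show ∀ A B C D E F : lp (fun _ : ℕ+ => ℍ[ℝ]) 2,
        A + B - (C + D) + (E + F) = (A - C + E) + (B - D + F) from fun _ _ _ _ _ _ => by abel]
      rw [ha, hb, add_zero]
    zero_mem' := by
      simp only [Set.mem_setOf_eq, map_zero, smul_zero, sub_zero, add_zero]
    smul_mem' := by
      intro c x hx
      simp only [Set.mem_setOf_eq] at hx ⊢
      have hswap : ∀ (r : ℝ) (y : lp (fun _ : ℕ+ => ℍ[ℝ]) 2),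
          op ((r : ℍ[ℝ])) • (c • y) = c • (op ((r : ℍ[ℝ])) • y) := by
        intro r y
        rw [← mul_smul, ← mul_smul, hc]
      rw [map_smul, map_smul, hswap, hswap, ← smul_sub, ← smul_add, hx, smul_zero]
  } with hVdef
  refine ⟨V, rfl, ?_⟩
  have hVmem : ∀ x : lp (fun _ : ℕ+ => ℍ[ℝ]) 2, x ∈ V ↔
      ∀ n : ℕ+, ((w n : ℝ) : ℍ[ℝ]) * (((w (n+1) : ℝ) : ℍ[ℝ]) * x (n+1+1))
          - (((w n : ℝ) : ℍ[ℝ]) * x (n+1)) * ((2*s.re : ℝ) : ℍ[ℝ])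
          + x n * ((‖s‖^2 : ℝ) : ℍ[ℝ]) = 0 := fun x => key x
  -- Part 2: rank computation
  -- pick ρ with ‖s‖ < ρ < liminf
  set L := liminf (fun n : ℕ+ => (∏ k ∈ Finset.Icc 1 n, w k) ^ (((n : ℕ) : ℝ)⁻¹)) atTop with hLdef
  have hnn : ∀ n : ℕ+, 0 ≤ (∏ k ∈ Finset.Icc 1 n, w k) ^ (((n:ℕ):ℝ)⁻¹) := fun n =>
    Real.rpow_nonneg (Finset.prod_nonneg fun i _ => (hw i).le) _
  set ρ := (‖s‖ + L)/2 with hρdef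
  have hρs : ‖s‖ < ρ := by rw [hρdef]; linarith
  have hρL : ρ < L := by rw [hρdef]; linarith
  have hρ0 : 0 < ρ := lt_of_le_of_lt (norm_nonneg s) hρs
  have hev : ∀ᶠ n : ℕ+ in atTop, ρ < (∏ k ∈ Finset.Icc 1 n, w k) ^ (((n:ℕ):ℝ)⁻¹) :=
    eventually_lt_of_lt_liminf hρL (isBoundedUnder_of ⟨0, fun n => hnn n⟩)
  obtain ⟨N0, hN0⟩ := eventually_atTop.mp hev
  have hb : ∀ k, (N0 : ℕ) ≤ k → ρ ^ k ≤ WSpi w k := by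
    intro k hk
    have hk1 : 0 < k := lt_of_lt_of_le N0.2 hk
    have hn : N0 ≤ (⟨k, hk1⟩ : ℕ+) := by exact (PNat.coe_le_coe _ _).mp hk
    have h := hN0 _ hn
    rw [WSprod w ⟨k, hk1⟩] at h
    have hπ := WSpi_pos hw k
    calc ρ ^ k ≤ ((WSpi w k) ^ ((k:ℝ)⁻¹)) ^ k :=
          pow_le_pow_left₀ hρ0.le h.le k
      _ = WSpi w k := Real.rpow_inv_natCast_pow hπ.le hk1.ne'
  -- the two basic solutions
  have hds : s * s = (2*s.re : ℝ) • s - (‖s‖^2 : ℝ) • (1 : ℍ[ℝ]) := quat_sq s s rfl rfl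
  have hdt : (star s) * (star s) = (2*s.re : ℝ) • (star s) - (‖s‖^2 : ℝ) • (1 : ℍ[ℝ]) :=
    quat_sq (star s) s (by simp) (Quaternion.norm_star s)
  have hmems : Memℓp (WSc w s) 2 := WSmem hw hρ0 hρs hb s rfl
  have hmemt : Memℓp (WSc w (star s)) 2 := WSmem hw hρ0 hρs hb (star s) (Quaternion.norm_star s)
  set Es : lp (fun _ : ℕ+ => ℍ[ℝ]) 2 := ⟨WSc w s, hmems⟩ with hEsdef
  set Et : lp (fun _ : ℕ+ => ℍ[ℝ]) 2 := ⟨WSc w (star s), hmemt⟩ with hEtdef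
  have hEs : Es ∈ V := (hVmem Es).mpr (fun n => WSrec hw s s hds n)
  have hEt : Et ∈ V := (hVmem Et).mpr (fun n => WSrec hw (star s) s hdt n)
  -- the evaluation map on the first two coordinates
  have coord_add : ∀ (x y : lp (fun _ : ℕ+ => ℍ[ℝ]) 2) (n : ℕ+), (x + y) n = x n + y n := by
    intro x y n; rw [lp.coeFn_add]; rfl
  have coord_smul : ∀ (c : ℍ[ℝ]ᵐᵒᵖ) (x : lp (fun _ : ℕ+ => ℍ[ℝ]) 2) (n : ℕ+),
      (c • x) n = x n * c.unop := by
    intro c x n; rw [lp.coeFn_smul]; rfl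
  set Φ : V →ₗ[ℍ[ℝ]ᵐᵒᵖ] ℍ[ℝ] × ℍ[ℝ] := {
    toFun := fun x => ((x : lp (fun _ : ℕ+ => ℍ[ℝ]) 2) 1, (x : lp (fun _ : ℕ+ => ℍ[ℝ]) 2) 2)
    map_add' := by
      intro x y
      have h1 := coord_add x.1 y.1 1
      have h2 := coord_add x.1 y.1 2
      exact Prod.ext h1 h2
    map_smul' := by
      intro c x
      have h1 := coord_smul c x.1 1
      have h2 := coord_smul c x.1 2
      refine Prod.ext ?_ ?_
      · rw [RingHom.id_apply]
        exact h1.trans (op_smul_eq_mul (a := c.unop) _).symm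
      · rw [RingHom.id_apply]
        exact h2.trans (op_smul_eq_mul (a := c.unop) _).symm
  } with hΦdef
  have hinj : Function.Injective Φ := by
    rw [← LinearMap.ker_eq_bot, LinearMap.ker_eq_bot']
    intro z hz
    have h1 : (z : lp (fun _ : ℕ+ => ℍ[ℝ]) 2) 1 = 0 := congrArg Prod.fst hz
    have h2 : (z : lp (fun _ : ℕ+ => ℍ[ℝ]) 2) 2 = 0 := congrArg Prod.snd hz
    have hr := (hVmem z.1).mp z.2
    have main : ∀ k : ℕ, (z : lp (fun _ : ℕ+ => ℍ[ℝ]) 2) k.succPNat = 0 ∧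
        (z : lp (fun _ : ℕ+ => ℍ[ℝ]) 2) (k+1).succPNat = 0 := by
      intro k
      induction k with
      | zero => exact ⟨h1, h2⟩
      | succ k ih =>
        refine ⟨ih.2, ?_⟩
        have h := hr k.succPNat
        have e1 : k.succPNat + 1 = (k+1).succPNat := rfl
        have e2 : (k+1).succPNat + 1 = (k+2).succPNat := rfl
        rw [e1, e2, ih.1, ih.2] at h
        simp only [mul_zero, zero_mul, sub_zero, add_zero] at h
        have hwk : ∀ m : ℕ+, ((w m : ℝ) : ℍ[ℝ]) ≠ 0 := by
          intro m hm
          exact (hw m).ne' (Quaternion.coe_injective (hm.trans Quaternion.coe_zero.symm))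
        rcases mul_eq_zero.mp h with h' | h'
        · exact absurd h' (hwk _)
        rcases mul_eq_zero.mp h' with h'' | h''
        · exact absurd h'' (hwk _)
        · exact h''
    apply Subtype.ext
    show (z : lp (fun _ : ℕ+ => ℍ[ℝ]) 2) = 0
    rw [zero_iff]
    intro n
    have := (main n.natPred).1
    rwa [PNat.succPNat_natPred] at this
  have hsurj : Function.Surjective Φ := by
    rintro ⟨u, v⟩
    set d := s - star s with hddef
    have hd : d ≠ 0 := quat_star_ne hs
    set a := d⁻¹ * (((w 1 : ℝ) : ℍ[ℝ]) * v - star s * u) with hadef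
    set b := u - a with hbdef
    refine ⟨op a • (⟨Es, hEs⟩ : V) + op b • (⟨Et, hEt⟩ : V), ?_⟩
    have hcoordn : ∀ n : ℕ+,
        ((op a • (⟨Es, hEs⟩ : V) + op b • (⟨Et, hEt⟩ : V) : V) : lp (fun _ : ℕ+ => ℍ[ℝ]) 2) n
        = WSc w s n * a + WSc w (star s) n * b := by
      intro n
      rw [Submodule.coe_add, Submodule.coe_smul, Submodule.coe_smul, coord_add,
        coord_smul, coord_smul]
      rfl
    have hc1s : WSc w s 1 = 1 := by
      show (WSpi w (PNat.natPred 1))⁻¹ • s ^ (PNat.natPred 1) = 1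
      norm_num [PNat.natPred, WSpi]
    have hc1t : WSc w (star s) 1 = 1 := by
      show (WSpi w (PNat.natPred 1))⁻¹ • (star s) ^ (PNat.natPred 1) = 1
      norm_num [PNat.natPred, WSpi]
    have hc2s : WSc w s 2 = (w 1)⁻¹ • s := by
      show (WSpi w (PNat.natPred 2))⁻¹ • s ^ (PNat.natPred 2) = (w 1)⁻¹ • s
      norm_num [PNat.natPred, WSpi]
      rfl
    have hc2t : WSc w (star s) 2 = (w 1)⁻¹ • (star s) := by
      show (WSpi w (PNat.natPred 2))⁻¹ • (star s) ^ (PNat.natPred 2) = (w 1)⁻¹ • (star s)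
      norm_num [PNat.natPred, WSpi]
      rfl
    have hval : s * a + star s * b = (w 1 : ℝ) • v := by
      have hda : s * a - star s * a = ((w 1 : ℝ) : ℍ[ℝ]) * v - star s * u := by
        rw [← sub_mul, ← hddef, hadef, ← mul_assoc, mul_inv_cancel₀ hd, one_mul]
      have h2 : s * a + star s * b = (s * a - star s * a) + star s * u := by
        rw [hbdef, mul_sub]; abel
      rw [h2, hda, sub_add_cancel, Quaternion.coe_mul_eq_smul]
    refine Prod.ext ?_ ?_
    · show ((op a • (⟨Es, hEs⟩ : V) + op b • (⟨Et, hEt⟩ : V) : V) :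
        lp (fun _ : ℕ+ => ℍ[ℝ]) 2) 1 = u
      rw [hcoordn 1, hc1s, hc1t, one_mul, one_mul, hbdef, add_sub_cancel]
    · show ((op a • (⟨Es, hEs⟩ : V) + op b • (⟨Et, hEt⟩ : V) : V) :
        lp (fun _ : ℕ+ => ℍ[ℝ]) 2) 2 = v
      rw [hcoordn 2, hc2s, hc2t, smul_mul_assoc, smul_mul_assoc, ← smul_add, hval,
        smul_smul, inv_mul_cancel₀ (hw 1).ne', one_smul]
  -- rank of V equals rank of ℍ × ℍ equals 2
  have e0 : ℍ[ℝ] ≃ₗ[ℍ[ℝ]ᵐᵒᵖ] ℍ[ℝ]ᵐᵒᵖ :=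
    { toFun := op, invFun := unop, map_add' := fun _ _ => rfl,
      map_smul' := fun _ _ => rfl, left_inv := fun _ => rfl, right_inv := fun _ => rfl }
  have eV := (LinearEquiv.ofBijective Φ ⟨hinj, hsurj⟩).trans (e0.prodCongr e0)
  rw [eV.rank_eq, rank_prod', Module.rank_self]
  exact one_add_one_eq_two
end

section
/- Let (w_n)_{n≥1} be a bounded sequence of positive real numbers, let T be the backward unilateral weighted shift on ℓ²(ℕ⁺, ℍ) given by (Tx)_n = w_n·x_{n+1}, and set r = liminf_{n→∞} (w₁w₂⋯w_n)^{1/n}. If s ∈ ℍ satisfies |s| > r, then the only x ∈ ℓ²(ℕ⁺, ℍ) with T(Tx) − (Tx)•(2Re(s)) + x•|s|² = 0 is x = 0; that is, s does not belong to the S-point spectrum of T. Consequently the S-point spectrum radius of T equals r. -/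
open Quaternion MulOpposite Filter

private lemma aux_two_step {P : ℕ → Prop} (h0 : P 0) (h1 : P 1)
    (ih : ∀ k, P k → P (k + 1) → P (k + 2)) : ∀ k, P k := by
  have H : ∀ k, P k ∧ P (k + 1) := by
    intro k
    induction k with
    | zero => exact ⟨h0, h1⟩
    | succ n ihn => exact ⟨ihn.2, ih n ihn.1 ihn.2⟩
  exact fun k => (H k).1

private lemma aux_prod (w : ℕ+ → ℝ) (n : ℕ+) :
    ∏ k ∈ Finset.Icc 1 n, w k = ∏ i ∈ Finset.range (n : ℕ), w i.succPNat := by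
  refine Finset.prod_nbij' (fun a => PNat.natPred a) (fun i => i.succPNat) ?_ ?_ ?_ ?_ ?_
  · intro a ha
    simp only [Finset.mem_Icc] at ha
    simp only [Finset.mem_range, PNat.natPred]
    have := (PNat.coe_le_coe a n).2 ha.2
    have := a.pos
    omega
  · intro i hi
    simp only [Finset.mem_range] at hi
    simp only [Finset.mem_Icc]
    refine ⟨PNat.one_le _, ?_⟩
    rw [← PNat.coe_le_coe, Nat.succPNat_coe]
    omega
  · intro a _; exact PNat.succPNat_natPred a
  · intro i _; exact Nat.natPred_succPNat i
  · intro a _; rw [PNat.succPNat_natPred]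

private lemma aux_natPred_succ (n : ℕ+) : (n + 1).natPred = n.natPred + 1 := by
  have := n.pos
  simp only [PNat.natPred, PNat.add_coe, PNat.one_coe]
  omega

private lemma aux_succPNat_add_one (k : ℕ) : k.succPNat + 1 = (k + 1).succPNat := rfl

private lemma aux_quad (q : ℍ[ℝ]) :
    q * q = (2 * q.re) • q - (‖q‖ ^ 2 : ℝ) • (1 : ℍ[ℝ]) := by
  have h1 : star q = ((2 * q.re : ℝ) : ℍ[ℝ]) - q := by
    rw [← Quaternion.self_add_star']; abel
  have h2 : q * star q = ((‖q‖ ^ 2 : ℝ) : ℍ[ℝ]) := by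
    rw [Quaternion.self_mul_star]
    exact congrArg _ (by rw [Quaternion.normSq_eq_norm_mul_self]; ring)
  have h4 : q * ((2 * q.re : ℝ) : ℍ[ℝ]) - q * q = ((‖q‖ ^ 2 : ℝ) : ℍ[ℝ]) := by
    rw [← mul_sub, ← h1]; exact h2
  have h5 : q * q = q * ((2 * q.re : ℝ) : ℍ[ℝ]) - ((‖q‖ ^ 2 : ℝ) : ℍ[ℝ]) := by
    rw [← h4]; abel
  rw [h5, Quaternion.mul_coe_eq_smul]
  congr 1
  rw [← Quaternion.algebraMap_def, Algebra.algebraMap_eq_smul_one]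

set_option maxHeartbeats 1600000 in
/-- For a backward unilateral weighted shift `T` on `ℓ²(ℕ⁺, ℍ)` with
bounded positive real weights and `r = liminf (w₁⋯w_n)^{1/n}`: every `s ∈ ℍ` with
`‖s‖ > r` is not in the S-point spectrum (only `x = 0` solves `Q_s(T)x = 0`), and the
S-point spectrum radius of `T` equals `r`. -/
theorem weightedShift_sPointSpectrumRadius (w : ℕ+ → ℝ) (hw : ∀ n, 0 < w n)
    (hwb : ∃ C : ℝ, ∀ n, w n ≤ C)
    (T : lp (fun _ : ℕ+ => ℍ[ℝ]) 2 →L[ℍ[ℝ]ᵐᵒᵖ] lp (fun _ : ℕ+ => ℍ[ℝ]) 2)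
    (hT : ∀ (x : lp (fun _ : ℕ+ => ℍ[ℝ]) 2) (n : ℕ+), T x n = ((w n : ℝ) : ℍ[ℝ]) * x (n + 1)) :
    (∀ s : ℍ[ℝ],
      liminf (fun n : ℕ+ => (∏ k ∈ Finset.Icc 1 n, w k) ^ (((n : ℕ) : ℝ)⁻¹)) atTop < ‖s‖ →
      ∀ x : lp (fun _ : ℕ+ => ℍ[ℝ]) 2,
        T (T x) - op ((2 * s.re : ℝ) : ℍ[ℝ]) • T x + op ((‖s‖ ^ 2 : ℝ) : ℍ[ℝ]) • x = 0 →
        x = 0) ∧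
    sSup {c : ℝ | ∃ s : ℍ[ℝ], c = ‖s‖ ∧
        ∃ v : lp (fun _ : ℕ+ => ℍ[ℝ]) 2, v ≠ 0 ∧
          T (T v) - op ((2 * s.re : ℝ) : ℍ[ℝ]) • T v + op ((‖s‖ ^ 2 : ℝ) : ℍ[ℝ]) • v = 0} =
      liminf (fun n : ℕ+ => (∏ k ∈ Finset.Icc 1 n, w k) ^ (((n : ℕ) : ℝ)⁻¹)) atTop := by
  obtain ⟨C, hC⟩ := hwb
  set C' : ℝ := max C 1 with hC'def
  have hC'1 : (1 : ℝ) ≤ C' := le_max_right _ _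
  have hC'w : ∀ n, w n ≤ C' := fun n => le_trans (hC n) (le_max_left _ _)
  set B : ℕ → ℝ := fun k => ∏ i ∈ Finset.range k, w i.succPNat with hBdef
  have hBpos : ∀ k, 0 < B k := fun k => Finset.prod_pos fun i _ => hw _
  have hBsucc : ∀ k, B (k + 1) = B k * w k.succPNat :=
    fun k => Finset.prod_range_succ _ k
  have hBn : ∀ n : ℕ+, ∏ k ∈ Finset.Icc 1 n, w k = B (n : ℕ) := fun n => aux_prod w n
  set g : ℕ+ → ℝ := fun n => (∏ k ∈ Finset.Icc 1 n, w k) ^ (((n : ℕ) : ℝ)⁻¹) with hgdef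
  set r : ℝ := liminf g atTop with hrdef
  have hgnn : ∀ n, 0 ≤ g n := by
    intro n
    exact Real.rpow_nonneg (le_of_lt (by rw [hBn]; exact hBpos _)) _
  have hgub : ∀ n, g n ≤ C' := by
    intro n
    have hn0 : (n : ℕ) ≠ 0 := n.pos.ne'
    have hle : (∏ k ∈ Finset.Icc 1 n, w k) ≤ C' ^ (n : ℕ) := by
      rw [hBn]
      calc B (n : ℕ) ≤ ∏ _i ∈ Finset.range (n : ℕ), C' :=
            Finset.prod_le_prod (fun i _ => (hw _).le) (fun i _ => hC'w _)
        _ = C' ^ (n : ℕ) := by rw [Finset.prod_const, Finset.card_range]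
    calc g n ≤ (C' ^ (n : ℕ)) ^ (((n : ℕ) : ℝ)⁻¹) :=
          Real.rpow_le_rpow (le_of_lt (by rw [hBn]; exact hBpos _)) hle (by positivity)
      _ = C' := Real.pow_rpow_inv_natCast (by linarith) hn0
  have hcob : IsCoboundedUnder (· ≥ ·) atTop g :=
    isCoboundedUnder_ge_of_le atTop hgub
  have hrnn : (0 : ℝ) ≤ r := le_liminf_of_le hcob (Eventually.of_forall hgnn)
  -- from `g n < ρ`, conclude `B n < ρ ^ n`
  have hglt : ∀ (ρ : ℝ) (n : ℕ+), 0 ≤ ρ → g n < ρ → B (n : ℕ) < ρ ^ (n : ℕ) := by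
    intro ρ n hρ hlt
    have hn0 : (n : ℕ) ≠ 0 := n.pos.ne'
    have h0 : 0 ≤ g n := hgnn n
    have := pow_lt_pow_left₀ hlt h0 hn0
    rwa [hgdef, Real.rpow_inv_natCast_pow (by rw [hBn]; exact (hBpos _).le) hn0, hBn] at this
  have hggt : ∀ (ρ : ℝ) (n : ℕ+), 0 ≤ ρ → ρ < g n → ρ ^ (n : ℕ) < B (n : ℕ) := by
    intro ρ n hρ hlt
    have hn0 : (n : ℕ) ≠ 0 := n.pos.ne'
    have := pow_lt_pow_left₀ hlt hρ hn0
    rwa [hgdef, Real.rpow_inv_natCast_pow (by rw [hBn]; exact (hBpos _).le) hn0, hBn] at this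
  have part1 : ∀ s : ℍ[ℝ], r < ‖s‖ →
      ∀ x : lp (fun _ : ℕ+ => ℍ[ℝ]) 2,
        T (T x) - op ((2 * s.re : ℝ) : ℍ[ℝ]) • T x + op ((‖s‖ ^ 2 : ℝ) : ℍ[ℝ]) • x = 0 →
        x = 0 := by
    intro s hs x heq
    by_contra hx
    have hm : 0 < ‖s‖ := lt_of_le_of_lt hrnn hs
    -- coordinatewise equation
    have hco : ∀ n : ℕ+,
        w n • (w (n + 1) • x (n + 1 + 1)) - (2 * s.re) • (w n • x (n + 1))
          + (‖s‖ ^ 2 : ℝ) • x n = 0 := by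
      intro n
      have h1 := congrArg (fun f : lp (fun _ : ℕ+ => ℍ[ℝ]) 2 => f n) heq
      simp only [lp.coeFn_sub, lp.coeFn_add, lp.coeFn_smul, lp.coeFn_zero, Pi.sub_apply,
        Pi.add_apply, Pi.smul_apply, Pi.zero_apply] at h1
      rw [hT (T x) n, hT x (n + 1), hT x n] at h1
      simpa only [op_smul_eq_mul, Quaternion.mul_coe_eq_smul, Quaternion.coe_mul_eq_smul]
        using h1
    set Y : ℕ → ℍ[ℝ] := fun k => B k • x k.succPNat with hYdef
    have hYrec : ∀ k, Y (k + 2)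
        = (2 * s.re) • Y (k + 1) - (‖s‖ ^ 2 : ℝ) • Y k := by
      intro k
      have e := hco k.succPNat
      rw [aux_succPNat_add_one, aux_succPNat_add_one] at e
      have e2 : Y (k + 2) - ((2 * s.re) • Y (k + 1) - (‖s‖ ^ 2 : ℝ) • Y k)
          = B k • (w k.succPNat • (w (k + 1).succPNat • x (k + 2).succPNat)
            - (2 * s.re) • (w k.succPNat • x (k + 1).succPNat)
            + (‖s‖ ^ 2 : ℝ) • x k.succPNat) := by
        simp only [hYdef, hBsucc]
        module
      rw [e, smul_zero, sub_eq_zero] at e2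
      exact e2
    have hYx : ∀ n : ℕ+, x n = (B n.natPred)⁻¹ • Y n.natPred := by
      intro n
      rw [hYdef]
      simp only [PNat.succPNat_natPred]
      rw [smul_smul, inv_mul_cancel₀ (hBpos _).ne', one_smul]
    have hYne : ∃ k, Y k ≠ 0 := by
      have hxn : ∃ n, x n ≠ 0 := by
        by_contra h
        push_neg at h
        exact hx (lp.ext (funext fun n => by rw [h n]; rfl))
      obtain ⟨n, hn⟩ := hxn
      refine ⟨n.natPred, fun h => hn ?_⟩
      rw [hYx n, h, smul_zero]
    have hYnorm : ∀ k, ‖Y k‖ ≤ B k * ‖x‖ := by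
      intro k
      rw [hYdef]
      simp only [norm_smul, Real.norm_eq_abs, abs_of_pos (hBpos k)]
      exact mul_le_mul_of_nonneg_left
        (lp.norm_apply_le_norm (by norm_num) x k.succPNat) (hBpos k).le
    -- key lower bound
    have hkey : ∃ c : ℝ, 0 < c ∧ ∃ N₀ : ℕ, ∀ k, N₀ ≤ k →
        c * ‖s‖ ^ k ≤ ‖Y k‖ + ‖Y (k + 1)‖ := by
      by_cases hss : star s = s
      · -- real case
        have hsreal : s = ((s.re : ℝ) : ℍ[ℝ]) := Quaternion.star_eq_self.mp hss
        have hmabs : ‖s‖ = |s.re| := by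
          conv_lhs => rw [hsreal]
          rw [Quaternion.norm_coe, Real.norm_eq_abs]
        have hα : s.re ≠ 0 := by
          intro h
          rw [hmabs, h, abs_zero] at hm
          exact lt_irrefl _ hm
        have hm2 : ‖s‖ ^ 2 = s.re ^ 2 := by rw [hmabs, sq_abs]
        set a : ℍ[ℝ] := Y 0 with hadef
        set b : ℍ[ℝ] := (s.re)⁻¹ • Y 1 - Y 0 with hbdef
        have hY : ∀ k, Y k = (s.re ^ k) • (a + (k : ℝ) • b) := by
          refine aux_two_step ?_ ?_ ?_
          · simp [hadef]
          · simp only [pow_one, Nat.cast_one, one_smul, hbdef, hadef]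
            match_scalars <;> field_simp <;> ring
          · intro k ih1 ih2
            have hYrec' : Y (k + 2) = (2 * s.re) • Y (k + 1) - (s.re ^ 2) • Y k := by
              rw [hYrec k, hm2]
            rw [hYrec', ih1, ih2]
            match_scalars <;> push_cast <;> ring
        have hnY : ∀ k, ‖Y k‖ = ‖s‖ ^ k * ‖a + (k : ℝ) • b‖ := by
          intro k
          rw [hY k, norm_smul, Real.norm_eq_abs, abs_pow, ← hmabs]
        have hab : a ≠ 0 ∨ b ≠ 0 := by
          by_contra h
          push_neg at h
          obtain ⟨k, hk⟩ := hYne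
          exact hk (by rw [hY k, h.1, h.2, smul_zero, add_zero, smul_zero])
        by_cases hb : b = 0
        · have ha : a ≠ 0 := by
            rcases hab with h | h
            · exact h
            · exact absurd hb h
          refine ⟨‖a‖, norm_pos_iff.mpr ha, 0, fun k _ => ?_⟩
          have hYk : ‖Y k‖ = ‖s‖ ^ k * ‖a‖ := by rw [hnY k, hb, smul_zero, add_zero]
          have h2 : (0:ℝ) ≤ ‖Y (k+1)‖ := norm_nonneg _
          calc ‖a‖ * ‖s‖ ^ k = ‖s‖ ^ k * ‖a‖ := mul_comm _ _
            _ = ‖Y k‖ := hYk.symm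
            _ ≤ ‖Y k‖ + ‖Y (k + 1)‖ := by linarith
        · set N₀ : ℕ := ⌈(‖a‖ + 1) / ‖b‖⌉₊ with hN₀def
          refine ⟨1, one_pos, N₀, fun k hk => ?_⟩
          have hbpos : (0:ℝ) < ‖b‖ := norm_pos_iff.mpr hb
          have hk' : (‖a‖ + 1) / ‖b‖ ≤ (k : ℝ) := by
            exact_mod_cast Nat.ceil_le.mp hk
          have hkb : ‖a‖ + 1 ≤ (k : ℝ) * ‖b‖ := by
            rw [div_le_iff₀ hbpos] at hk'
            linarith
          have h1 : (k : ℝ) * ‖b‖ = ‖(k : ℝ) • b‖ := by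
            rw [norm_smul, Real.norm_eq_abs, abs_of_nonneg (Nat.cast_nonneg k)]
          have h2 : ‖(k : ℝ) • b‖ ≤ ‖a + (k : ℝ) • b‖ + ‖a‖ := by
            calc ‖(k:ℝ) • b‖ = ‖(a + (k:ℝ) • b) - a‖ := by rw [add_sub_cancel_left]
              _ ≤ ‖a + (k:ℝ) • b‖ + ‖a‖ := norm_sub_le _ _
          have h3 : 1 ≤ ‖a + (k : ℝ) • b‖ := by rw [← h1] at h2; linarith
          have h4 : ‖s‖ ^ k ≤ ‖Y k‖ := by
            rw [hnY k]
            exact le_mul_of_one_le_right (pow_nonneg hm.le k) h3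
          have h5 : (0:ℝ) ≤ ‖Y (k+1)‖ := norm_nonneg _
          linarith
      · -- non-real case
        set t : ℍ[ℝ] := star s with htdef
        set δ : ℍ[ℝ] := s - t with hδdef
        have hδ : δ ≠ 0 := by
          rw [hδdef, htdef, sub_ne_zero]
          exact fun h => hss h.symm
        set a : ℍ[ℝ] := δ⁻¹ * (Y 1 - t * Y 0) with hadef
        set b : ℍ[ℝ] := Y 0 - a with hbdef
        have hδa : δ * a = Y 1 - t * Y 0 := by
          rw [hadef, ← mul_assoc, mul_inv_cancel₀ hδ, one_mul]
        have hqs : s * s = (2 * s.re) • s - (‖s‖ ^ 2 : ℝ) • (1 : ℍ[ℝ]) := aux_quad s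
        have hqt : t * t = (2 * s.re) • t - (‖s‖ ^ 2 : ℝ) • (1 : ℍ[ℝ]) := by
          have h := aux_quad (star s)
          rw [Quaternion.re_star, Quaternion.norm_star] at h
          exact h
        have hY : ∀ k, Y k = s ^ k * a + t ^ k * b := by
          refine aux_two_step ?_ ?_ ?_
          · simp only [pow_zero, one_mul, hbdef]
            abel
          · simp only [pow_one, hbdef]
            have : s * a + t * (Y 0 - a) = (s - t) * a + t * Y 0 := by noncomm_ring
            rw [this, ← hδdef, hδa]
            abel
          · intro k ih1 ih2
            rw [hYrec k, ih1, ih2]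
            have p1 : s ^ (k + 2) = (s * s) * s ^ k := by
              rw [pow_succ', pow_succ', mul_assoc]
            have p2 : t ^ (k + 2) = (t * t) * t ^ k := by
              rw [pow_succ', pow_succ', mul_assoc]
            rw [p1, p2, hqs, hqt, pow_succ', pow_succ']
            simp only [sub_mul, smul_mul_assoc, one_mul, mul_assoc, smul_add, smul_sub]
            abel
        have hGa : ∀ k, Y (k + 1) - t * Y k = δ * (s ^ k * a) := by
          intro k
          rw [hY (k + 1), hY k, hδdef]
          simp only [pow_succ', sub_mul, mul_add, mul_assoc]
          abel
        have hGb : ∀ k, Y (k + 1) - s * Y k = -(δ * (t ^ k * b)) := by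
          intro k
          rw [hY (k + 1), hY k, hδdef]
          simp only [pow_succ', sub_mul, mul_add, mul_assoc]
          abel
        have hnt : ‖t‖ = ‖s‖ := Quaternion.norm_star s
        have hab : a ≠ 0 ∨ b ≠ 0 := by
          by_contra h
          push_neg at h
          obtain ⟨k, hk⟩ := hYne
          exact hk (by rw [hY k, h.1, h.2, mul_zero, mul_zero, add_zero])
        rcases hab with ha | hb
        · refine ⟨‖δ‖ * ‖a‖ / (1 + ‖s‖),
            div_pos (mul_pos (norm_pos_iff.mpr hδ) (norm_pos_iff.mpr ha)) (by linarith),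
            0, fun k _ => ?_⟩
          have h1 : ‖δ * (s ^ k * a)‖ = ‖δ‖ * (‖s‖ ^ k * ‖a‖) := by
            rw [norm_mul, norm_mul, norm_pow]
          have h2 : ‖Y (k + 1) - t * Y k‖ ≤ ‖Y (k + 1)‖ + ‖s‖ * ‖Y k‖ := by
            calc ‖Y (k + 1) - t * Y k‖ ≤ ‖Y (k + 1)‖ + ‖t * Y k‖ := norm_sub_le _ _
              _ = ‖Y (k + 1)‖ + ‖s‖ * ‖Y k‖ := by rw [norm_mul, hnt]
          have h3 : ‖δ‖ * (‖s‖ ^ k * ‖a‖) ≤ ‖Y (k + 1)‖ + ‖s‖ * ‖Y k‖ := by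
            rw [← h1, ← hGa k]; exact h2
          rw [div_mul_eq_mul_div, div_le_iff₀ (by positivity)]
          have hY1 : (0:ℝ) ≤ ‖Y (k+1)‖ := norm_nonneg _
          have hY0 : (0:ℝ) ≤ ‖Y k‖ := norm_nonneg _
          calc ‖δ‖ * ‖a‖ * ‖s‖ ^ k = ‖δ‖ * (‖s‖ ^ k * ‖a‖) := by ring
            _ ≤ ‖Y (k + 1)‖ + ‖s‖ * ‖Y k‖ := h3
            _ ≤ (‖Y k‖ + ‖Y (k + 1)‖) * (1 + ‖s‖) := by
                nlinarith [mul_nonneg hm.le hY0, mul_nonneg hm.le hY1]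
        · refine ⟨‖δ‖ * ‖b‖ / (1 + ‖s‖),
            div_pos (mul_pos (norm_pos_iff.mpr hδ) (norm_pos_iff.mpr hb)) (by linarith),
            0, fun k _ => ?_⟩
          have h1 : ‖δ * (t ^ k * b)‖ = ‖δ‖ * (‖s‖ ^ k * ‖b‖) := by
            rw [norm_mul, norm_mul, norm_pow, hnt]
          have h2 : ‖Y (k + 1) - s * Y k‖ ≤ ‖Y (k + 1)‖ + ‖s‖ * ‖Y k‖ := by
            calc ‖Y (k + 1) - s * Y k‖ ≤ ‖Y (k + 1)‖ + ‖s * Y k‖ := norm_sub_le _ _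
              _ = ‖Y (k + 1)‖ + ‖s‖ * ‖Y k‖ := by rw [norm_mul]
          have h3 : ‖δ‖ * (‖s‖ ^ k * ‖b‖) ≤ ‖Y (k + 1)‖ + ‖s‖ * ‖Y k‖ := by
            rw [← h1, ← norm_neg, ← hGb k]; exact h2
          rw [div_mul_eq_mul_div, div_le_iff₀ (by positivity)]
          have hY1 : (0:ℝ) ≤ ‖Y (k+1)‖ := norm_nonneg _
          have hY0 : (0:ℝ) ≤ ‖Y k‖ := norm_nonneg _
          calc ‖δ‖ * ‖b‖ * ‖s‖ ^ k = ‖δ‖ * (‖s‖ ^ k * ‖b‖) := by ring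
            _ ≤ ‖Y (k + 1)‖ + ‖s‖ * ‖Y k‖ := h3
            _ ≤ (‖Y k‖ + ‖Y (k + 1)‖) * (1 + ‖s‖) := by
                nlinarith [mul_nonneg hm.le hY0, mul_nonneg hm.le hY1]
    -- final contradiction via liminf
    obtain ⟨c, hc, N₀, hbound⟩ := hkey
    set ρ : ℝ := (r + ‖s‖) / 2 with hρdef
    have hρ1 : r < ρ := by rw [hρdef]; linarith
    have hρ2 : ρ < ‖s‖ := by rw [hρdef]; linarith
    have hρ0 : 0 < ρ := by rw [hρdef]; linarith
    have hfreq : ∃ᶠ n : ℕ+ in atTop, g n < ρ := frequently_lt_of_liminf_lt hcob hρ1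
    have hone : 1 < ‖s‖ / ρ := (one_lt_div hρ0).mpr hρ2
    set A : ℝ := 2 * C' * ‖x‖ / c with hAdef
    obtain ⟨K, hK⟩ : ∃ K : ℕ, ∀ k, K ≤ k → A < (‖s‖ / ρ) ^ k := by
      have := tendsto_pow_atTop_atTop_of_one_lt hone
      obtain ⟨K, hK⟩ := (this.eventually (eventually_gt_atTop A)).exists_forall_of_atTop
      exact ⟨K, fun k hk => hK k hk⟩
    obtain ⟨n, hn1, hn2⟩ := (frequently_atTop.mp hfreq) (max N₀ K + 1).succPNat
    set k : ℕ := (n : ℕ) with hkdef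
    have hkN : N₀ ≤ k ∧ K ≤ k := by
      have := (PNat.coe_le_coe _ _).2 hn1
      rw [Nat.succPNat_coe] at this
      constructor <;> omega
    have hBlt : B k < ρ ^ k := hglt ρ n hρ0.le hn2
    have hchain : c * ‖s‖ ^ k ≤ 2 * C' * ‖x‖ * ρ ^ k := by
      have h1 : c * ‖s‖ ^ k ≤ ‖Y k‖ + ‖Y (k + 1)‖ := hbound k hkN.1
      have h2 : ‖Y k‖ ≤ B k * ‖x‖ := hYnorm k
      have h3 : ‖Y (k + 1)‖ ≤ B (k + 1) * ‖x‖ := hYnorm (k + 1)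
      have h4 : B (k + 1) = B k * w k.succPNat := hBsucc k
      have h5 : w k.succPNat ≤ C' := hC'w _
      have h6 : 0 < B k := hBpos k
      have hx0 : (0:ℝ) ≤ ‖x‖ := norm_nonneg _
      have h3' : ‖Y (k + 1)‖ ≤ B k * C' * ‖x‖ := by
        rw [h4] at h3
        exact h3.trans
          (mul_le_mul_of_nonneg_right (mul_le_mul_of_nonneg_left h5 h6.le) hx0)
      calc c * ‖s‖ ^ k ≤ ‖Y k‖ + ‖Y (k + 1)‖ := h1
        _ ≤ B k * ‖x‖ + B k * C' * ‖x‖ := add_le_add h2 h3'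
        _ = B k * (‖x‖ * (1 + C')) := by ring
        _ ≤ ρ ^ k * (‖x‖ * (1 + C')) :=
            mul_le_mul_of_nonneg_right hBlt.le (mul_nonneg hx0 (by linarith))
        _ ≤ ρ ^ k * (‖x‖ * (2 * C')) :=
            mul_le_mul_of_nonneg_left
              (mul_le_mul_of_nonneg_left (by linarith) hx0) (pow_nonneg hρ0.le k)
        _ = 2 * C' * ‖x‖ * ρ ^ k := by ring
    have hgt : A < (‖s‖ / ρ) ^ k := hK k hkN.2
    rw [div_pow, lt_div_iff₀ (by positivity)] at hgt
    rw [hAdef, div_mul_eq_mul_div, div_lt_iff₀ hc] at hgt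
    have := mul_comm (‖s‖ ^ k) c
    linarith
  refine ⟨part1, ?_⟩
  have hmem : ∀ t : ℝ, 0 ≤ t → (t < r ∨ t = 0) →
      ∃ s : ℍ[ℝ], t = ‖s‖ ∧
        ∃ v : lp (fun _ : ℕ+ => ℍ[ℝ]) 2, v ≠ 0 ∧
          T (T v) - op ((2 * s.re : ℝ) : ℍ[ℝ]) • T v + op ((‖s‖ ^ 2 : ℝ) : ℍ[ℝ]) • v = 0 := by
    intro t ht htr
    set f : ∀ _ : ℕ+, ℍ[ℝ] := fun n => ((t ^ n.natPred / B n.natPred : ℝ) : ℍ[ℝ]) with hfdef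
    have hsum : Summable fun i : ℕ => (t ^ i / B i) ^ 2 := by
      rcases htr with htr | htr
      · set ρ : ℝ := (t + r) / 2 with hρdef
        have hρ1 : t < ρ := by rw [hρdef]; linarith
        have hρ2 : ρ < r := by rw [hρdef]; linarith
        have hρ0 : 0 < ρ := by rw [hρdef]; linarith
        have hbd : IsBoundedUnder (· ≥ ·) atTop g :=
          isBoundedUnder_of ⟨0, fun n => hgnn n⟩
        have hev : ∀ᶠ n : ℕ+ in atTop, ρ < g n := eventually_lt_of_lt_liminf hρ2 hbd
        obtain ⟨N, hN⟩ := eventually_atTop.mp hev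
        set q : ℝ := (t / ρ) ^ 2 with hqdef
        have hq0 : 0 ≤ q := sq_nonneg _
        have hq1 : q < 1 := by
          rw [hqdef]
          exact pow_lt_one₀ (div_nonneg ht hρ0.le) ((div_lt_one hρ0).mpr hρ1) two_ne_zero
        rw [← summable_nat_add_iff (N : ℕ)]
        refine Summable.of_nonneg_of_le (fun i => sq_nonneg _) (fun i => ?_)
          (summable_geometric_of_lt_one hq0 hq1)
        set j : ℕ := i + (N : ℕ) with hjdef
        have hjpos : 0 < j := by
          have := N.pos; omega
        set n' : ℕ+ := ⟨j, hjpos⟩ with hn'def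
        have hn'N : N ≤ n' := by
          rw [← PNat.coe_le_coe]
          simp only [hn'def, PNat.mk_coe]
          omega
        have hBj : ρ ^ j < B j := hggt ρ n' hρ0.le (hN n' hn'N)
        have step1 : t ^ j / B j ≤ (t / ρ) ^ j := by
          rw [div_pow]
          apply div_le_div_of_nonneg_left (pow_nonneg ht _) (pow_pos hρ0 _) hBj.le
        have step2 : (t ^ j / B j) ^ 2 ≤ ((t / ρ) ^ j) ^ 2 :=
          pow_le_pow_left₀ (div_nonneg (pow_nonneg ht _) (hBpos _).le) step1 2
        calc (t ^ j / B j) ^ 2 ≤ ((t / ρ) ^ j) ^ 2 := step2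
          _ = q ^ j := by rw [hqdef, pow_right_comm]
          _ ≤ q ^ i := pow_le_pow_of_le_one hq0 hq1.le (by omega)
      · subst htr
        apply summable_of_ne_finset_zero (s := ({0} : Finset ℕ))
        intro i hi
        simp only [Finset.mem_singleton] at hi
        rw [zero_pow hi, zero_div]
        norm_num
    have hmemf : Memℓp f 2 := by
      apply memℓp_gen
      have key : (fun i : ℕ+ => ‖f i‖ ^ (2 : ENNReal).toReal)
          = fun i : ℕ+ => (t ^ i.natPred / B i.natPred) ^ 2 := by
        funext i
        rw [show ((2 : ENNReal)).toReal = ((2 : ℕ) : ℝ) by simp, Real.rpow_natCast, hfdef]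
        rw [Quaternion.norm_coe, Real.norm_eq_abs, sq_abs]
      rw [key, ← Equiv.pnatEquivNat.symm.summable_iff]
      have : ((fun i : ℕ+ => (t ^ i.natPred / B i.natPred) ^ 2) ∘ Equiv.pnatEquivNat.symm)
          = fun i : ℕ => (t ^ i / B i) ^ 2 := by
        funext i
        simp [Function.comp, Nat.natPred_succPNat]
      rw [this]
      exact hsum
    set v : lp (fun _ : ℕ+ => ℍ[ℝ]) 2 := ⟨f, hmemf⟩ with hvdef
    have hv1 : v 1 = ((1 : ℝ) : ℍ[ℝ]) := by
      show f 1 = _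
      rw [hfdef]
      norm_num [PNat.natPred]
    refine ⟨((t : ℝ) : ℍ[ℝ]), ?_, v, ?_, ?_⟩
    · rw [Quaternion.norm_coe, Real.norm_eq_abs, abs_of_nonneg ht]
    · intro h
      have : v 1 = 0 := by rw [h]; rfl
      rw [hv1] at this
      rw [Quaternion.coe_one] at this
      exact one_ne_zero this
    · have hre : ((t : ℝ) : ℍ[ℝ]).re = t := rfl
      have hnrm : ‖((t : ℝ) : ℍ[ℝ])‖ ^ 2 = t ^ 2 := by
        rw [Quaternion.norm_coe, Real.norm_eq_abs, sq_abs]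
      apply lp.ext
      funext n
      have hco2 : (T (T v) - op ((2 * ((t : ℝ) : ℍ[ℝ]).re : ℝ) : ℍ[ℝ]) • T v
          + op ((‖((t : ℝ) : ℍ[ℝ])‖ ^ 2 : ℝ) : ℍ[ℝ]) • v) n
          = w n • (w (n + 1) • v (n + 1 + 1)) - (2 * t) • (w n • v (n + 1))
            + (t ^ 2 : ℝ) • v n := by
        simp only [lp.coeFn_sub, lp.coeFn_add, lp.coeFn_smul, Pi.sub_apply,
          Pi.add_apply, Pi.smul_apply]
        rw [hT (T v) n, hT v (n + 1), hT v n, hre, hnrm]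
        simp only [op_smul_eq_mul, Quaternion.mul_coe_eq_smul, Quaternion.coe_mul_eq_smul]
      rw [hco2]
      have hv0 : ∀ m : ℕ+, v m = ((t ^ m.natPred / B m.natPred : ℝ) : ℍ[ℝ]) := fun m => rfl
      rw [hv0, hv0, hv0]
      have e1 : (n + 1).natPred = n.natPred + 1 := aux_natPred_succ n
      have e2 : (n + 1 + 1).natPred = n.natPred + 2 := by
        rw [aux_natPred_succ, aux_natPred_succ]
      rw [e1, e2]
      have hsmul : ∀ (p c : ℝ), p • ((c : ℝ) : ℍ[ℝ]) = ((p * c : ℝ) : ℍ[ℝ]) := by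
        intro p c
        rw [← Quaternion.coe_mul_eq_smul, ← Quaternion.coe_mul]
      rw [hsmul, hsmul, hsmul, hsmul, hsmul, ← Quaternion.coe_sub, ← Quaternion.coe_add]
      show _ = ((0 : ℝ) : ℍ[ℝ])
      apply congrArg (fun z : ℝ => ((z : ℝ) : ℍ[ℝ]))
      have e3 : (n.natPred).succPNat = n := PNat.succPNat_natPred n
      have e4 : (n.natPred + 1).succPNat = n + 1 := by
        rw [← aux_natPred_succ n, PNat.succPNat_natPred]
      rw [hBsucc (n.natPred + 1), hBsucc n.natPred, e3, e4]
      set k : ℕ := n.natPred with hk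
      have h1 : w n ≠ 0 := (hw n).ne'
      have h2 : w (n + 1) ≠ 0 := (hw (n + 1)).ne'
      have h3 : B k ≠ 0 := (hBpos k).ne'
      field_simp
      ring
  have hub : ∀ c ∈ {c : ℝ | ∃ s : ℍ[ℝ], c = ‖s‖ ∧
      ∃ v : lp (fun _ : ℕ+ => ℍ[ℝ]) 2, v ≠ 0 ∧
        T (T v) - op ((2 * s.re : ℝ) : ℍ[ℝ]) • T v + op ((‖s‖ ^ 2 : ℝ) : ℍ[ℝ]) • v = 0},
      c ≤ r := by
    rintro c ⟨s, rfl, v, hv, hveq⟩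
    by_contra hgt
    push_neg at hgt
    exact hv (part1 s hgt v hveq)
  have h0S : (0 : ℝ) ∈ {c : ℝ | ∃ s : ℍ[ℝ], c = ‖s‖ ∧
      ∃ v : lp (fun _ : ℕ+ => ℍ[ℝ]) 2, v ≠ 0 ∧
        T (T v) - op ((2 * s.re : ℝ) : ℍ[ℝ]) • T v + op ((‖s‖ ^ 2 : ℝ) : ℍ[ℝ]) • v = 0} :=
    hmem 0 le_rfl (Or.inr rfl)
  have hne : Set.Nonempty {c : ℝ | ∃ s : ℍ[ℝ], c = ‖s‖ ∧
      ∃ v : lp (fun _ : ℕ+ => ℍ[ℝ]) 2, v ≠ 0 ∧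
        T (T v) - op ((2 * s.re : ℝ) : ℍ[ℝ]) • T v + op ((‖s‖ ^ 2 : ℝ) : ℍ[ℝ]) • v = 0} :=
    ⟨0, h0S⟩
  have hbdd : BddAbove {c : ℝ | ∃ s : ℍ[ℝ], c = ‖s‖ ∧
      ∃ v : lp (fun _ : ℕ+ => ℍ[ℝ]) 2, v ≠ 0 ∧
        T (T v) - op ((2 * s.re : ℝ) : ℍ[ℝ]) • T v + op ((‖s‖ ^ 2 : ℝ) : ℍ[ℝ]) • v = 0} :=
    ⟨r, fun c hc => hub c hc⟩
  apply le_antisymm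
  · exact csSup_le hne hub
  · refine le_of_forall_lt fun c hc => ?_
    rcases lt_or_ge c 0 with h | h
    · exact lt_of_lt_of_le h (le_csSup hbdd h0S)
    · have hmid : c < (c + r) / 2 := by linarith
      have hin := hmem ((c + r) / 2) (by linarith) (Or.inl (by linarith))
      exact lt_of_lt_of_le hmid (le_csSup hbdd hin)
end

section
/- Let T be the operator on ℓ²(ℕ, ℍ) defined by (Tx)_n = x_{n+1} + (𝐢/2)·x_n, where 𝐢 is the quaternion imaginary unit (the standard backward shift plus (𝐢/2)·id). Identify ℂ with ℝ + ℝ𝐢 ⊆ ℍ. (a) If λ ∈ ℂ satisfies Im(λ) > 0, |λ − 𝐢/2| < 1 and |λ + 𝐢/2| > 1, then {x ∈ ℓ²(ℕ,ℍ) : T(Tx) − (Tx)•(2Re(λ)) + x•|λ|² = 0} = {v₁•q : q ∈ ℍ}, where v₁ = ((λ − 𝐢/2)ⁿ)_{n≥0}; in particular this solution space has dimension 1 over ℍ. (b) If ω ∈ ℂ satisfies Im(ω) > 0, |ω − 𝐢/2| < 1 and |ω + 𝐢/2| < 1, then {x ∈ ℓ²(ℕ,ℍ) : T(Tx) − (Tx)•(2Re(ω))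 + x•|ω|² = 0} = {v₂•p + v₃•q : p, q ∈ ℍ}, where v₂ = ((ω − 𝐢/2)ⁿ)_{n≥0} and v₃ = ((ω̄ − 𝐢/2)ⁿ)_{n≥0}; in particular this solution space has dimension 2 over ℍ. -/
open Quaternion MulOpposite
open scoped ENNReal

noncomputable section

private lemma coeC_sub (z w : ℂ) : ((z - w : ℂ) : ℍ[ℝ]) = (z : ℍ[ℝ]) - w :=
  map_sub Quaternion.ofComplex z w

private lemma coeC_pow (z : ℂ) (n : ℕ) : ((z ^ n : ℂ) : ℍ[ℝ]) = (z : ℍ[ℝ]) ^ n :=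
  map_pow Quaternion.ofComplex z n

private lemma coeC_norm (z : ℂ) : ‖(z : ℍ[ℝ])‖ = ‖z‖ := by
  refine (mul_self_inj (norm_nonneg _) (norm_nonneg _)).mp ?_
  rw [← pow_two ‖z‖, Complex.sq_norm, ← Quaternion.normSq_eq_norm_mul_self]
  simp [Quaternion.normSq_def', Complex.normSq_apply, sq]

private lemma coeC_inj {z w : ℂ} (h : (z : ℍ[ℝ]) = (w : ℍ[ℝ])) : z = w :=
  Complex.ext (congrArg QuaternionAlgebra.re h) (congrArg QuaternionAlgebra.imI h)

private lemma lp_tendsto_zero (x : lp (fun _ : ℕ => ℍ[ℝ]) 2) :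
    Filter.Tendsto (fun n => x n) Filter.atTop (nhds 0) := by
  have hs := (lp.memℓp x).summable (p := 2) (by norm_num)
  have h2 := hs.tendsto_atTop_zero
  rw [tendsto_zero_iff_norm_tendsto_zero]
  have h3 := (Real.continuous_sqrt.tendsto 0).comp h2
  simp only [Function.comp_def, Real.sqrt_zero] at h3
  convert h3 using 2 with n
  rw [ENNReal.toReal_ofNat, Real.rpow_two, Real.sqrt_sq (norm_nonneg _)]

private lemma step_id (a b p q : ℍ[ℝ]) (hc : a * b = b * a) (n : ℕ) :
    (a + b) * (a ^ (n+1) * p + b ^ (n+1) * q) - a * b * (a ^ n * p + b ^ n * q)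
      = a ^ (n+2) * p + b ^ (n+2) * q := by
  rw [pow_succ' a (n+1), pow_succ' b (n+1), pow_succ' a n, pow_succ' b n]
  set A := a ^ n
  set B := b ^ n
  simp only [mul_add, add_mul, mul_assoc]
  rw [← mul_assoc b a, ← hc, mul_assoc]
  abel

private lemma rec_solve (a b : ℍ[ℝ]) (hc : a * b = b * a) (hne : a ≠ b) (x : ℕ → ℍ[ℝ])
    (hrec : ∀ n, x (n+2) = (a + b) * x (n+1) - a * b * x n) :
    ∃ p q : ℍ[ℝ], ∀ n, x n = a ^ n * p + b ^ n * q := by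
  have hd : b - a ≠ 0 := sub_ne_zero.mpr (Ne.symm hne)
  set d := (b - a)⁻¹ with hdd
  have hca : Commute a b := hc
  have hda : a * d = d * a := ((hca.sub_right (Commute.refl a)).inv_right₀).eq
  have hdb : b * d = d * b := (((Commute.refl b).sub_right hca.symm).inv_right₀).eq
  refine ⟨d * (b * x 0 - x 1), d * (x 1 - a * x 0), ?_⟩
  set p := d * (b * x 0 - x 1) with hp
  set q := d * (x 1 - a * x 0) with hq
  have h0 : x 0 = a ^ 0 * p + b ^ 0 * q := by
    rw [pow_zero, pow_zero, one_mul, one_mul, hp, hq, ← mul_add]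
    have e : (b * x 0 - x 1) + (x 1 - a * x 0) = (b - a) * x 0 := by noncomm_ring
    rw [e, ← mul_assoc, hdd, inv_mul_cancel₀ hd, one_mul]
  have h1 : x 1 = a ^ 1 * p + b ^ 1 * q := by
    rw [pow_one, pow_one, hp, hq, ← mul_assoc, ← mul_assoc, hda, hdb,
      mul_assoc, mul_assoc, ← mul_add]
    have e : a * (b * x 0 - x 1) + b * (x 1 - a * x 0) = (b - a) * x 1 := by
      have e2 : b * (a * x 0) = a * (b * x 0) := by
        rw [← mul_assoc, ← mul_assoc, ← hc]
      rw [mul_sub, mul_sub, e2]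
      noncomm_ring
    rw [e, ← mul_assoc, hdd, inv_mul_cancel₀ hd, one_mul]
  have key : ∀ n, x n = a ^ n * p + b ^ n * q ∧ x (n+1) = a ^ (n+1) * p + b ^ (n+1) * q := by
    intro n
    induction n with
    | zero => exact ⟨h0, h1⟩
    | succ m ih =>
      refine ⟨ih.2, ?_⟩
      rw [hrec m, ih.1, ih.2, step_id a b p q hc m]
  exact fun n => (key n).1

private lemma point_core (c r s u v w : ℍ[ℝ]) (h1 : v * r = r * v) (h2 : u * r = r * u)
    (h3 : u * s = s * u) :
    (w + c * v) + c * (v + c * u) - (v + c * u) * r + u * s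
      = w - ((r - 2 * c) * v - (c * c - c * r + s) * u) := by
  rw [add_mul, mul_assoc c u r, h1, h2, h3]
  noncomm_ring

private lemma coeff1 (lam : ℂ) :
    ((2 * lam.re : ℝ) : ℍ[ℝ]) - 2 * ((Complex.I / 2 : ℂ) : ℍ[ℝ])
      = (((lam - Complex.I / 2) + (starRingEnd ℂ lam - Complex.I / 2) : ℂ) : ℍ[ℝ]) := by
  rw [show (2 : ℍ[ℝ]) = ((2 : ℂ) : ℍ[ℝ]) from rfl, ← Quaternion.coeComplex_mul,
    show ((2 * lam.re : ℝ) : ℍ[ℝ]) = (((2 * lam.re : ℝ) : ℂ) : ℍ[ℝ]) from rfl, ← coeC_sub]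
  congr 1
  have h2 := Complex.add_conj lam
  push_cast at h2 ⊢
  linear_combination -h2

private lemma coeff2 (lam : ℂ) :
    ((Complex.I / 2 : ℂ) : ℍ[ℝ]) * ((Complex.I / 2 : ℂ) : ℍ[ℝ])
        - ((Complex.I / 2 : ℂ) : ℍ[ℝ]) * ((2 * lam.re : ℝ) : ℍ[ℝ]) + ((‖lam‖ ^ 2 : ℝ) : ℍ[ℝ])
      = (((lam - Complex.I / 2) * (starRingEnd ℂ lam - Complex.I / 2) : ℂ) : ℍ[ℝ]) := by
  rw [show ((2 * lam.re : ℝ) : ℍ[ℝ]) = (((2 * lam.re : ℝ) : ℂ) : ℍ[ℝ]) from rfl,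
    show ((‖lam‖ ^ 2 : ℝ) : ℍ[ℝ]) = (((‖lam‖ ^ 2 : ℝ) : ℂ) : ℍ[ℝ]) from rfl,
    ← Quaternion.coeComplex_mul, ← Quaternion.coeComplex_mul, ← coeC_sub,
    ← Quaternion.coeComplex_add]
  congr 1
  have h2 := Complex.add_conj lam
  have hn2 : ((‖lam‖ ^ 2 : ℝ) : ℂ) = lam * starRingEnd ℂ lam := by
    rw [Complex.mul_conj]
    norm_cast
    exact Complex.sq_norm lam
  push_cast at h2 hn2 ⊢
  linear_combination hn2 + (Complex.I / 2) * h2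

private lemma eq_iff_rec (T : lp (fun _ : ℕ => ℍ[ℝ]) 2 → lp (fun _ : ℕ => ℍ[ℝ]) 2)
    (hT : ∀ (x : lp (fun _ : ℕ => ℍ[ℝ]) 2) (n : ℕ),
      T x n = x (n + 1) + ((Complex.I / 2 : ℂ) : ℍ[ℝ]) * x n)
    (lam : ℂ) (x : lp (fun _ : ℕ => ℍ[ℝ]) 2) :
    (T (T x) - op ((2 * lam.re : ℝ) : ℍ[ℝ]) • T x + op ((‖lam‖ ^ 2 : ℝ) : ℍ[ℝ]) • x = 0)
      ↔ ∀ n : ℕ, x (n+2)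
          = (((lam - Complex.I / 2) + (starRingEnd ℂ lam - Complex.I / 2) : ℂ) : ℍ[ℝ]) * x (n+1)
            - (((lam - Complex.I / 2) * (starRingEnd ℂ lam - Complex.I / 2) : ℂ) : ℍ[ℝ]) * x n := by
  set c : ℍ[ℝ] := ((Complex.I / 2 : ℂ) : ℍ[ℝ]) with hc
  set r : ℍ[ℝ] := ((2 * lam.re : ℝ) : ℍ[ℝ]) with hr
  set s : ℍ[ℝ] := ((‖lam‖ ^ 2 : ℝ) : ℍ[ℝ]) with hs
  have hcoord : ∀ n : ℕ, (T (T x) - op r • T x + op s • x) n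
      = (x (n+2) + c * x (n+1)) + c * (x (n+1) + c * x n) - (x (n+1) + c * x n) * r
        + x n * s := by
    intro n
    have h1 : (T (T x) - op r • T x + op s • x) n = (T (T x)) n - (T x) n * r + x n * s := by
      simp only [lp.coeFn_add, lp.coeFn_sub, lp.coeFn_smul, Pi.add_apply, Pi.sub_apply,
        Pi.smul_apply, MulOpposite.smul_eq_mul_unop, unop_op]
    rw [h1, hT (T x) n, hT x (n+1), hT x n]
  have hzero : (T (T x) - op r • T x + op s • x = 0)
      ↔ ∀ n : ℕ, (T (T x) - op r • T x + op s • x) n = 0 := by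
    constructor
    · intro h n
      rw [h]
      exact congrFun (lp.coeFn_zero _ _) n
    · intro h
      refine lp.ext (funext fun n => ?_)
      rw [h n, lp.coeFn_zero, Pi.zero_apply]
  rw [hzero]
  refine forall_congr' fun n => ?_
  rw [hcoord n,
    point_core c r s (x n) (x (n+1)) (x (n+2))
      (Quaternion.coe_commutes _ _).symm (Quaternion.coe_commutes _ _).symm
      (Quaternion.coe_commutes _ _).symm,
    sub_eq_zero, hr, hc, hs, coeff1 lam, coeff2 lam]

private lemma rec_from_formula (a b p q : ℍ[ℝ]) (hc : a * b = b * a) (x : ℕ → ℍ[ℝ])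
    (hx : ∀ n, x n = a ^ n * p + b ^ n * q) (n : ℕ) :
    x (n+2) = (a + b) * x (n+1) - a * b * x n := by
  rw [hx (n+2), hx (n+1), hx n, step_id a b p q hc n]

/-- Let `T` be the backward shift plus `(𝐢/2)·id` on `ℓ²(ℕ, ℍ)`.
(a) For `λ ∈ ℂ` with `Im λ > 0`, `|λ − 𝐢/2| < 1`, `|λ + 𝐢/2| > 1`, the solution set of
`Q_λ(T) x = 0` is `{v₁ • q : q ∈ ℍ}` with `v₁ = ((λ − 𝐢/2)ⁿ)ₙ` (dimension 1 over `ℍ`).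
(b) For `ω ∈ ℂ` with `Im ω > 0`, `|ω − 𝐢/2| < 1`, `|ω + 𝐢/2| < 1`, it is
`{v₂ • p + v₃ • q : p, q ∈ ℍ}` with `v₂ = ((ω − 𝐢/2)ⁿ)ₙ`, `v₃ = ((ω̄ − 𝐢/2)ⁿ)ₙ`
(dimension 2 over `ℍ`). -/
theorem shift_plus_halfI_sEigenspaces
    (T : lp (fun _ : ℕ => ℍ[ℝ]) 2 → lp (fun _ : ℕ => ℍ[ℝ]) 2)
    (hT : ∀ (x : lp (fun _ : ℕ => ℍ[ℝ]) 2) (n : ℕ),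
      T x n = x (n + 1) + ((Complex.I / 2 : ℂ) : ℍ[ℝ]) * x n) :
    (∀ lam : ℂ, 0 < lam.im → ‖lam - Complex.I / 2‖ < 1 → 1 < ‖lam + Complex.I / 2‖ →
      {x : lp (fun _ : ℕ => ℍ[ℝ]) 2 |
          T (T x) - op ((2 * lam.re : ℝ) : ℍ[ℝ]) • T x
            + op ((‖lam‖ ^ 2 : ℝ) : ℍ[ℝ]) • x = 0} =
        {x : lp (fun _ : ℕ => ℍ[ℝ]) 2 | ∃ q : ℍ[ℝ], ∀ n : ℕ,
          x n = (((lam - Complex.I / 2) ^ n : ℂ) : ℍ[ℝ]) * q}) ∧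
    (∀ ω : ℂ, 0 < ω.im → ‖ω - Complex.I / 2‖ < 1 → ‖ω + Complex.I / 2‖ < 1 →
      {x : lp (fun _ : ℕ => ℍ[ℝ]) 2 |
          T (T x) - op ((2 * ω.re : ℝ) : ℍ[ℝ]) • T x
            + op ((‖ω‖ ^ 2 : ℝ) : ℍ[ℝ]) • x = 0} =
        {x : lp (fun _ : ℕ => ℍ[ℝ]) 2 | ∃ p q : ℍ[ℝ], ∀ n : ℕ,
          x n = (((ω - Complex.I / 2) ^ n : ℂ) : ℍ[ℝ]) * p
            + (((starRingEnd ℂ ω - Complex.I / 2) ^ n : ℂ) : ℍ[ℝ]) * q}) := by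
  constructor
  · intro lam him h1 h2
    ext x
    simp only [Set.mem_setOf_eq]
    rw [eq_iff_rec T hT lam x]
    set α : ℂ := lam - Complex.I / 2 with hα
    set β : ℂ := starRingEnd ℂ lam - Complex.I / 2 with hβ
    have hcm : ((α : ℂ) : ℍ[ℝ]) * ((β : ℂ) : ℍ[ℝ]) = ((β : ℂ) : ℍ[ℝ]) * ((α : ℂ) : ℍ[ℝ]) := by
      rw [← Quaternion.coeComplex_mul, ← Quaternion.coeComplex_mul, mul_comm]
    have hne : ((α : ℂ) : ℍ[ℝ]) ≠ ((β : ℂ) : ℍ[ℝ]) := by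
      intro h
      have h' := coeC_inj h
      have := congrArg Complex.im h'
      simp only [hα, hβ, Complex.sub_im, Complex.conj_im] at this
      linarith
    have hbnorm : ‖β‖ = ‖lam + Complex.I / 2‖ := by
      have hb2 : β = starRingEnd ℂ (lam + Complex.I / 2) := by
        rw [hβ, map_add, map_div₀, Complex.conj_I, map_ofNat]
        ring
      rw [hb2, Complex.norm_conj]
    constructor
    · intro hrec
      have hrec' : ∀ n, (x : ℕ → ℍ[ℝ]) (n+2)
          = (((α : ℂ) : ℍ[ℝ]) + ((β : ℂ) : ℍ[ℝ])) * x (n+1)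
            - ((α : ℂ) : ℍ[ℝ]) * ((β : ℂ) : ℍ[ℝ]) * x n := by
        simpa only [Quaternion.coeComplex_add, Quaternion.coeComplex_mul] using hrec
      obtain ⟨p, q, hx⟩ := rec_solve _ _ hcm hne _ hrec'
      -- show q = 0
      have halim : Filter.Tendsto (fun n => ((α : ℂ) : ℍ[ℝ]) ^ n * p) Filter.atTop (nhds 0) := by
        rw [tendsto_zero_iff_norm_tendsto_zero]
        have := (tendsto_pow_atTop_nhds_zero_of_lt_one (norm_nonneg α) h1).mul_const ‖p‖
        rw [zero_mul] at this
        refine this.congr fun n => ?_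
        rw [norm_mul, norm_pow, coeC_norm]
      have hblim : Filter.Tendsto (fun n => ((β : ℂ) : ℍ[ℝ]) ^ n * q) Filter.atTop (nhds 0) := by
        have := (lp_tendsto_zero x).sub halim
        rw [sub_zero] at this
        refine this.congr fun n => ?_
        rw [hx n]
        abel
      have hq : q = 0 := by
        have hge : ∀ n : ℕ, ‖q‖ ≤ ‖((β : ℂ) : ℍ[ℝ]) ^ n * q‖ := by
          intro n
          rw [norm_mul, norm_pow, coeC_norm]
          have hp1 : (1:ℝ) ≤ ‖β‖ ^ n := one_le_pow₀ (by rw [hbnorm]; exact le_of_lt h2)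
          exact le_mul_of_one_le_left (norm_nonneg q) hp1
        have h0 := ge_of_tendsto' (tendsto_zero_iff_norm_tendsto_zero.mp hblim) hge
        exact norm_le_zero_iff.mp h0
      refine ⟨p, fun n => ?_⟩
      rw [coeC_pow, hx n, hq, mul_zero, add_zero]
    · rintro ⟨q, hxf⟩ n
      have hx' : ∀ m, (x : ℕ → ℍ[ℝ]) m = ((α : ℂ) : ℍ[ℝ]) ^ m * q + ((β : ℂ) : ℍ[ℝ]) ^ m * 0 := by
        intro m
        rw [mul_zero, add_zero, ← coeC_pow]
        exact hxf m
      have := rec_from_formula _ _ q 0 hcm _ hx' n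
      rw [this]
      simp only [Quaternion.coeComplex_add, Quaternion.coeComplex_mul]
  · intro lam him h1 h2
    ext x
    simp only [Set.mem_setOf_eq]
    rw [eq_iff_rec T hT lam x]
    set α : ℂ := lam - Complex.I / 2 with hα
    set β : ℂ := starRingEnd ℂ lam - Complex.I / 2 with hβ
    have hcm : ((α : ℂ) : ℍ[ℝ]) * ((β : ℂ) : ℍ[ℝ]) = ((β : ℂ) : ℍ[ℝ]) * ((α : ℂ) : ℍ[ℝ]) := by
      rw [← Quaternion.coeComplex_mul, ← Quaternion.coeComplex_mul, mul_comm]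
    have hne : ((α : ℂ) : ℍ[ℝ]) ≠ ((β : ℂ) : ℍ[ℝ]) := by
      intro h
      have h' := coeC_inj h
      have := congrArg Complex.im h'
      simp only [hα, hβ, Complex.sub_im, Complex.conj_im] at this
      linarith
    constructor
    · intro hrec
      have hrec' : ∀ n, (x : ℕ → ℍ[ℝ]) (n+2)
          = (((α : ℂ) : ℍ[ℝ]) + ((β : ℂ) : ℍ[ℝ])) * x (n+1)
            - ((α : ℂ) : ℍ[ℝ]) * ((β : ℂ) : ℍ[ℝ]) * x n := by
        simpa only [Quaternion.coeComplex_add, Quaternion.coeComplex_mul] using hrec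
      obtain ⟨p, q, hx⟩ := rec_solve _ _ hcm hne _ hrec'
      exact ⟨p, q, fun n => by rw [coeC_pow, coeC_pow]; exact hx n⟩
    · rintro ⟨p, q, hxf⟩ n
      have hx' : ∀ m, (x : ℕ → ℍ[ℝ]) m = ((α : ℂ) : ℍ[ℝ]) ^ m * p + ((β : ℂ) : ℍ[ℝ]) ^ m * q := by
        intro m
        rw [← coeC_pow, ← coeC_pow]
        exact hxf m
      have := rec_from_formula _ _ p q hcm _ hx' n
      rw [this]
      simp only [Quaternion.coeComplex_add, Quaternion.coeComplex_mul]
end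
end

section
/- Let Δ ⊆ ℂ be open and H a real normed space carrying a compatible right quaternionic module structure (as in the context). Let T be a continuous right linear operator on H and γ : Δ → H an infinitely ℝ-differentiable right holomorphic map whose iterated derivatives γ^(k) are right holomorphic, and suppose Tγ(ω) = γ(ω)•ω for all ω ∈ Δ. Then for every k ≥ 1 and every ω ∈ Δ: Tγ^(k)(ω) = γ^(k)(ω)•ω + k·γ^(k−1)(ω), and consequently T(Tγ^(k)(ω)) − (Tγ^(k)(ω))•(2Re(ω)) + γ^(k)(ω)•|ω|² = k(k−1)·γ^(k−2)(ω) + k·γ^(k−1)(ω)•(ω − ω̄) (for k = 1 the first term on the right is absent). -/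
open Quaternion MulOpposite

/-- If `γ = g 0` is right holomorphic with right holomorphic iterated
derivatives `g k` and `T γ(ω) = γ(ω) • ω` on `Δ`, then for all `k ≥ 1` and `ω ∈ Δ`:
`T γ⁽ᵏ⁾(ω) = γ⁽ᵏ⁾(ω) • ω + k γ⁽ᵏ⁻¹⁾(ω)` and
`Q_ω(T) γ⁽ᵏ⁾(ω) = k(k−1) γ⁽ᵏ⁻²⁾(ω) + k γ⁽ᵏ⁻¹⁾(ω) • (ω − ω̄)`. -/
theorem rightHolomorphic_section_derivatives {H : Type*} [NormedAddCommGroup H]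
    [NormedSpace ℝ H] [Module ℍ[ℝ]ᵐᵒᵖ H]
    (hcont : ∀ a : ℍ[ℝ], Continuous fun x : H => op a • x)
    (hlinR : ∀ (a : ℍ[ℝ]) (r : ℝ) (x : H), op a • (r • x) = r • (op a • x))
    (hreal : ∀ (r : ℝ) (x : H), op ((r : ℍ[ℝ])) • x = r • x)
    (Δ : Set ℂ) (hΔ : IsOpen Δ)
    (T : H →ₗ[ℍ[ℝ]ᵐᵒᵖ] H) (hTcont : Continuous T)
    (g : ℕ → ℂ → H)
    (hg : ∀ (k : ℕ), ∀ z ∈ Δ, ∃ D : ℂ →L[ℝ] H, HasFDerivAt (g k) D z ∧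
      D 1 = g (k + 1) z ∧ D Complex.I = op ((Complex.I : ℂ) : ℍ[ℝ]) • g (k + 1) z)
    (heig : ∀ ω ∈ Δ, T (g 0 ω) = op ((ω : ℍ[ℝ])) • g 0 ω) :
    ∀ k : ℕ, 1 ≤ k → ∀ ω ∈ Δ,
      T (g k ω) = op ((ω : ℍ[ℝ])) • g k ω + (k : ℝ) • g (k - 1) ω ∧
      T (T (g k ω)) - op ((2 * ω.re : ℝ) : ℍ[ℝ]) • T (g k ω)
          + op ((‖ω‖ ^ 2 : ℝ) : ℍ[ℝ]) • g k ω =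
        ((k * (k - 1) : ℕ) : ℝ) • g (k - 2) ω
          + (k : ℝ) • (op ((ω : ℍ[ℝ]) - star ((ω : ℍ[ℝ]))) • g (k - 1) ω) := by
  classical
  set Iq : ℍ[ℝ] := ((Complex.I : ℂ) : ℍ[ℝ]) with hIqdef
  -- basic algebraic facts about the action
  have op_mul_smul : ∀ (a b : ℍ[ℝ]) (x : H), op (a * b) • x = op b • (op a • x) := by
    intro a b x
    rw [op_mul, mul_smul]
  have hT_real : ∀ (r : ℝ) (x : H), T (r • x) = r • T x := by
    intro r x
    rw [← hreal, map_smul, hreal]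
  -- the action of a fixed quaternion as a continuous ℝ-linear map
  let L : ℍ[ℝ] → H →L[ℝ] H := fun a =>
    { toFun := fun x => op a • x
      map_add' := fun x y => smul_add _ _ _
      map_smul' := hlinR a
      cont := hcont a }
  have hL : ∀ (a : ℍ[ℝ]) (x : H), L a x = op a • x := fun _ _ => rfl
  -- T as a continuous ℝ-linear map
  let Tc : H →L[ℝ] H :=
    { toFun := T
      map_add' := map_add T
      map_smul' := hT_real
      cont := hTcont }
  have hTc : ∀ x : H, Tc x = T x := fun _ => rfl
  -- decomposition of the action of a complex scalar
  have hdec : ∀ (z : ℂ) (x : H),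
      op ((z : ℍ[ℝ])) • x = z.re • x + z.im • (op Iq • x) := by
    intro z x
    have hz : (z : ℍ[ℝ]) = ((z.re : ℝ) : ℍ[ℝ]) + ((z.im : ℝ) : ℍ[ℝ]) * Iq := by
      calc (z : ℍ[ℝ]) = (((z.re : ℂ) + (z.im : ℂ) * Complex.I : ℂ) : ℍ[ℝ]) := by
            rw [Complex.re_add_im]
        _ = _ := by push_cast; rw [hIqdef]
    rw [hz, op_add, add_smul, hreal, op_mul_smul, hreal, hlinR]
  -- the key first-order identity, for every k (with the convention 0 - 1 = 0)
  have key : ∀ k : ℕ, ∀ ω ∈ Δ,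
      T (g k ω) = op ((ω : ℍ[ℝ])) • g k ω + (k : ℝ) • g (k - 1) ω := by
    intro k
    induction k with
    | zero =>
      intro ω hω
      simpa using heig ω hω
    | succ k ih =>
      intro ω hω
      obtain ⟨D, hD, hD1, hDI⟩ := hg k ω hω
      obtain ⟨D', hD', hD'1, _⟩ := hg (k - 1) ω hω
      -- derivative of the left-hand side
      have h1 : HasFDerivAt (fun z => T (g k z)) (Tc.comp D) ω :=
        (Tc.hasFDerivAt).comp ω hD
      -- derivative of the right-hand side
      have hre : HasFDerivAt (fun z : ℂ => z.re) (Complex.reCLM : ℂ →L[ℝ] ℝ) ω :=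
        Complex.reCLM.hasFDerivAt
      have him : HasFDerivAt (fun z : ℂ => z.im) (Complex.imCLM : ℂ →L[ℝ] ℝ) ω :=
        Complex.imCLM.hasFDerivAt
      have hgI : HasFDerivAt (fun z => op Iq • g k z) ((L Iq).comp D) ω :=
        ((L Iq).hasFDerivAt).comp ω hD
      have hF1 : HasFDerivAt (fun z : ℂ => z.re • g k z)
          (ω.re • D + (Complex.reCLM : ℂ →L[ℝ] ℝ).smulRight (g k ω)) ω := hre.smul hD
      have hF2 : HasFDerivAt (fun z : ℂ => z.im • (op Iq • g k z))
          (ω.im • ((L Iq).comp D)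
            + (Complex.imCLM : ℂ →L[ℝ] ℝ).smulRight (op Iq • g k ω)) ω := him.smul hgI
      have hF3 : HasFDerivAt (fun z : ℂ => (k : ℝ) • g (k - 1) z) ((k : ℝ) • D') ω :=
        hD'.const_smul (k : ℝ)
      have hR : HasFDerivAt
          (fun z : ℂ => op ((z : ℍ[ℝ])) • g k z + (k : ℝ) • g (k - 1) z)
          ((ω.re • D + (Complex.reCLM : ℂ →L[ℝ] ℝ).smulRight (g k ω))
            + (ω.im • ((L Iq).comp D)
              + (Complex.imCLM : ℂ →L[ℝ] ℝ).smulRight (op Iq • g k ω))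
            + (k : ℝ) • D') ω := by
        have hfun : (fun z : ℂ => op ((z : ℍ[ℝ])) • g k z + (k : ℝ) • g (k - 1) z)
            = fun z : ℂ => (z.re • g k z + z.im • (op Iq • g k z)) + (k : ℝ) • g (k - 1) z := by
          funext z
          rw [hdec]
        rw [hfun]
        exact (hF1.add hF2).add hF3
      -- the two functions agree on a neighbourhood of ω
      have heq : (fun z => T (g k z)) =ᶠ[nhds ω]
          (fun z : ℂ => op ((z : ℍ[ℝ])) • g k z + (k : ℝ) • g (k - 1) z) := by
        filter_upwards [hΔ.mem_nhds hω] with z hz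
        exact ih z hz
      have h1' : HasFDerivAt
          (fun z : ℂ => op ((z : ℍ[ℝ])) • g k z + (k : ℝ) • g (k - 1) z)
          (Tc.comp D) ω := by
        exact h1.congr_of_eventuallyEq heq.symm
      have hDeq := hR.unique h1'
      have := congrArg (fun (M : ℂ →L[ℝ] H) => M 1) hDeq
      simp only [ContinuousLinearMap.add_apply, ContinuousLinearMap.smul_apply,
        ContinuousLinearMap.comp_apply, ContinuousLinearMap.smulRight_apply,
        ContinuousLinearMap.coe_smul', Pi.smul_apply] at this
      rw [hD1] at this
      have hre1 : (Complex.reCLM : ℂ →L[ℝ] ℝ) 1 = 1 := by simp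
      have him1 : (Complex.imCLM : ℂ →L[ℝ] ℝ) 1 = 0 := by simp
      have hK : (k : ℝ) • D' 1 = (k : ℝ) • g k ω := by
        rw [hD'1]
        cases k with
        | zero => simp
        | succ n => norm_num
      rw [hK] at this
      rw [hre1, him1, hL] at this
      rw [show T (g (k + 1) ω) = Tc (g (k + 1) ω) from rfl, ← this,
        hdec ω (g (k + 1) ω), show k + 1 - 1 = k from rfl]
      generalize op Iq • g (k + 1) ω = P
      generalize op Iq • g k ω = Q
      push_cast
      module
  -- now the main statement
  intro k hk ω hω
  obtain ⟨m, rfl⟩ : ∃ m, k = m + 1 := ⟨k - 1, (Nat.succ_pred_eq_of_pos hk).symm⟩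
  have hi1 : m + 1 - 1 = m := rfl
  have hi2 : m + 1 - 2 = m - 1 := rfl
  have h1 : T (g (m + 1) ω) = op ((ω : ℍ[ℝ])) • g (m + 1) ω + ((m + 1 : ℕ) : ℝ) • g m ω := by
    have := key (m + 1) ω hω
    rwa [hi1] at this
  have h2 : T (g m ω) = op ((ω : ℍ[ℝ])) • g m ω + ((m : ℕ) : ℝ) • g (m - 1) ω := key m ω hω
  rw [hi1, hi2]
  refine ⟨h1, ?_⟩
  -- quadratic relation for ω
  have q1 : (ω : ℍ[ℝ]) * (ω : ℍ[ℝ]) - (ω : ℍ[ℝ]) * ((2 * ω.re : ℝ) : ℍ[ℝ])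
      + ((‖ω‖ ^ 2 : ℝ) : ℍ[ℝ]) = 0 := by
    have h : ω * ω - ω * ((2 * ω.re : ℝ) : ℂ) + ((‖ω‖ ^ 2 : ℝ) : ℂ) = 0 := by
      simp only [Complex.sq_norm, Complex.normSq_apply]
      simp [Complex.ext_iff]
      constructor <;> ring
    have h2' := congrArg (ofComplex : ℂ →ₐ[ℝ] ℍ[ℝ]) h
    simp only [map_add, map_sub, map_mul, map_zero, coe_ofComplex] at h2'
    push_cast at h2' ⊢
    convert h2' using 2
    all_goals norm_cast
    all_goals simp [coeComplex_mul, ← coeComplex_coe]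
  have q2 : star ((ω : ℍ[ℝ])) = ((2 * ω.re : ℝ) : ℍ[ℝ]) - (ω : ℍ[ℝ]) := by
    ext <;> simp <;> ring
  have hsub : op ((ω : ℍ[ℝ]) * (ω : ℍ[ℝ])) • g (m + 1) ω
      = op ((ω : ℍ[ℝ]) * ((2 * ω.re : ℝ) : ℍ[ℝ])) • g (m + 1) ω
        - op ((‖ω‖ ^ 2 : ℝ) : ℍ[ℝ]) • g (m + 1) ω := by
    have e1 : op ((ω : ℍ[ℝ]) * (ω : ℍ[ℝ])) • g (m + 1) ω
        - op ((ω : ℍ[ℝ]) * ((2 * ω.re : ℝ) : ℍ[ℝ])) • g (m + 1) ω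
        + op ((‖ω‖ ^ 2 : ℝ) : ℍ[ℝ]) • g (m + 1) ω = (0 : H) := by
      rw [← sub_smul, ← add_smul, ← op_sub, ← op_add, q1, op_zero, zero_smul]
    rwa [sub_add, sub_eq_zero] at e1
  rw [h1, map_add, map_smul, hT_real, h1, h2, q2]
  rw [smul_add, smul_add, smul_add, ← op_mul_smul, ← op_mul_smul, hsub, hlinR, hlinR,
    op_sub, sub_smul, op_sub, sub_smul]
  generalize op ((ω : ℍ[ℝ])) • g m ω = X
  generalize op (((2 * ω.re : ℝ) : ℍ[ℝ])) • g m ω = Y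
  generalize op ((ω : ℍ[ℝ]) * ((2 * ω.re : ℝ) : ℍ[ℝ])) • g (m + 1) ω = U
  generalize op (((‖ω‖ ^ 2 : ℝ) : ℍ[ℝ])) • g (m + 1) ω = V
  push_cast
  module
end

section
/- Let Δ ⊆ ℂ be open and H a real normed space carrying a compatible right quaternionic module structure (as in the context). Let T be a continuous right linear operator on H and γ : Δ → H an infinitely ℝ-differentiable right holomorphic map with right holomorphic iterated derivatives, satisfying Tγ(ω) = γ(ω)•ω on Δ. Then for every k ≥ 1 and every ω ∈ Δ, the k-th iterate of Q_ω(T) (where Q_ω(T)x = T(Tx) − (Tx)•(2Re(ω)) + x•|ω|²) satisfies: Q_ω(T)^k γ^(j)(ω) = 0 for 0 ≤ j ≤ k−1, and Q_ω(T)^k γ^(k)(ω) = k!·γ(ω)•(ω − ω̄)^k. -/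
open Quaternion MulOpposite

/-- If `γ = g 0` is right holomorphic with right holomorphic iterated
derivatives `g k` and `T γ(ω) = γ(ω) • ω` on `Δ`, then for `k ≥ 1` and `ω ∈ Δ` the `k`-th
iterate of `Q_ω(T)` kills `γ⁽ʲ⁾(ω)` for `0 ≤ j ≤ k−1` and sends `γ⁽ᵏ⁾(ω)` to
`k!·γ(ω)•(ω − ω̄)^k`. -/
theorem rightHolomorphic_section_Qpow {H : Type*} [NormedAddCommGroup H]
    [NormedSpace ℝ H] [Module ℍ[ℝ]ᵐᵒᵖ H]
    (hcont : ∀ a : ℍ[ℝ], Continuous fun x : H => op a • x)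
    (hlinR : ∀ (a : ℍ[ℝ]) (r : ℝ) (x : H), op a • (r • x) = r • (op a • x))
    (hreal : ∀ (r : ℝ) (x : H), op ((r : ℍ[ℝ])) • x = r • x)
    (Δ : Set ℂ) (hΔ : IsOpen Δ)
    (T : H →ₗ[ℍ[ℝ]ᵐᵒᵖ] H) (hTcont : Continuous T)
    (g : ℕ → ℂ → H)
    (hg : ∀ (k : ℕ), ∀ z ∈ Δ, ∃ D : ℂ →L[ℝ] H, HasFDerivAt (g k) D z ∧
      D 1 = g (k + 1) z ∧ D Complex.I = op ((Complex.I : ℂ) : ℍ[ℝ]) • g (k + 1) z)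
    (heig : ∀ ω ∈ Δ, T (g 0 ω) = op ((ω : ℍ[ℝ])) • g 0 ω) :
    ∀ k : ℕ, 1 ≤ k → ∀ ω ∈ Δ,
      (∀ j : ℕ, j ≤ k - 1 →
        (fun x : H => T (T x) - op ((2 * ω.re : ℝ) : ℍ[ℝ]) • T x
          + op ((‖ω‖ ^ 2 : ℝ) : ℍ[ℝ]) • x)^[k] (g j ω) = 0) ∧
      (fun x : H => T (T x) - op ((2 * ω.re : ℝ) : ℍ[ℝ]) • T x
          + op ((‖ω‖ ^ 2 : ℝ) : ℍ[ℝ]) • x)^[k] (g k ω) =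
        ((Nat.factorial k : ℕ) : ℝ) • (op (((ω : ℍ[ℝ]) - star ((ω : ℍ[ℝ]))) ^ k) • g 0 ω) := by
  -- basic facts about the quaternionic action
  have hmul : ∀ (a b : ℍ[ℝ]) (x : H), op a • op b • x = op (b * a) • x := by
    intro a b x
    rw [smul_smul, ← op_mul]
  have hadd : ∀ (a b : ℍ[ℝ]) (x : H), op a • x + op b • x = op (a + b) • x := by
    intro a b x
    rw [op_add, add_smul]
  have hsub : ∀ (a b : ℍ[ℝ]) (x : H), op a • x - op b • x = op (a - b) • x := by
    intro a b x
    rw [op_sub, sub_smul]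
  have hTR : ∀ (r : ℝ) (x : H), T (r • x) = r • T x := by
    intro r x
    rw [← hreal, map_smul, hreal]
  -- `T` as a continuous `ℝ`-linear map
  let Tc : H →L[ℝ] H :=
    ⟨{ toFun := T, map_add' := map_add T, map_smul' := hTR }, hTcont⟩
  -- the action as a continuous linear map `ℍ →L[ℝ] (H →L[ℝ] H)`
  let act : ℍ[ℝ] → (H →L[ℝ] H) := fun a =>
    ⟨{ toFun := fun x => op a • x
       map_add' := fun x y => smul_add _ x y
       map_smul' := fun r x => hlinR a r x }, hcont a⟩
  have hact : ∀ (a : ℍ[ℝ]) (x : H), act a x = op a • x := fun a x => rfl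
  let Lop : ℍ[ℝ] →ₗ[ℝ] (H →L[ℝ] H) :=
    { toFun := act
      map_add' := by
        intro a b; ext x
        simp only [hact, ContinuousLinearMap.add_apply]
        exact (hadd a b x).symm
      map_smul' := by
        intro r a; ext x
        simp only [hact, RingHom.id_apply, ContinuousLinearMap.coe_smul', Pi.smul_apply]
        show op (r • a) • x = r • (op a • x)
        rw [← hlinR, ← hreal r x, hmul, Algebra.smul_def]
        rfl }
  let C : ℂ →L[ℝ] (H →L[ℝ] H) :=
    (LinearMap.toContinuousLinearMap Lop).comp
      (LinearMap.toContinuousLinearMap (Quaternion.ofComplex.toLinearMap))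
  have hC : ∀ (z : ℂ) (x : H), C z x = op ((z : ℍ[ℝ])) • x := fun z x => by
    simp [C, Lop, hact]
  -- Key derivative identity:  T γ⁽ᵏ⁾(ω) = γ⁽ᵏ⁾(ω)•ω + k γ⁽ᵏ⁻¹⁾(ω)
  have key : ∀ k : ℕ, ∀ ω ∈ Δ, T (g k ω)
      = op ((ω : ℍ[ℝ])) • g k ω + (k : ℝ) • g (k - 1) ω := by
    intro k
    induction k with
    | zero =>
      intro ω hω
      simpa using heig ω hω
    | succ k ih =>
      intro ω hω
      obtain ⟨D, hD, hD1, -⟩ := hg k ω hω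
      obtain ⟨D', hD', hD'1, -⟩ := hg (k - 1) ω hω
      have hL : HasFDerivAt (fun z => T (g k z)) (Tc.comp D) ω :=
        (Tc.hasFDerivAt).comp ω hD
      have hf1 : HasFDerivAt (fun z => C z (g k z)) ((C ω).comp D + C.flip (g k ω)) ω :=
        (C.hasFDerivAt).clm_apply hD
      have hf2 : HasFDerivAt (fun z => (k : ℝ) • g (k - 1) z) ((k : ℝ) • D') ω :=
        hD'.const_smul (k : ℝ)
      have hR : HasFDerivAt (fun z => C z (g k z) + (k : ℝ) • g (k - 1) z)
          ((C ω).comp D + C.flip (g k ω) + (k : ℝ) • D') ω := hf1.add hf2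
      have hEq : (fun z => T (g k z)) =ᶠ[nhds ω]
          (fun z => C z (g k z) + (k : ℝ) • g (k - 1) z) := by
        filter_upwards [hΔ.mem_nhds hω] with z hz
        rw [ih z hz, hC]
      have hUniq := (hL.congr_of_eventuallyEq hEq.symm).unique hR
      have h1 := congrArg (fun L : ℂ →L[ℝ] H => L 1) hUniq
      simp only [ContinuousLinearMap.comp_apply, ContinuousLinearMap.add_apply,
        ContinuousLinearMap.coe_smul', Pi.smul_apply, ContinuousLinearMap.flip_apply] at h1
      rw [hD1] at h1
      have hcoe : Tc (g (k + 1) ω) = T (g (k + 1) ω) := rfl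
      rw [hcoe, hC, hC, Quaternion.coeComplex_one, op_one, one_smul] at h1
      have hterm : (k : ℝ) • D' 1 = (k : ℝ) • g k ω := by
        cases k with
        | zero => simp
        | succ n =>
          rw [hD'1]
          norm_num
      rw [hterm] at h1
      rw [show (((k : ℕ) + 1 : ℕ) : ℝ) = (k : ℝ) + 1 by push_cast; ring,
        Nat.add_sub_cancel, h1, add_smul, one_smul]
      abel
  -- now fix k and ω
  intro k hk ω hω
  set Q : H → H := fun x : H => T (T x) - op ((2 * ω.re : ℝ) : ℍ[ℝ]) • T x
      + op ((‖ω‖ ^ 2 : ℝ) : ℍ[ℝ]) • x with hQdef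
  set δ : ℍ[ℝ] := ((ω : ℍ[ℝ]) - star ((ω : ℍ[ℝ]))) with hδdef
  have hQeq : ∀ x : H, Q x = T (T x) - (2 * ω.re) • T x + (‖ω‖ ^ 2) • x := by
    intro x
    rw [hQdef]
    simp only [hreal]
  -- the characteristic identity of ω as a quaternion
  have hcx : (ω * ω - ω * ((2 * ω.re : ℝ) : ℂ) + ((‖ω‖ ^ 2 : ℝ) : ℂ)) = 0 := by
    rw [show ((‖ω‖ ^ 2 : ℝ) : ℂ) = ((ω.re ^ 2 + ω.im ^ 2 : ℝ) : ℂ) by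
      norm_cast
      rw [Complex.sq_norm, Complex.normSq_apply]
      ring]
    apply Complex.ext <;>
      simp [Complex.mul_re, Complex.mul_im, ← Complex.ofReal_pow] <;> ring
  have hq0 : (ω : ℍ[ℝ]) * (ω : ℍ[ℝ]) - (ω : ℍ[ℝ]) * ((2 * ω.re : ℝ) : ℍ[ℝ])
      + ((‖ω‖ ^ 2 : ℝ) : ℍ[ℝ]) = 0 := by
    have h := congrArg (Quaternion.ofComplex : ℂ → ℍ[ℝ]) hcx
    simp only [map_sub, map_add, map_mul, map_zero, Quaternion.coe_ofComplex,
      Quaternion.coeComplex_coe] at h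
    exact h
  have hdel : (ω : ℍ[ℝ]) + (ω : ℍ[ℝ]) - ((2 * ω.re : ℝ) : ℍ[ℝ]) = δ := by
    rw [hδdef]
    ext <;> simp <;> ring
  -- the "vanishing" combination
  have hgrp : ∀ x : H, op ((ω : ℍ[ℝ]) * (ω : ℍ[ℝ])) • x
      - (2 * ω.re) • (op ((ω : ℍ[ℝ])) • x) + (‖ω‖ ^ 2) • x = 0 := by
    intro x
    rw [← hreal (2 * ω.re), ← hreal (‖ω‖ ^ 2), hmul, hsub, hadd, hq0, op_zero, zero_smul]
  -- Q kills γ(ω)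
  have L0 : Q (g 0 ω) = 0 := by
    have t0 : T (g 0 ω) = op ((ω : ℍ[ℝ])) • g 0 ω := by
      simpa using key 0 ω hω
    rw [hQeq, t0, map_smul, t0, hmul]
    exact hgrp (g 0 ω)
  -- action of Q on the higher derivatives
  have L1 : ∀ j : ℕ, Q (g (j + 1) ω)
      = ((j + 1 : ℕ) : ℝ) • (op δ • g j ω) + (((j + 1) * j : ℕ) : ℝ) • g (j - 1) ω := by
    intro j
    have t1 : T (g (j + 1) ω) = op ((ω : ℍ[ℝ])) • g (j + 1) ω + ((j + 1 : ℕ) : ℝ) • g j ω := by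
      simpa using key (j + 1) ω hω
    have t0 := key j ω hω
    have e2 : T (T (g (j + 1) ω)) = op ((ω : ℍ[ℝ]) * (ω : ℍ[ℝ])) • g (j + 1) ω
        + ((j + 1 : ℕ) : ℝ) • (op ((ω : ℍ[ℝ])) • g j ω)
        + (((j + 1 : ℕ) : ℝ) • (op ((ω : ℍ[ℝ])) • g j ω)
          + (((j + 1) * j : ℕ) : ℝ) • g (j - 1) ω) := by
      rw [t1, map_add, map_smul, t1, hTR, t0, smul_add, hmul, hlinR, smul_add, smul_smul]
      push_cast
      ring_nf
    rw [hQeq, e2, t1, smul_add, smul_comm (2 * ω.re) ((j + 1 : ℕ) : ℝ)]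
    have hmid : ((j + 1 : ℕ) : ℝ) • (op ((ω : ℍ[ℝ])) • g j ω)
        + ((j + 1 : ℕ) : ℝ) • (op ((ω : ℍ[ℝ])) • g j ω)
        - ((j + 1 : ℕ) : ℝ) • ((2 * ω.re) • g j ω)
        = ((j + 1 : ℕ) : ℝ) • (op δ • g j ω) := by
      rw [← smul_add, ← smul_sub]
      congr 1
      rw [← hreal (2 * ω.re), hadd, hsub, hdel]
    have hz := hgrp (g (j + 1) ω)
    -- now pure abelian-group bookkeeping
    rw [← hmid, ← sub_eq_zero, ← hz]
    abel
  -- Q is additive, commutes with real scalars and with the quaternionic action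
  have hQadd : ∀ x y : H, Q (x + y) = Q x + Q y := by
    intro x y
    simp only [hQeq, map_add, smul_add]
    abel
  have hQop : ∀ (a : ℍ[ℝ]) (x : H), Q (op a • x) = op a • Q x := by
    intro a x
    simp only [hQeq, map_smul, hlinR, smul_sub, smul_add]
  have hQsmulR : ∀ (r : ℝ) (x : H), Q (r • x) = r • Q x := by
    intro r x
    rw [← hreal r x, hQop, hreal]
  have hQzero : Q 0 = 0 := by
    rw [hQeq]; simp
  have hitzero : ∀ m : ℕ, Q^[m] 0 = 0 := fun m => Function.iterate_fixed hQzero m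
  have hitadd : ∀ m : ℕ, ∀ x y : H, Q^[m] (x + y) = Q^[m] x + Q^[m] y := by
    intro m
    induction m with
    | zero => intro x y; simp
    | succ m ih =>
      intro x y
      simp only [Function.iterate_succ_apply]
      rw [hQadd, ih]
  have hitsmulR : ∀ m : ℕ, ∀ (r : ℝ) (x : H), Q^[m] (r • x) = r • Q^[m] x := by
    intro m
    induction m with
    | zero => intro r x; simp
    | succ m ih =>
      intro r x
      simp only [Function.iterate_succ_apply]
      rw [hQsmulR, ih]
  have hitop : ∀ m : ℕ, ∀ (a : ℍ[ℝ]) (x : H), Q^[m] (op a • x) = op a • Q^[m] x := by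
    intro m
    induction m with
    | zero => intro a x; simp
    | succ m ih =>
      intro a x
      simp only [Function.iterate_succ_apply]
      rw [hQop, ih]
  -- the main induction
  have main : ∀ m : ℕ, (∀ j : ℕ, j < m → Q^[m] (g j ω) = 0) ∧
      Q^[m] (g m ω) = ((Nat.factorial m : ℕ) : ℝ) • (op (δ ^ m) • g 0 ω) := by
    intro m
    induction m with
    | zero =>
      refine ⟨fun j hj => absurd hj (Nat.not_lt_zero j), ?_⟩
      simp
    | succ m ih =>
      obtain ⟨ih1, ih2⟩ := ih
      have hstep : ∀ j : ℕ, j < m + 1 → Q^[m + 1] (g j ω) = 0 := by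
        intro j hj
        rw [Function.iterate_succ_apply]
        cases j with
        | zero => rw [L0, hitzero]
        | succ i =>
          rw [L1 i, hitadd, hitsmulR, hitsmulR, hitop]
          rw [ih1 i (by omega), ih1 (i - 1) (by omega)]
          simp
      refine ⟨hstep, ?_⟩
      rw [Function.iterate_succ_apply, L1 m, hitadd, hitsmulR, hitsmulR, hitop, ih2]
      have h2 : Q^[m] (g (m - 1) ω) = 0 ∨ m = 0 := by
        cases m with
        | zero => exact Or.inr rfl
        | succ n => exact Or.inl (ih1 (n + 1 - 1) (by omega))
      have h2' : (((m + 1) * m : ℕ) : ℝ) • Q^[m] (g (m - 1) ω) = 0 := by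
        rcases h2 with h | h
        · rw [h, smul_zero]
        · subst h; simp
      rw [h2', add_zero, hlinR, smul_smul, hmul]
      rw [show δ ^ m * δ = δ ^ (m + 1) by rw [pow_succ]]
      congr 1
      rw [Nat.factorial_succ]
      push_cast
      ring
  refine ⟨fun j hj => (main k).1 j (by omega), (main k).2⟩
end

section
/- Let Δ ⊆ ℂ be open and H a real normed space carrying a compatible right quaternionic module structure (as in the context). Let T be a continuous right linear operator on H, let γ₁, …, γ_n : Δ → H be infinitely ℝ-differentiable right holomorphic maps with right holomorphic iterated derivatives satisfying Tγ_i(ω) = γ_i(ω)•ω on Δ, and let ω₀ ∈ Δ with Im(ω₀) ≠ 0. If γ₁(ω₀), …, γ_n(ω₀) are right ℍ-linearly independent, then for every k ≥ 1 the n·k vectors {γ_i^(j)(ω₀) : 1 ≤ i ≤ n, 0 ≤ j ≤ k−1} are right ℍ-linearly independent, and each of them lies in the kernel of Q_{ω₀}(T)^k. -/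
open Quaternion MulOpposite

section Aux
variable {H : Type*} [NormedAddCommGroup H] [NormedSpace ℝ H] [Module ℍ[ℝ]ᵐᵒᵖ H]
variable (hcont : ∀ a : ℍ[ℝ], Continuous fun x : H => op a • x)
variable (hlinR : ∀ (a : ℍ[ℝ]) (r : ℝ) (x : H), op a • (r • x) = r • (op a • x))
variable (hreal : ∀ (r : ℝ) (x : H), op ((r : ℍ[ℝ])) • x = r • x)

theorem aux_sM (a b : ℍ[ℝ]) (x : H) : op a • (op b • x) = op (b * a) • x := by
  rw [op_mul, mul_smul]

include hlinR hreal in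
theorem aux_coe (c : ℂ) (x : H) :
    op ((c : ℍ[ℝ])) • x = c.re • x + c.im • (op ((Complex.I : ℂ) : ℍ[ℝ]) • x) := by
  have h : (c : ℍ[ℝ]) = ((c.re : ℝ) : ℍ[ℝ]) + ((c.im : ℝ) : ℍ[ℝ]) * ((Complex.I : ℂ) : ℍ[ℝ]) := by
    ext <;> simp
  rw [h, op_add, add_smul, hreal, ← aux_sM, hreal, hlinR]

noncomputable def opCLM (a : ℍ[ℝ]) : H →L[ℝ] H where
  toFun := fun x => op a • x
  map_add' := fun x y => smul_add _ x y
  map_smul' := fun r x => hlinR a r x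
  cont := hcont a

@[simp] theorem opCLM_apply (a : ℍ[ℝ]) (x : H) :
    opCLM hcont hlinR a x = op a • x := rfl

noncomputable def TCLM (T : H →ₗ[ℍ[ℝ]ᵐᵒᵖ] H) (hTcont : Continuous T) : H →L[ℝ] H where
  toFun := T
  map_add' := map_add T
  map_smul' := fun r x => by
    simp only [RingHom.id_apply, ← hreal r x, map_smul, hreal r (T x)]
  cont := hTcont

@[simp] theorem TCLM_apply (T : H →ₗ[ℍ[ℝ]ᵐᵒᵖ] H) (hTcont) (x : H) :
    TCLM hreal T hTcont x = T x := rfl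

include hcont hlinR hreal in
/-- Derivative of `w ↦ op w • γ w`. -/
theorem hasFDerivAt_opsmul {γ : ℂ → H} {D : ℂ →L[ℝ] H} {z : ℂ}
    (hγ : HasFDerivAt γ D z) :
    ∃ E : ℂ →L[ℝ] H, HasFDerivAt (fun w : ℂ => op ((w : ℍ[ℝ])) • γ w) E z ∧
      E 1 = op ((z : ℍ[ℝ])) • D 1 + γ z := by
  have hkey : (fun w : ℂ => op ((w : ℍ[ℝ])) • γ w)
      = fun w : ℂ => w.re • γ w + w.im • (opCLM hcont hlinR ((Complex.I : ℂ) : ℍ[ℝ]) (γ w)) :=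
    funext fun w => aux_coe hlinR hreal w (γ w)
  have h1 : HasFDerivAt (fun w : ℂ => w.re • γ w)
      (z.re • D + Complex.reCLM.smulRight (γ z)) z := Complex.reCLM.hasFDerivAt.smul hγ
  have hcomp : HasFDerivAt (fun w : ℂ => opCLM hcont hlinR ((Complex.I : ℂ) : ℍ[ℝ]) (γ w))
      ((opCLM hcont hlinR ((Complex.I : ℂ) : ℍ[ℝ])).comp D) z :=
    (opCLM hcont hlinR _).hasFDerivAt.comp z hγ
  have h2 := Complex.imCLM.hasFDerivAt.smul hcomp
  refine ⟨_, by rw [hkey]; exact h1.add h2, ?_⟩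
  simp [aux_coe hlinR hreal z (D 1)]
  abel
end Aux

section Aux2
variable {H : Type*} [NormedAddCommGroup H] [NormedSpace ℝ H] [Module ℍ[ℝ]ᵐᵒᵖ H]
variable (hcont : ∀ a : ℍ[ℝ], Continuous fun x : H => op a • x)
variable (hlinR : ∀ (a : ℍ[ℝ]) (r : ℝ) (x : H), op a • (r • x) = r • (op a • x))
variable (hreal : ∀ (r : ℝ) (x : H), op ((r : ℍ[ℝ])) • x = r • x)

include hcont hlinR hreal in
theorem Tg_rec (Δ : Set ℂ) (hΔ : IsOpen Δ) (T : H →ₗ[ℍ[ℝ]ᵐᵒᵖ] H) (hTcont : Continuous T)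
    (γ : ℕ → ℂ → H)
    (hg : ∀ k, ∀ z ∈ Δ, ∃ D : ℂ →L[ℝ] H, HasFDerivAt (γ k) D z ∧ D 1 = γ (k + 1) z)
    (heig : ∀ z ∈ Δ, T (γ 0 z) = op ((z : ℍ[ℝ])) • γ 0 z) :
    ∀ k, ∀ z ∈ Δ, T (γ k z) = op ((z : ℍ[ℝ])) • γ k z + (k : ℝ) • γ (k - 1) z := by
  intro k
  induction k with
  | zero => intro z hz; simpa using heig z hz
  | succ k IH =>
    intro z hz
    obtain ⟨D, hD, hD1⟩ := hg k z hz
    obtain ⟨D', hD', hD'1⟩ := hg (k - 1) z hz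
    obtain ⟨E, hE, hE1⟩ := hasFDerivAt_opsmul hcont hlinR hreal hD
    have hR : HasFDerivAt (fun w : ℂ => op ((w : ℍ[ℝ])) • γ k w + (k : ℝ) • γ (k - 1) w)
        (E + (k : ℝ) • D') z := hE.add (hD'.const_smul (k : ℝ))
    have hL : HasFDerivAt (fun w => TCLM hreal T hTcont (γ k w))
        ((TCLM hreal T hTcont).comp D) z := (TCLM hreal T hTcont).hasFDerivAt.comp z hD
    have heqf : (fun w => TCLM hreal T hTcont (γ k w))
        =ᶠ[nhds z] (fun w : ℂ => op ((w : ℍ[ℝ])) • γ k w + (k : ℝ) • γ (k - 1) w) := by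
      filter_upwards [hΔ.mem_nhds hz] with w hw
      simpa using IH w hw
    have hL' : HasFDerivAt (fun w : ℂ => op ((w : ℍ[ℝ])) • γ k w + (k : ℝ) • γ (k - 1) w)
        ((TCLM hreal T hTcont).comp D) z := hL.congr_of_eventuallyEq heqf.symm
    have hEq := hL'.unique hR
    have hk1 : ((TCLM hreal T hTcont).comp D) 1 = E 1 + (k : ℝ) • D' 1 := by rw [hEq]; simp
    simp only [ContinuousLinearMap.comp_apply, TCLM_apply, hD1, hE1] at hk1
    have hD'k : (k : ℝ) • D' 1 = (k : ℝ) • γ k z := by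
      cases k with
      | zero => simp
      | succ m => rw [hD'1]; norm_num
    rw [hD'k] at hk1
    simp only [Nat.add_sub_cancel]
    rw [hk1]
    push_cast
    rw [add_smul, one_smul]
    abel
end Aux2

section Aux3
variable {H : Type*} [NormedAddCommGroup H] [NormedSpace ℝ H] [Module ℍ[ℝ]ᵐᵒᵖ H]
variable (hlinR : ∀ (a : ℍ[ℝ]) (r : ℝ) (x : H), op a • (r • x) = r • (op a • x))
variable (hreal : ∀ (r : ℝ) (x : H), op ((r : ℍ[ℝ])) • x = r • x)

theorem aux_sM' (a b : ℍ[ℝ]) (x : H) : op a • (op b • x) = op (b * a) • x := by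
  rw [op_mul, mul_smul]

/-- The operator `Q_{ω₀}(T)`. -/
noncomputable def Qop (T : H →ₗ[ℍ[ℝ]ᵐᵒᵖ] H) (ω₀ : ℂ) (x : H) : H :=
  T (T x) - op ((2 * ω₀.re : ℝ) : ℍ[ℝ]) • T x + op ((‖ω₀‖ ^ 2 : ℝ) : ℍ[ℝ]) • x

variable (T : H →ₗ[ℍ[ℝ]ᵐᵒᵖ] H) (ω₀ : ℂ)

theorem Q_add (x y : H) : Qop T ω₀ (x + y) = Qop T ω₀ x + Qop T ω₀ y := by
  simp only [Qop, map_add, smul_add]; abel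

theorem Q_zero : Qop T ω₀ 0 = 0 := by simp [Qop]

theorem Q_opsmul (a : ℍ[ℝ]) (x : H) : Qop T ω₀ (op a • x) = op a • Qop T ω₀ x := by
  simp only [Qop, map_smul, smul_sub, smul_add, aux_sM']
  rw [Quaternion.coe_commutes, Quaternion.coe_commutes]

include hlinR hreal in
theorem Q_rsmul (r : ℝ) (x : H) : Qop T ω₀ (r • x) = r • Qop T ω₀ x := by
  have Tr : ∀ y : H, T (r • y) = r • T y := fun y => by rw [← hreal, map_smul, hreal]
  simp only [Qop, Tr, hlinR, smul_sub, smul_add]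

theorem Qiter_zero (m : ℕ) : (Qop T ω₀)^[m] 0 = 0 := by
  induction m with
  | zero => rfl
  | succ m IH => rw [Function.iterate_succ_apply, Q_zero, IH]

theorem Qiter_add (m : ℕ) (x y : H) :
    (Qop T ω₀)^[m] (x + y) = (Qop T ω₀)^[m] x + (Qop T ω₀)^[m] y := by
  induction m generalizing x y with
  | zero => rfl
  | succ m IH => rw [Function.iterate_succ_apply, Q_add, IH, Function.iterate_succ_apply,
      Function.iterate_succ_apply]

theorem Qiter_opsmul (m : ℕ) (a : ℍ[ℝ]) (x : H) :
    (Qop T ω₀)^[m] (op a • x) = op a • (Qop T ω₀)^[m] x := by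
  induction m generalizing x with
  | zero => rfl
  | succ m IH => rw [Function.iterate_succ_apply, Q_opsmul, IH, Function.iterate_succ_apply]

include hlinR hreal in
theorem Qiter_rsmul (m : ℕ) (r : ℝ) (x : H) :
    (Qop T ω₀)^[m] (r • x) = r • (Qop T ω₀)^[m] x := by
  induction m generalizing x with
  | zero => rfl
  | succ m IH => rw [Function.iterate_succ_apply, Q_rsmul hlinR hreal, IH,
      Function.iterate_succ_apply]

include hlinR hreal in
/-- The key recurrence: `Q v_j = 2j ν • v_{j-1} + j(j-1) v_{j-2}` where `ν = ω₀ - Re ω₀`. -/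
theorem Q_v (v : ℕ → H)
    (hv : ∀ j, T (v j) = op ((ω₀ : ℍ[ℝ])) • v j + (j : ℝ) • v (j - 1)) (j : ℕ) :
    Qop T ω₀ (v j) = ((2 * j : ℕ) : ℝ) • (op (((ω₀ - (ω₀.re : ℂ) : ℂ)) : ℍ[ℝ]) • v (j - 1))
      + ((j * (j - 1) : ℕ) : ℝ) • v (j - 2) := by
  have Tr : ∀ (r : ℝ) (y : H), T (r • y) = r • T y := fun r y => by rw [← hreal, map_smul, hreal]
  have hT2 : T (v (j - 1)) = op ((ω₀ : ℍ[ℝ])) • v (j - 1) + ((j - 1 : ℕ) : ℝ) • v (j - 2) := by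
    have h := hv (j - 1)
    rwa [show j - 1 - 1 = j - 2 by omega] at h
  have hTT : T (T (v j)) = op (((ω₀ * ω₀ : ℂ)) : ℍ[ℝ]) • v j
      + (2 * (j : ℝ)) • (op ((ω₀ : ℍ[ℝ])) • v (j - 1))
      + ((j : ℝ) * ((j - 1 : ℕ) : ℝ)) • v (j - 2) := by
    calc T (T (v j)) = op ((ω₀ : ℍ[ℝ])) • T (v j) + (j : ℝ) • T (v (j - 1)) := by
          conv_lhs => rw [hv j]
          rw [map_add, map_smul, Tr]
      _ = op ((ω₀ : ℍ[ℝ])) • (op ((ω₀ : ℍ[ℝ])) • v j)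
            + (j : ℝ) • (op ((ω₀ : ℍ[ℝ])) • v (j - 1))
            + ((j : ℝ) • (op ((ω₀ : ℍ[ℝ])) • v (j - 1))
            + (j : ℝ) • (((j - 1 : ℕ) : ℝ) • v (j - 2))) := by
          conv_lhs => rw [hv j, hT2]
          rw [smul_add, smul_add, hlinR]
      _ = _ := by
          rw [aux_sM', ← Quaternion.coeComplex_mul, smul_smul, two_mul, add_smul]
          abel
  have hmid : op ((2 * ω₀.re : ℝ) : ℍ[ℝ]) • T (v j)
      = op (((ω₀ * ((2 * ω₀.re : ℝ) : ℂ) : ℂ)) : ℍ[ℝ]) • v j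
        + ((2 * ω₀.re) * (j : ℝ)) • v (j - 1) := by
    have t1 : op ((2 * ω₀.re : ℝ) : ℍ[ℝ]) • (op ((ω₀ : ℍ[ℝ])) • v j)
        = op (((ω₀ * ((2 * ω₀.re : ℝ) : ℂ) : ℂ)) : ℍ[ℝ]) • v j := by
      rw [aux_sM', ← Quaternion.coeComplex_coe (2 * ω₀.re), ← Quaternion.coeComplex_mul]
    have t2 : op ((2 * ω₀.re : ℝ) : ℍ[ℝ]) • ((j : ℝ) • v (j - 1))
        = ((2 * ω₀.re) * (j : ℝ)) • v (j - 1) := by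
      rw [hlinR, hreal, smul_smul, mul_comm]
    rw [hv j, smul_add, t1, t2]
  have hq : (((ω₀ * ω₀ : ℂ)) : ℍ[ℝ]) - (((ω₀ * ((2 * ω₀.re : ℝ) : ℂ) : ℂ)) : ℍ[ℝ])
      + ((((‖ω₀‖ ^ 2 : ℝ) : ℂ)) : ℍ[ℝ]) = 0 := by
    have hs : (ω₀ * ω₀ - ω₀ * ((2 * ω₀.re : ℝ) : ℂ) + ((‖ω₀‖ ^ 2 : ℝ) : ℂ) : ℂ) = 0 := by
      rw [show ‖ω₀‖ ^ 2 = ω₀.re ^ 2 + ω₀.im ^ 2 by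
        rw [Complex.sq_norm, Complex.normSq_apply]; ring]
      apply Complex.ext <;>
        simp [Complex.ofReal_pow, Complex.add_im, Complex.add_re, pow_two] <;> ring
    calc (((ω₀ * ω₀ : ℂ)) : ℍ[ℝ]) - (((ω₀ * ((2 * ω₀.re : ℝ) : ℂ) : ℂ)) : ℍ[ℝ])
          + ((((‖ω₀‖ ^ 2 : ℝ) : ℂ)) : ℍ[ℝ])
        = (((ω₀ * ω₀ - ω₀ * ((2 * ω₀.re : ℝ) : ℂ) + ((‖ω₀‖ ^ 2 : ℝ) : ℂ) : ℂ)) : ℍ[ℝ]) := by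
          rw [show (((ω₀ * ω₀ : ℂ)) : ℍ[ℝ]) - (((ω₀ * ((2 * ω₀.re : ℝ) : ℂ) : ℂ)) : ℍ[ℝ])
              = (((ω₀ * ω₀ - ω₀ * ((2 * ω₀.re : ℝ) : ℂ) : ℂ)) : ℍ[ℝ]) from
            (map_sub Quaternion.ofComplex _ _).symm]
          exact (map_add Quaternion.ofComplex _ _).symm
      _ = 0 := by rw [hs]; exact Quaternion.coeComplex_zero
  have hzero : op (((ω₀ * ω₀ : ℂ)) : ℍ[ℝ]) • v j
      - op (((ω₀ * ((2 * ω₀.re : ℝ) : ℂ) : ℂ)) : ℍ[ℝ]) • v j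
      + op ((‖ω₀‖ ^ 2 : ℝ) : ℍ[ℝ]) • v j = (0 : H) := by
    rw [← Quaternion.coeComplex_coe (‖ω₀‖ ^ 2), ← sub_smul, ← add_smul, ← op_sub, ← op_add, hq,
      op_zero, zero_smul]
  have hν : op (((ω₀ - (ω₀.re : ℂ) : ℂ)) : ℍ[ℝ]) • v (j - 1)
      = op ((ω₀ : ℍ[ℝ])) • v (j - 1) - ω₀.re • v (j - 1) := by
    rw [show (((ω₀ - (ω₀.re : ℂ) : ℂ)) : ℍ[ℝ]) = (ω₀ : ℍ[ℝ]) - ((ω₀.re : ℝ) : ℍ[ℝ]) from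
        map_sub Quaternion.ofComplex _ _,
      op_sub, sub_smul, hreal]
  have c1 : ((2 * j : ℕ) : ℝ) = 2 * (j : ℝ) := by push_cast; ring
  have c3 : ((j * (j - 1) : ℕ) : ℝ) = (j : ℝ) * ((j - 1 : ℕ) : ℝ) := by
    rw [Nat.cast_mul]
  calc Qop T ω₀ (v j)
      = (op (((ω₀ * ω₀ : ℂ)) : ℍ[ℝ]) • v j
          - op (((ω₀ * ((2 * ω₀.re : ℝ) : ℂ) : ℂ)) : ℍ[ℝ]) • v j
          + op ((‖ω₀‖ ^ 2 : ℝ) : ℍ[ℝ]) • v j)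
        + ((2 * (j : ℝ)) • (op ((ω₀ : ℍ[ℝ])) • v (j - 1))
          - ((2 * ω₀.re) * (j : ℝ)) • v (j - 1)
          + ((j : ℝ) * ((j - 1 : ℕ) : ℝ)) • v (j - 2)) := by
        simp only [Qop]; rw [hTT, hmid]; abel
    _ = (2 * (j : ℝ)) • (op ((ω₀ : ℍ[ℝ])) • v (j - 1))
          - ((2 * ω₀.re) * (j : ℝ)) • v (j - 1)
          + ((j : ℝ) * ((j - 1 : ℕ) : ℝ)) • v (j - 2) := by rw [hzero, zero_add]
    _ = _ := by
        rw [hν, smul_sub, c1, c3, smul_smul]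
        rw [show 2 * (j : ℝ) * ω₀.re = 2 * ω₀.re * (j : ℝ) by ring]
end Aux3

section Aux4
variable {H : Type*} [NormedAddCommGroup H] [NormedSpace ℝ H] [Module ℍ[ℝ]ᵐᵒᵖ H]
variable (hlinR : ∀ (a : ℍ[ℝ]) (r : ℝ) (x : H), op a • (r • x) = r • (op a • x))
variable (hreal : ∀ (r : ℝ) (x : H), op ((r : ℍ[ℝ])) • x = r • x)
variable (T : H →ₗ[ℍ[ℝ]ᵐᵒᵖ] H) (ω₀ : ℂ)

include hlinR hreal in
theorem Q_ker (v : ℕ → H)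
    (hv : ∀ j, T (v j) = op ((ω₀ : ℍ[ℝ])) • v j + (j : ℝ) • v (j - 1)) :
    ∀ j m, j < m → (Qop T ω₀)^[m] (v j) = 0 := by
  intro j
  induction j using Nat.strong_induction_on with
  | _ j IH =>
    intro m hm
    obtain ⟨m', rfl⟩ : ∃ m', m = m' + 1 := ⟨m - 1, by omega⟩
    rw [Function.iterate_succ_apply, Q_v hlinR hreal T ω₀ v hv]
    cases j with
    | zero => simp [Qiter_zero]
    | succ j' =>
      rw [Qiter_add, Qiter_rsmul hlinR hreal, Qiter_rsmul hlinR hreal, Qiter_opsmul,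
        show j' + 1 - 1 = j' from rfl, show j' + 1 - 2 = j' - 1 by omega,
        IH j' (by omega) m' (by omega), IH (j' - 1) (by omega) m' (by omega)]
      simp

include hlinR hreal in
theorem Q_top (v : ℕ → H)
    (hv : ∀ j, T (v j) = op ((ω₀ : ℍ[ℝ])) • v j + (j : ℝ) • v (j - 1)) :
    ∀ j, (Qop T ω₀)^[j] (v j) = ((2 ^ j * j.factorial : ℕ) : ℝ) •
      (op ((((ω₀ - (ω₀.re : ℂ)) ^ j : ℂ)) : ℍ[ℝ]) • v 0) := by
  intro j
  induction j with
  | zero => simp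
  | succ j IH =>
    rw [Function.iterate_succ_apply, Q_v hlinR hreal T ω₀ v hv,
      show j + 1 - 1 = j from rfl,
      Qiter_add, Qiter_rsmul hlinR hreal, Qiter_rsmul hlinR hreal, Qiter_opsmul, IH]
    have h2 : (((j + 1) * j : ℕ) : ℝ) • (Qop T ω₀)^[j] (v (j + 1 - 2)) = 0 := by
      cases j with
      | zero => norm_num
      | succ j' =>
        rw [show j' + 1 + 1 - 2 = j' from by omega,
          Q_ker hlinR hreal T ω₀ v hv j' (j' + 1) (by omega)]
        simp
    rw [h2, add_zero, hlinR, aux_sM', ← Quaternion.coeComplex_mul, ← pow_succ, smul_smul]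
    congr 1
    push_cast [Nat.factorial_succ]
    ring
end Aux4

/-- If `γ₁, …, γ_n` (given with their iterated derivative families
`g i k`) are right holomorphic eigen-sections of `T` on `Δ`, and the values
`γ₁(ω₀), …, γ_n(ω₀)` at a point `ω₀ ∈ Δ` with `Im ω₀ ≠ 0` are right `ℍ`-linearly
independent, then for every `k ≥ 1` the `n·k` vectors `γᵢ⁽ʲ⁾(ω₀)` (`0 ≤ j ≤ k−1`) are
right `ℍ`-linearly independent and all lie in `ker (Q_{ω₀}(T))^k`. -/
theorem rightHolomorphic_frame_derivatives_independent {H : Type*} [NormedAddCommGroup H]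
    [NormedSpace ℝ H] [Module ℍ[ℝ]ᵐᵒᵖ H]
    (hcont : ∀ a : ℍ[ℝ], Continuous fun x : H => op a • x)
    (hlinR : ∀ (a : ℍ[ℝ]) (r : ℝ) (x : H), op a • (r • x) = r • (op a • x))
    (hreal : ∀ (r : ℝ) (x : H), op ((r : ℍ[ℝ])) • x = r • x)
    (Δ : Set ℂ) (hΔ : IsOpen Δ)
    (T : H →ₗ[ℍ[ℝ]ᵐᵒᵖ] H) (hTcont : Continuous T)
    (n : ℕ) (g : Fin n → ℕ → ℂ → H)
    (hg : ∀ (i : Fin n) (k : ℕ), ∀ z ∈ Δ, ∃ D : ℂ →L[ℝ] H, HasFDerivAt (g i k) D z ∧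
      D 1 = g i (k + 1) z ∧ D Complex.I = op ((Complex.I : ℂ) : ℍ[ℝ]) • g i (k + 1) z)
    (heig : ∀ (i : Fin n), ∀ ω ∈ Δ, T (g i 0 ω) = op ((ω : ℍ[ℝ])) • g i 0 ω)
    (ω₀ : ℂ) (hω₀ : ω₀ ∈ Δ) (him : ω₀.im ≠ 0)
    (hind : ∀ a : Fin n → ℍ[ℝ], (∑ i, op (a i) • g i 0 ω₀) = 0 → ∀ i, a i = 0) :
    ∀ k : ℕ, 1 ≤ k →
      (∀ a : Fin n → Fin k → ℍ[ℝ],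
        (∑ i, ∑ j, op (a i j) • g i (j : ℕ) ω₀) = 0 → ∀ i j, a i j = 0) ∧
      (∀ (i : Fin n) (j : Fin k),
        (fun x : H => T (T x) - op ((2 * ω₀.re : ℝ) : ℍ[ℝ]) • T x
          + op ((‖ω₀‖ ^ 2 : ℝ) : ℍ[ℝ]) • x)^[k] (g i (j : ℕ) ω₀) = 0) := by
  intro k hk
  have Tg : ∀ (i : Fin n) (j : ℕ),
      T (g i j ω₀) = op ((ω₀ : ℍ[ℝ])) • g i j ω₀ + (j : ℝ) • g i (j - 1) ω₀ := fun i j =>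
    Tg_rec hcont hlinR hreal Δ hΔ T hTcont (fun m => g i m)
      (fun m z hz => (hg i m z hz).imp fun D hD => ⟨hD.1, hD.2.1⟩) (heig i) j ω₀ hω₀
  have hν0 : (ω₀ - (ω₀.re : ℂ)) ≠ 0 := fun h => him (by simpa using congrArg Complex.im h)
  have hcoe_inj : ∀ c : ℂ, (c : ℍ[ℝ]) = 0 → c = 0 := by
    intro c h
    apply Complex.ext
    · simpa using congrArg QuaternionAlgebra.re h
    · simpa using congrArg QuaternionAlgebra.imI h
  have hQshow : (fun x : H => T (T x) - op ((2 * ω₀.re : ℝ) : ℍ[ℝ]) • T x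
      + op ((‖ω₀‖ ^ 2 : ℝ) : ℍ[ℝ]) • x) = Qop T ω₀ := rfl
  have hsum : ∀ (m : ℕ) {ι : Type} (s : Finset ι) (u : ι → H),
      (Qop T ω₀)^[m] (∑ i ∈ s, u i) = ∑ i ∈ s, (Qop T ω₀)^[m] (u i) := by
    intro m ι s u
    classical
    induction s using Finset.induction with
    | empty => simpa using Qiter_zero T ω₀ m
    | insert _ _ hni IH =>
      rw [Finset.sum_insert hni, Qiter_add, IH, Finset.sum_insert hni]
  constructor
  · -- linear independence
    have main : ∀ K : ℕ, ∀ a : Fin n → Fin K → ℍ[ℝ],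
        (∑ i, ∑ j, op (a i j) • g i (j : ℕ) ω₀) = 0 → ∀ i j, a i j = 0 := by
      intro K
      induction K with
      | zero => exact fun a _ i j => absurd j.2 (by omega)
      | succ K IH =>
        intro a ha
        have h0 : ∑ i, ∑ j : Fin (K + 1),
            op (a i j) • (Qop T ω₀)^[K] (g i (j : ℕ) ω₀) = 0 := by
          have h := congrArg (Qop T ω₀)^[K] ha
          rw [Qiter_zero, hsum] at h
          simp_rw [hsum, Qiter_opsmul] at h
          exact h
        have h2 : ∀ i : Fin n, ∑ j : Fin (K + 1),
            op (a i j) • (Qop T ω₀)^[K] (g i (j : ℕ) ω₀)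
            = ((2 ^ K * K.factorial : ℕ) : ℝ) •
              (op (a i (Fin.last K)) • (op ((((ω₀ - (ω₀.re : ℂ)) ^ K : ℂ)) : ℍ[ℝ]) • g i 0 ω₀)) := by
          intro i
          rw [Fin.sum_univ_castSucc]
          have hz : ∀ j : Fin K,
              op (a i j.castSucc) • (Qop T ω₀)^[K] (g i ((j.castSucc : ℕ)) ω₀) = 0 := by
            intro j
            rw [Fin.coe_castSucc,
              Q_ker hlinR hreal T ω₀ (fun m => g i m ω₀) (Tg i) j K j.isLt, smul_zero]
          rw [Finset.sum_eq_zero fun j _ => hz j, zero_add, Fin.val_last,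
            Q_top hlinR hreal T ω₀ (fun m => g i m ω₀) (Tg i) K, hlinR]
        rw [Finset.sum_congr rfl fun i _ => h2 i, ← Finset.smul_sum] at h0
        have hck : ((2 ^ K * K.factorial : ℕ) : ℝ) ≠ 0 := by
          refine Nat.cast_ne_zero.mpr ?_
          positivity
        have h3 : ∑ i, op (a i (Fin.last K))
            • (op ((((ω₀ - (ω₀.re : ℂ)) ^ K : ℂ)) : ℍ[ℝ]) • g i 0 ω₀) = 0 :=
          (smul_eq_zero.mp h0).resolve_left hck
        simp_rw [aux_sM'] at h3
        have h5 := hind _ h3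
        have hνk : ((((ω₀ - (ω₀.re : ℂ)) ^ K : ℂ)) : ℍ[ℝ]) ≠ 0 := fun h =>
          pow_ne_zero K hν0 (hcoe_inj _ h)
        have hlast : ∀ i, a i (Fin.last K) = 0 := fun i => by
          rcases mul_eq_zero.mp (h5 i) with h | h
          · exact absurd h hνk
          · exact h
        have ha' : ∑ i, ∑ j : Fin K, op (a i j.castSucc) • g i ((j.castSucc : ℕ)) ω₀ = 0 := by
          have hinner : ∀ i : Fin n, ∑ j : Fin (K + 1), op (a i j) • g i (j : ℕ) ω₀
              = ∑ j : Fin K, op (a i j.castSucc) • g i ((j.castSucc : ℕ)) ω₀ := by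
            intro i
            rw [Fin.sum_univ_castSucc, hlast i, op_zero, zero_smul, add_zero]
          rw [← Finset.sum_congr rfl fun i _ => hinner i]
          exact ha
        have hcast := IH (fun i j => a i j.castSucc) (by simpa using ha')
        intro i j
        induction j using Fin.lastCases with
        | last => exact hlast i
        | cast j => exact hcast i j
    exact main k
  · intro i j
    rw [hQshow]
    exact Q_ker hlinR hreal T ω₀ (fun m => g i m ω₀) (Tg i) (j : ℕ) k j.isLt
end

section
/- Let Δ ⊆ ℂ be open and H a real normed space carrying a compatible right quaternionic module structure (as in the context). Let γ : Δ → H be right holomorphic with γ(ω) ≠ 0 for all ω ∈ Δ, let f : Δ → ℂ be Fréchet differentiable over ℝ, and suppose the map γ̃ : Δ → H defined by γ̃(ω) = γ(ω)•f(ω) is right holomorphic. Then f is holomorphic on Δ. (Two right holomorphic frames of a one-dimensional Hermitian right holomorphic quaternionic vector bundle differ by a complex-valued holomorphic function.) -/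
open Quaternion MulOpposite

/-- If `γ : Δ → H` is right holomorphic and nowhere vanishing on the
open set `Δ`, `f : Δ → ℂ` is ℝ-Fréchet differentiable, and `ω ↦ γ(ω) • f(ω)` is right
holomorphic, then `f` is holomorphic on `Δ`. -/
theorem frame_transition_is_holomorphic {H : Type*} [NormedAddCommGroup H]
    [NormedSpace ℝ H] [Module ℍ[ℝ]ᵐᵒᵖ H]
    (hcont : ∀ a : ℍ[ℝ], Continuous fun x : H => op a • x)
    (hlinR : ∀ (a : ℍ[ℝ]) (r : ℝ) (x : H), op a • (r • x) = r • (op a • x))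
    (hreal : ∀ (r : ℝ) (x : H), op ((r : ℍ[ℝ])) • x = r • x)
    (Δ : Set ℂ) (hΔ : IsOpen Δ)
    (γ : ℂ → H)
    (hγ : ∀ z ∈ Δ, ∃ D : ℂ →L[ℝ] H, HasFDerivAt γ D z ∧
      D Complex.I = op ((Complex.I : ℂ) : ℍ[ℝ]) • D 1)
    (hγ0 : ∀ z ∈ Δ, γ z ≠ 0)
    (f : ℂ → ℂ) (hf : ∀ z ∈ Δ, DifferentiableAt ℝ f z)
    (hγf : ∀ z ∈ Δ, ∃ D : ℂ →L[ℝ] H,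
      HasFDerivAt (fun ω : ℂ => op ((f ω : ℍ[ℝ])) • γ ω) D z ∧
      D Complex.I = op ((Complex.I : ℂ) : ℍ[ℝ]) • D 1) :
    ∀ z ∈ Δ, DifferentiableAt ℂ f z := by
  set i : ℍ[ℝ] := ((Complex.I : ℂ) : ℍ[ℝ]) with hi
  -- decompose the action of a complex scalar
  have key : ∀ (v : ℂ) (x : H),
      op ((v : ℍ[ℝ])) • x = v.re • x + v.im • (op i • x) := by
    intro v x
    have h1 : (v : ℍ[ℝ]) = ((v.re : ℝ) : ℍ[ℝ]) + ((v.im : ℝ) : ℍ[ℝ]) * i := by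
      ext <;> simp [hi]
    rw [h1, op_add, add_smul, hreal, op_mul, mul_smul, hreal, hlinR]
  -- op i • op i = -1
  have hII : ∀ x : H, op i • (op i • x) = -x := by
    intro x
    have h1 : i * i = (((-1 : ℝ) : ℍ[ℝ])) := by
      ext <;> simp [hi]
    rw [← mul_smul, ← op_mul, h1, hreal, neg_one_smul]
  -- cancellation
  have hcancel : ∀ (a : ℍ[ℝ]) (x : H), a ≠ 0 → op a • x = 0 → x = 0 := by
    intro a x ha h
    have : op (a⁻¹) • (op a • x) = x := by
      rw [← mul_smul, ← op_mul, mul_inv_cancel₀ ha, op_one, one_smul]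
    rw [h, smul_zero] at this
    exact this.symm
  -- J : H →L[ℝ] H, x ↦ op i • x
  let J : H →L[ℝ] H :=
    { toFun := fun x => op i • x
      map_add' := fun x y => smul_add _ x y
      map_smul' := fun r x => hlinR i r x
      cont := hcont i }
  intro z hz
  obtain ⟨Dγ, hDγ, hDγI⟩ := hγ z hz
  obtain ⟨D', hD', hD'I⟩ := hγf z hz
  have hDf : HasFDerivAt f (fderiv ℝ f z) z := (hf z hz).hasFDerivAt
  set Df := fderiv ℝ f z with hDfdef
  -- derivative of the product
  have hre : HasFDerivAt (fun ω => (f ω).re) (Complex.reCLM.comp Df) z :=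
    (Complex.reCLM.hasFDerivAt).comp z hDf
  have him : HasFDerivAt (fun ω => (f ω).im) (Complex.imCLM.comp Df) z :=
    (Complex.imCLM.hasFDerivAt).comp z hDf
  have hJγ : HasFDerivAt (fun ω => J (γ ω)) (J.comp Dγ) z :=
    (J.hasFDerivAt).comp z hDγ
  have hF : HasFDerivAt (fun ω : ℂ => op ((f ω : ℍ[ℝ])) • γ ω)
      (((f z).re • Dγ + (Complex.reCLM.comp Df).smulRight (γ z)) +
       ((f z).im • (J.comp Dγ) + (Complex.imCLM.comp Df).smulRight (J (γ z)))) z := by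
    have funeq : (fun ω : ℂ => op ((f ω : ℍ[ℝ])) • γ ω)
        = fun ω => (f ω).re • γ ω + (f ω).im • J (γ ω) := by
      funext ω; exact key (f ω) (γ ω)
    rw [funeq]
    exact (hre.smul hDγ).add (him.smul hJγ)
  have hED : D' = ((f z).re • Dγ + (Complex.reCLM.comp Df).smulRight (γ z)) +
       ((f z).im • (J.comp Dγ) + (Complex.imCLM.comp Df).smulRight (J (γ z))) :=
    hD'.unique hF
  -- evaluate the CR equation for the product at I and 1
  have hJe : ∀ x : H, J x = op i • x := fun _ => rfl
  have hCRq : op ((((Df Complex.I - Complex.I * Df 1) : ℂ) : ℍ[ℝ])) • γ z = 0 := by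
    have h1 := hD'I
    rw [hED] at h1
    simp only [ContinuousLinearMap.add_apply, ContinuousLinearMap.smul_apply,
      ContinuousLinearMap.smulRight_apply, ContinuousLinearMap.coe_comp', Function.comp_apply,
      Complex.reCLM_apply, Complex.imCLM_apply] at h1
    -- h1 : (f z).re • Dγ I + (Df I).re • γ z + ((f z).im • J (Dγ I) + (Df I).im • J (γ z))
    --   = op i • (...)
    rw [key (Df Complex.I - Complex.I * Df 1) (γ z)]
    have expand : op i • ((f z).re • Dγ 1 + (Df 1).re • γ z +
        ((f z).im • J (Dγ 1) + (Df 1).im • J (γ z)))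
        = (f z).re • (op i • Dγ 1) + (Df 1).re • (op i • γ z) +
          ((f z).im • (op i • (op i • Dγ 1)) + (Df 1).im • (op i • (op i • γ z))) := by
      rw [smul_add, smul_add, smul_add, hlinR, hlinR, hlinR, hlinR]
      rfl
    rw [expand, hDγI, hJe, hJe] at h1
    rw [hII, hII] at h1
    -- now h1 is an equation in H; rearrange
    have hre' : (Df Complex.I - Complex.I * Df 1).re = (Df Complex.I).re + (Df 1).im := by
      simp [Complex.sub_re, Complex.mul_re]
    have him' : (Df Complex.I - Complex.I * Df 1).im = (Df Complex.I).im - (Df 1).re := by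
      simp [Complex.sub_im, Complex.mul_im]
    rw [hre', him']
    have h3 : ((f z).re • (op i • Dγ 1) + (Df Complex.I).re • γ z +
        ((f z).im • -Dγ 1 + (Df Complex.I).im • (op i • γ z))) -
        ((f z).re • (op i • Dγ 1) + (Df 1).re • (op i • γ z) +
          ((f z).im • -Dγ 1 + (Df 1).im • -γ z)) = 0 := sub_eq_zero.mpr h1
    rw [add_smul, sub_smul, ← h3]
    simp only [smul_neg]
    abel
  -- conclude CR: Df I = I * Df 1
  have hCR : Df Complex.I = Complex.I * Df 1 := by
    by_contra hne
    have hw : (Df Complex.I - Complex.I * Df 1 : ℂ) ≠ 0 := sub_ne_zero.mpr hne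
    have hne' : ((Df Complex.I - Complex.I * Df 1 : ℂ) : ℍ[ℝ]) ≠ 0 := by
      intro h0
      apply hw
      have hr := congrArg QuaternionAlgebra.re h0
      have hii := congrArg QuaternionAlgebra.imI h0
      exact Complex.ext (by simpa using hr) (by simpa using hii)
    exact hγ0 z hz (hcancel _ _ hne' hCRq)
  -- build the complex-linear derivative
  rw [differentiableAt_iff_restrictScalars ℝ (hf z hz)]
  refine ⟨(1 : ℂ →L[ℂ] ℂ).smulRight (Df 1), ?_⟩
  ext v
  show v • Df 1 = Df v
  have hv : v = v.re • (1 : ℂ) + v.im • Complex.I := by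
    simp [Complex.real_smul, Complex.re_add_im]
  calc v • Df 1 = Df (v.re • (1 : ℂ) + v.im • Complex.I) := by
        rw [map_add, map_smul, map_smul, hCR]
        simp only [smul_eq_mul, Complex.real_smul]
        conv_lhs => rw [← Complex.re_add_im v]
        ring
    _ = Df v := by rw [← hv]
end

section
/- Define operators T and T̃ on ℓ²(ℕ, ℍ) by: (Tx)₀ = 𝐢·x₀ + (1+2𝐣𝐢)·x₁ + (1+𝐣)·x₂ and (Tx)_n = 𝐢·x_n + x_{n+1} for n ≥ 1; (T̃x)₀ = 𝐢·x₀ + (1/2 − (1/2)𝐣)·x₁ + x₂, (T̃x)₁ = (𝐣𝐢)·x₁ + (1+𝐣)·x₂, and (T̃x)_n = 𝐢·x_n + x_{n+1} for n ≥ 2 (all coefficients multiplied on the left). Then: (1) for every ω ∈ ℂ with |ω − 𝐢| < 1, ‖γ(ω)‖ = ‖γ̃(ω)‖, where γ(ω) = (1+(1+𝐣)(ω−𝐢), (ω−𝐢), (ω−𝐢)², (ω−𝐢)³, …) and γ̃(ω) = (1+(ω−𝐢), (1+𝐣)(ω−𝐢), (ω−𝐢)², (ω−𝐢)³, …) are the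 respective right holomorphic frames (so the associated bundles have the same curvature); and (2) there is no surjective right ℍ-linear isometry U of ℓ²(ℕ, ℍ) with U∘T = T̃∘U, i.e. T and T̃ are not quaternion unitarily equivalent. -/
open Quaternion MulOpposite

/-- The quaternion imaginary unit `𝐢`. -/
def qI : ℍ[ℝ] := ⟨0, 1, 0, 0⟩

/-- The quaternion imaginary unit `𝐣`. -/
def qJ : ℍ[ℝ] := ⟨0, 0, 1, 0⟩

@[simp] lemma qI_re : qI.re = 0 := rfl
@[simp] lemma qI_imI : qI.imI = 1 := rfl
@[simp] lemma qI_imJ : qI.imJ = 0 := rfl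
@[simp] lemma qI_imK : qI.imK = 0 := rfl
@[simp] lemma qJ_re : qJ.re = 0 := rfl
@[simp] lemma qJ_imI : qJ.imI = 0 := rfl
@[simp] lemma qJ_imJ : qJ.imJ = 1 := rfl
@[simp] lemma qJ_imK : qJ.imK = 0 := rfl


lemma q_norm_sq (a : ℍ[ℝ]) : ‖a‖ ^ (2:ℝ) = a.re^2 + a.imI^2 + a.imJ^2 + a.imK^2 := by
  rw [Real.rpow_two, sq, ← Quaternion.normSq_eq_norm_mul_self, Quaternion.normSq_def']

lemma lp_norm_sq (f : lp (fun _ : ℕ => ℍ[ℝ]) 2) :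
    ‖f‖ ^ (2:ℝ) = ∑' n, ‖(f : ∀ _ : ℕ, ℍ[ℝ]) n‖ ^ (2:ℝ) := by
  have := lp.norm_rpow_eq_tsum (p := 2) (E := fun _ : ℕ => ℍ[ℝ]) (by norm_num) f
  simpa using this

lemma lp_summable (f : lp (fun _ : ℕ => ℍ[ℝ]) 2) :
    Summable fun n => ‖(f : ∀ _ : ℕ, ℍ[ℝ]) n‖ ^ (2:ℝ) := by
  have := (lp.memℓp f).summable (p := 2) (by norm_num)
  simpa using this

lemma norm_eq_of_sq_eq {a b : ℝ} (ha : 0 ≤ a) (hb : 0 ≤ b) (h : a ^ (2:ℝ) = b ^ (2:ℝ)) :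
    a = b := by
  rw [Real.rpow_two, Real.rpow_two] at h
  nlinarith

lemma part1 : (∀ ω : ℂ, ‖ω - Complex.I‖ < 1 →
      ∀ u v : lp (fun _ : ℕ => ℍ[ℝ]) 2,
        ((u : ∀ _ : ℕ, ℍ[ℝ]) 0 = 1 + (1 + qJ) * ((ω : ℍ[ℝ]) - qI)) →
        (∀ n : ℕ, 1 ≤ n → u n = ((ω : ℍ[ℝ]) - qI) ^ n) →
        ((v : ∀ _ : ℕ, ℍ[ℝ]) 0 = 1 + ((ω : ℍ[ℝ]) - qI)) →
        (v 1 = (1 + qJ) * ((ω : ℍ[ℝ]) - qI)) →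
        (∀ n : ℕ, 2 ≤ n → v n = ((ω : ℍ[ℝ]) - qI) ^ n) →
        ‖u‖ = ‖v‖) := by
  intro ω hω u v hu0 hun hv0 hv1 hvn
  refine norm_eq_of_sq_eq (norm_nonneg u) (norm_nonneg v) ?_
  rw [lp_norm_sq, lp_norm_sq]
  rw [← Summable.sum_add_tsum_nat_add 2 (lp_summable u), ← Summable.sum_add_tsum_nat_add 2 (lp_summable v)]
  have htail : ∀ n : ℕ, (u : ∀ _ : ℕ, ℍ[ℝ]) (n + 2) = v (n + 2) := by
    intro n
    rw [hun (n+2) (by omega), hvn (n+2) (by omega)]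
  have hhead : ∑ n ∈ Finset.range 2, ‖(u : ∀ _ : ℕ, ℍ[ℝ]) n‖ ^ (2:ℝ)
      = ∑ n ∈ Finset.range 2, ‖(v : ∀ _ : ℕ, ℍ[ℝ]) n‖ ^ (2:ℝ) := by
    simp only [Finset.sum_range_succ, Finset.sum_range_zero]
    rw [hu0, hun 1 le_rfl, hv0, hv1, pow_one]
    rw [q_norm_sq, q_norm_sq, q_norm_sq, q_norm_sq]
    simp [Quaternion.re_mul, Quaternion.imI_mul, Quaternion.imJ_mul, Quaternion.imK_mul, Quaternion.re_coeComplex, Quaternion.imI_coeComplex,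
      Quaternion.imJ_coeComplex, Quaternion.imK_coeComplex]
    ring
  rw [hhead]
  congr 1
  exact tsum_congr fun n => by rw [htail n]

lemma lp_norm_sq_fin (f : lp (fun _ : ℕ => ℍ[ℝ]) 2) (N : ℕ)
    (h : ∀ n, N ≤ n → (f : ∀ _ : ℕ, ℍ[ℝ]) n = 0) :
    ‖f‖ ^ (2:ℝ) = ∑ n ∈ Finset.range N, ‖(f : ∀ _ : ℕ, ℍ[ℝ]) n‖ ^ (2:ℝ) := by
  rw [lp_norm_sq]
  refine tsum_eq_sum ?_
  intro n hn
  rw [h n (by simpa using hn)]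
  simp

lemma half_eq : (1/2 : ℍ[ℝ]) - (1/2 : ℍ[ℝ]) * qJ = (⟨1/2, 0, -(1/2), 0⟩ : ℍ[ℝ]) := by
  have h2 : ((2:ℝ) : ℍ[ℝ]) = 2 := by norm_cast
  have h : (1/2 : ℍ[ℝ]) = ((1/2 : ℝ) : ℍ[ℝ]) := by
    rw [Quaternion.coe_div, Quaternion.coe_one, h2]
  rw [h]
  ext <;>
    simp only [qJ_re, qJ_imI, qJ_imJ, qJ_imK, Quaternion.re_sub, Quaternion.imI_sub, Quaternion.imJ_sub, Quaternion.imK_sub,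
      Quaternion.re_mul, Quaternion.imI_mul, Quaternion.imJ_mul, Quaternion.imK_mul,
      Quaternion.re_coe, Quaternion.imI_coe, Quaternion.imJ_coe, Quaternion.imK_coe] <;>
    norm_num

lemma solve1 (y1 y2 : ℍ[ℝ]) (hJ : y2.imJ = 0) (hK : y2.imK = 0)
    (heq : (qJ*qI) * y1 + (1+qJ) * y2 = y1 * qI) :
    y2 = 0 ∧ y1.imJ = y1.re ∧ y1.imK = -y1.imI := by
  have e1 := congrArg QuaternionAlgebra.re heq
  have e2 := congrArg QuaternionAlgebra.imI heq
  have e3 := congrArg QuaternionAlgebra.imJ heq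
  have e4 := congrArg QuaternionAlgebra.imK heq
  simp [Quaternion.re_mul, Quaternion.imI_mul, Quaternion.imJ_mul, Quaternion.imK_mul] at e1 e2 e3 e4
  refine ⟨?_, by linarith, by linarith⟩
  ext <;> simp [hJ, hK] <;> linarith

lemma solve0 (y0 y1 y2 w : ℍ[ℝ]) (h1 : y1.imJ = y1.re) (h2 : y1.imK = -y1.imI) (h3 : y2 = 0)
    (hwJ : w.imJ = 0) (hwK : w.imK = 0)
    (heq : qI * y0 + ((1/2 : ℍ[ℝ]) - (1/2 : ℍ[ℝ]) * qJ) * y1 + y2 = y0 * qI + w) :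
    y1.re = w.re ∧ y1.imI = w.imI ∧ y0.imJ = 0 ∧ y0.imK = 0 := by
  subst h3
  rw [half_eq] at heq
  obtain ⟨c, hc⟩ : ∃ c : ℍ[ℝ], c = (⟨1/2, 0, -(1/2), 0⟩ : ℍ[ℝ]) := ⟨_, rfl⟩
  rw [← hc] at heq
  have hc1 : c.re = 1/2 := by rw [hc]
  have hc2 : c.imI = 0 := by rw [hc]
  have hc3 : c.imJ = -(1/2) := by rw [hc]
  have hc4 : c.imK = 0 := by rw [hc]
  have e1 := congrArg QuaternionAlgebra.re heq
  have e2 := congrArg QuaternionAlgebra.imI heq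
  have e3 := congrArg QuaternionAlgebra.imJ heq
  have e4 := congrArg QuaternionAlgebra.imK heq
  simp [Quaternion.re_mul, Quaternion.imI_mul, Quaternion.imJ_mul, Quaternion.imK_mul, hc1, hc2, hc3, hc4] at e1 e2 e3 e4
  exact ⟨by linarith, by linarith, by linarith, by linarith⟩

lemma tail_zero (y : lp (fun _ : ℕ => ℍ[ℝ]) 2)
    (hrec : ∀ n : ℕ, 2 ≤ n →
      (y : ∀ _ : ℕ, ℍ[ℝ]) (n+1) = y n * qI - qI * y n) :
    (∀ n : ℕ, 3 ≤ n → (y : ∀ _ : ℕ, ℍ[ℝ]) n = 0) ∧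
      ((y : ∀ _ : ℕ, ℍ[ℝ]) 2).imJ = 0 ∧ ((y : ∀ _ : ℕ, ℍ[ℝ]) 2).imK = 0 := by
  set g : ℕ → ℝ := fun n => ‖(y : ∀ _ : ℕ, ℍ[ℝ]) n‖ ^ (2:ℝ) with hg
  set m : ℍ[ℝ] → ℝ := fun q => q.imJ^2 + q.imK^2 with hm
  have mstep : ∀ q : ℍ[ℝ], m (q * qI - qI * q) = 4 * m q := by
    intro q; simp [hm, Quaternion.re_mul, Quaternion.imI_mul, Quaternion.imJ_mul, Quaternion.imK_mul]; ring
  have key : ∀ k : ℕ, m ((y : ∀ _ : ℕ, ℍ[ℝ]) (2+k)) = 4^k * m ((y : ∀ _ : ℕ, ℍ[ℝ]) 2) := by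
    intro k
    induction k with
    | zero => simp
    | succ k ih =>
      have h := hrec (2+k) (by omega)
      have : (2 + (k+1)) = (2+k) + 1 := by omega
      rw [this, h, mstep, ih]; ring
  have hm_le : ∀ q : ℍ[ℝ], m q ≤ ‖q‖ ^ (2:ℝ) := by
    intro q; rw [q_norm_sq]; simp [hm]; nlinarith [sq_nonneg q.re, sq_nonneg q.imI]
  have hm0 : m ((y : ∀ _ : ℕ, ℍ[ℝ]) 2) = 0 := by
    by_contra hne
    have hpos : 0 < m ((y : ∀ _ : ℕ, ℍ[ℝ]) 2) := by
      rcases lt_or_eq_of_le (by positivity : (0:ℝ) ≤ m ((y : ∀ _ : ℕ, ℍ[ℝ]) 2)) with h | h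
      · exact h
      · exact absurd h.symm hne
    have htend : Filter.Tendsto g Filter.atTop (nhds 0) := (lp_summable y).tendsto_atTop_zero
    obtain ⟨N, hN⟩ := Filter.eventually_atTop.1
      (htend.eventually (eventually_lt_nhds hpos))
    have h1 : g (2 + N) < m ((y : ∀ _ : ℕ, ℍ[ℝ]) 2) := hN (2+N) (by omega)
    have h2 : m ((y : ∀ _ : ℕ, ℍ[ℝ]) 2) ≤ g (2+N) := by
      calc m ((y : ∀ _ : ℕ, ℍ[ℝ]) 2) ≤ 4^N * m ((y : ∀ _ : ℕ, ℍ[ℝ]) 2) := by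
            have h4 : (1:ℝ) ≤ 4^N := one_le_pow₀ (by norm_num)
            nlinarith [h4, hpos]
        _ = m ((y : ∀ _ : ℕ, ℍ[ℝ]) (2+N)) := (key N).symm
        _ ≤ g (2+N) := hm_le _
    linarith
  simp only [hm] at hm0
  have hJK : ((y : ∀ _ : ℕ, ℍ[ℝ]) 2).imJ = 0 ∧ ((y : ∀ _ : ℕ, ℍ[ℝ]) 2).imK = 0 := by
    constructor <;> nlinarith [sq_nonneg ((y : ∀ _ : ℕ, ℍ[ℝ]) 2).imJ,
      sq_nonneg ((y : ∀ _ : ℕ, ℍ[ℝ]) 2).imK, hm0]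
  refine ⟨?_, hJK⟩
  have h3 : (y : ∀ _ : ℕ, ℍ[ℝ]) 3 = 0 := by
    have := hrec 2 le_rfl
    rw [this]
    ext <;> simp [Quaternion.re_mul, Quaternion.imI_mul, Quaternion.imJ_mul, Quaternion.imK_mul, hJK.1, hJK.2]
  intro n hn
  induction n, hn using Nat.le_induction with
  | base => exact h3
  | succ n hn ih =>
    rw [hrec n (by omega), ih]
    simp


lemma z0_aux {zr zi yr yi : ℝ}
    (h : (2:ℝ) = 0 + (zr^2 + zi^2 + 0^2 + 0^2) + (yr^2 + yi^2 + yr^2 + (-yi)^2))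
    (hn : yr^2 + yi^2 = 1) : zr = 0 ∧ zi = 0 := by
  have h1 : zr^2 + zi^2 = 0 := by nlinarith
  constructor <;> nlinarith [sq_nonneg zr, sq_nonneg zi]

section Part2
local notation "E2" => lp (fun _ : ℕ => ℍ[ℝ]) 2

lemma hsm (c : ℍ[ℝ]) (f : E2) (n : ℕ) : ((op c • f : E2) : ∀ _ : ℕ, ℍ[ℝ]) n = f n * c := by
  rw [lp.coeFn_smul]; simp [op_smul_eq_mul]

lemma hadd (f g : E2) (n : ℕ) : ((f + g : E2) : ∀ _ : ℕ, ℍ[ℝ]) n = f n + g n := by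
  rw [lp.coeFn_add]; simp

set_option maxHeartbeats 2000000 in
lemma part2 : (∀ T Tt : lp (fun _ : ℕ => ℍ[ℝ]) 2 → lp (fun _ : ℕ => ℍ[ℝ]) 2,
      (∀ x : lp (fun _ : ℕ => ℍ[ℝ]) 2,
        (T x : ∀ _ : ℕ, ℍ[ℝ]) 0 = qI * x 0 + (1 + 2 * (qJ * qI)) * x 1 + (1 + qJ) * x 2) →
      (∀ (x : lp (fun _ : ℕ => ℍ[ℝ]) 2) (n : ℕ), 1 ≤ n → T x n = qI * x n + x (n + 1)) →
      (∀ x : lp (fun _ : ℕ => ℍ[ℝ]) 2,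
        (Tt x : ∀ _ : ℕ, ℍ[ℝ]) 0
          = qI * x 0 + ((1 / 2 : ℍ[ℝ]) - (1 / 2 : ℍ[ℝ]) * qJ) * x 1 + x 2) →
      (∀ x : lp (fun _ : ℕ => ℍ[ℝ]) 2, (Tt x : ∀ _ : ℕ, ℍ[ℝ]) 1
          = (qJ * qI) * x 1 + (1 + qJ) * x 2) →
      (∀ (x : lp (fun _ : ℕ => ℍ[ℝ]) 2) (n : ℕ), 2 ≤ n → Tt x n = qI * x n + x (n + 1)) →
      ¬ ∃ U : lp (fun _ : ℕ => ℍ[ℝ]) 2 ≃ₗᵢ[ℍ[ℝ]ᵐᵒᵖ] lp (fun _ : ℕ => ℍ[ℝ]) 2,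
          ∀ x, U (T x) = Tt (U x)) := by
  intro T Tt hT0 hTn hTt0 hTt1 hTtn
  rintro ⟨U, hU⟩
  set e0 : E2 := lp.single 2 0 (1 : ℍ[ℝ]) with he0def
  set e1 : E2 := lp.single 2 1 (1 : ℍ[ℝ]) with he1def
  set vv : E2 := (lp.single (E := fun _ : ℕ => ℍ[ℝ]) 2 0 qJ) + e1 with hvvdef
  have he00 : (e0 : ∀ _ : ℕ, ℍ[ℝ]) 0 = 1 := lp.single_apply_self (E := fun _ : ℕ => ℍ[ℝ]) 2 0 1
  have he0s : ∀ n : ℕ, n ≠ 0 → (e0 : ∀ _ : ℕ, ℍ[ℝ]) n = 0 := fun n hn =>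
    lp.single_apply_ne (E := fun _ : ℕ => ℍ[ℝ]) 2 0 1 hn
  have he11 : (e1 : ∀ _ : ℕ, ℍ[ℝ]) 1 = 1 := lp.single_apply_self (E := fun _ : ℕ => ℍ[ℝ]) 2 1 1
  have he1s : ∀ n : ℕ, n ≠ 1 → (e1 : ∀ _ : ℕ, ℍ[ℝ]) n = 0 := fun n hn =>
    lp.single_apply_ne (E := fun _ : ℕ => ℍ[ℝ]) 2 1 1 hn
  have hq0 : ((lp.single 2 0 qJ : E2) : ∀ _ : ℕ, ℍ[ℝ]) 0 = qJ :=
    lp.single_apply_self (E := fun _ : ℕ => ℍ[ℝ]) 2 0 qJ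
  have hqs : ∀ n : ℕ, n ≠ 0 → ((lp.single 2 0 qJ : E2) : ∀ _ : ℕ, ℍ[ℝ]) n = 0 := fun n hn =>
    lp.single_apply_ne (E := fun _ : ℕ => ℍ[ℝ]) 2 0 qJ hn
  have hvv0 : (vv : ∀ _ : ℕ, ℍ[ℝ]) 0 = qJ := by
    rw [hvvdef, hadd, hq0, he1s 0 (by omega), add_zero]
  have hvv1 : (vv : ∀ _ : ℕ, ℍ[ℝ]) 1 = 1 := by
    rw [hvvdef, hadd, hqs 1 (by omega), he11, zero_add]
  have hvvs : ∀ n : ℕ, 2 ≤ n → (vv : ∀ _ : ℕ, ℍ[ℝ]) n = 0 := by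
    intro n hn
    rw [hvvdef, hadd, hqs n (by omega), he1s n (by omega), add_zero]
  -- Step A : T e0 = op qI • e0
  have hTe0 : T e0 = op qI • e0 := by
    apply lp.ext; funext n
    rw [hsm]
    match n with
    | 0 =>
      rw [hT0 e0, he00, he0s 1 (by omega), he0s 2 (by omega)]
      simp
    | (n+1) =>
      rw [hTn e0 (n+1) (by omega), he0s (n+1) (by omega), he0s (n+2) (by omega)]
      simp
  set y : E2 := U e0 with hydef
  have hy : Tt y = op qI • y := by
    rw [← hU e0, hTe0, LinearIsometryEquiv.map_smul]
  have hyc : ∀ n : ℕ, (Tt y : ∀ _ : ℕ, ℍ[ℝ]) n = y n * qI := fun n => by rw [hy, hsm]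
  have hrec_y : ∀ n : ℕ, 2 ≤ n → (y : ∀ _ : ℕ, ℍ[ℝ]) (n+1) = y n * qI - qI * y n := by
    intro n hn
    have h := hTtn y n hn
    rw [hyc n] at h
    exact eq_sub_of_add_eq' h.symm
  obtain ⟨hy3, hy2J, hy2K⟩ := tail_zero y hrec_y
  have h1 := hTt1 y
  rw [hyc 1] at h1
  obtain ⟨hy2, hy1J, hy1K⟩ := solve1 _ _ hy2J hy2K h1.symm
  have h0 := hTt0 y
  rw [hyc 0] at h0
  obtain ⟨hy1re, hy1imI, hy0J, hy0K⟩ :=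
    solve0 ((y : ∀ _ : ℕ, ℍ[ℝ]) 0) ((y : ∀ _ : ℕ, ℍ[ℝ]) 1) ((y : ∀ _ : ℕ, ℍ[ℝ]) 2) 0
      hy1J hy1K hy2 (by simp) (by simp) (by rw [← add_zero ((y : ∀ _ : ℕ, ℍ[ℝ]) 0 * qI)] at h0; exact h0.symm)
  simp only [Quaternion.re_zero, Quaternion.imI_zero] at hy1re hy1imI
  have hy1 : (y : ∀ _ : ℕ, ℍ[ℝ]) 1 = 0 := by
    ext
    · simpa using hy1re
    · simpa using hy1imI
    · rw [hy1J]; simpa using hy1re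
    · rw [hy1K]; simpa using hy1imI
  have hys : ∀ n : ℕ, 1 ≤ n → (y : ∀ _ : ℕ, ℍ[ℝ]) n = 0 := by
    intro n hn
    match n, hn with
    | 1, _ => exact hy1
    | 2, _ => exact hy2
    | (n+3), _ => exact hy3 (n+3) (by omega)
  -- ‖y‖ = 1
  have hne0 : ‖e0‖ = 1 := by
    have := lp.norm_single (p := 2) (E := fun _ : ℕ => ℍ[ℝ]) (by norm_num) 0 (1:ℍ[ℝ])
    simpa [he0def] using this
  have hny : ‖y‖ = 1 := by rw [hydef, U.norm_map]; exact hne0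
  have hnormy : ((y : ∀ _ : ℕ, ℍ[ℝ]) 0).re^2 + ((y : ∀ _ : ℕ, ℍ[ℝ]) 0).imI^2 = 1 := by
    have h := lp_norm_sq_fin y 1 hys
    rw [hny, Real.one_rpow] at h
    simp only [Finset.sum_range_one] at h
    rw [q_norm_sq, hy0J, hy0K] at h
    norm_num at h
    linarith [h]
  -- Step B : T vv = op qI • vv + e0
  have hTvv : T vv = op qI • vv + e0 := by
    apply lp.ext; funext n
    rw [hadd, hsm]
    match n with
    | 0 =>
      rw [hT0 vv, hvv0, hvv1, hvvs 2 (by omega), he00]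
      ext <;> simp [Quaternion.re_mul, Quaternion.imI_mul, Quaternion.imJ_mul, Quaternion.imK_mul, two_mul]
    | 1 =>
      rw [hTn vv 1 (by omega), hvv1, hvvs 2 (by omega), he0s 1 (by omega)]
      simp
    | (n+2) =>
      rw [hTn vv (n+2) (by omega), hvvs (n+2) (by omega), hvvs (n+3) (by omega),
        he0s (n+2) (by omega)]
      simp
  -- z = U vv
  set z : E2 := U vv with hzdef
  have hz : Tt z = op qI • z + y := by
    rw [← hU vv, hTvv, LinearIsometryEquiv.map_add, LinearIsometryEquiv.map_smul]
  have hzc : ∀ n : ℕ, (Tt z : ∀ _ : ℕ, ℍ[ℝ]) n = z n * qI + y n := fun n => by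
    rw [hz, hadd, hsm]
  have hrec_z : ∀ n : ℕ, 2 ≤ n → (z : ∀ _ : ℕ, ℍ[ℝ]) (n+1) = z n * qI - qI * z n := by
    intro n hn
    have h := hTtn z n hn
    rw [hzc n, hys n (by omega), add_zero] at h
    exact eq_sub_of_add_eq' h.symm
  obtain ⟨hz3, hz2J, hz2K⟩ := tail_zero z hrec_z
  have hz1eq := hTt1 z
  rw [hzc 1, hy1, add_zero] at hz1eq
  obtain ⟨hz2, hz1J, hz1K⟩ := solve1 _ _ hz2J hz2K hz1eq.symm
  have hz0eq := hTt0 z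
  rw [hzc 0] at hz0eq
  obtain ⟨hz1re, hz1imI, hz0J, hz0K⟩ :=
    solve0 ((z : ∀ _ : ℕ, ℍ[ℝ]) 0) ((z : ∀ _ : ℕ, ℍ[ℝ]) 1) ((z : ∀ _ : ℕ, ℍ[ℝ]) 2)
      ((y : ∀ _ : ℕ, ℍ[ℝ]) 0) hz1J hz1K hz2 hy0J hy0K hz0eq.symm
  have hzs : ∀ n : ℕ, 2 ≤ n → (z : ∀ _ : ℕ, ℍ[ℝ]) n = 0 := by
    intro n hn
    match n, hn with
    | 2, _ => exact hz2
    | (n+3), _ => exact hz3 (n+3) (by omega)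
  -- ‖z‖ = ‖vv‖, hence z 0 = 0
  have hnvv : ‖vv‖ ^ (2:ℝ) = 2 := by
    rw [lp_norm_sq_fin vv 2 hvvs]
    simp only [Finset.sum_range_succ, Finset.sum_range_zero]
    rw [hvv0, hvv1, q_norm_sq, q_norm_sq]
    simp [qJ]
    norm_num
  have hnz : ‖z‖ ^ (2:ℝ) = 2 := by rw [hzdef, U.norm_map]; exact hnvv
  have hz0re : ((z : ∀ _ : ℕ, ℍ[ℝ]) 0).re = 0 ∧ ((z : ∀ _ : ℕ, ℍ[ℝ]) 0).imI = 0 := by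
    have h := lp_norm_sq_fin z 2 hzs
    rw [hnz] at h
    simp only [Finset.sum_range_succ, Finset.sum_range_zero] at h
    rw [q_norm_sq] at h
    rw [q_norm_sq] at h
    rw [hz0J] at h
    rw [hz0K] at h
    rw [hz1J] at h
    rw [hz1K] at h
    rw [hz1re] at h
    rw [hz1imI] at h
    exact z0_aux h hnormy
  have hz0 : (z : ∀ _ : ℕ, ℍ[ℝ]) 0 = 0 := by
    ext
    · simpa using hz0re.1
    · simpa using hz0re.2
    · simpa using hz0J
    · simpa using hz0K
  -- Step C : the contradiction via e1
  have hqJe0 : (lp.single (E := fun _ : ℕ => ℍ[ℝ]) 2 0 qJ) = op qJ • e0 := by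
    apply lp.ext; funext n
    rw [hsm]
    match n with
    | 0 => rw [hq0, he00, one_mul]
    | (n+1) => rw [hqs (n+1) (by omega), he0s (n+1) (by omega), zero_mul]
  have he1vv : e1 = vv - op qJ • e0 := by
    rw [hvvdef, hqJe0]; abel
  have hUe1 : U e1 = z - op qJ • y := by
    rw [he1vv, LinearIsometryEquiv.map_sub, LinearIsometryEquiv.map_smul, ← hzdef, ← hydef]
  have hwc : ∀ n : ℕ, (U e1 : ∀ _ : ℕ, ℍ[ℝ]) n = z n - y n * qJ := fun n => by
    rw [hUe1, lp.coeFn_sub, Pi.sub_apply, hsm]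
  have hws : ∀ n : ℕ, 2 ≤ n → (U e1 : ∀ _ : ℕ, ℍ[ℝ]) n = 0 := by
    intro n hn
    rw [hwc n, hzs n hn, hys n (by omega), zero_mul, sub_zero]
  have hne1 : ‖e1‖ = 1 := by
    have := lp.norm_single (p := 2) (E := fun _ : ℕ => ℍ[ℝ]) (by norm_num) 1 (1:ℍ[ℝ])
    simpa [he1def] using this
  have hnw : ‖U e1‖ ^ (2:ℝ) = 1 := by
    rw [U.norm_map, hne1, Real.one_rpow]
  have hfin := lp_norm_sq_fin (U e1) 2 hws
  rw [hnw] at hfin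
  simp only [Finset.sum_range_succ, Finset.sum_range_zero] at hfin
  rw [hwc 0, hwc 1, hz0, hy1, q_norm_sq, q_norm_sq] at hfin
  simp only [zero_mul, zero_sub, sub_zero, Quaternion.re_neg, Quaternion.imI_neg,
    Quaternion.imJ_neg, Quaternion.imK_neg, Quaternion.re_mul, Quaternion.imI_mul,
    Quaternion.imJ_mul, Quaternion.imK_mul] at hfin
  rw [hz1J, hz1K, hz1re, hz1imI] at hfin
  simp [qJ, hy0J, hy0K] at hfin
  nlinarith [hnormy, hfin]
end Part2

/-- The two explicit operators `T`, `T̃` on `ℓ²(ℕ, ℍ)` have right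
holomorphic frames `γ`, `γ̃` of the same norm at every `ω` with `|ω − 𝐢| < 1` (hence the
associated bundles have the same curvature), yet `T` and `T̃` are not quaternion
unitarily equivalent. -/
theorem same_curvature_not_unitarilyEquivalent :
    (∀ ω : ℂ, ‖ω - Complex.I‖ < 1 →
      ∀ u v : lp (fun _ : ℕ => ℍ[ℝ]) 2,
        ((u : ∀ _ : ℕ, ℍ[ℝ]) 0 = 1 + (1 + qJ) * ((ω : ℍ[ℝ]) - qI)) →
        (∀ n : ℕ, 1 ≤ n → u n = ((ω : ℍ[ℝ]) - qI) ^ n) →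
        ((v : ∀ _ : ℕ, ℍ[ℝ]) 0 = 1 + ((ω : ℍ[ℝ]) - qI)) →
        (v 1 = (1 + qJ) * ((ω : ℍ[ℝ]) - qI)) →
        (∀ n : ℕ, 2 ≤ n → v n = ((ω : ℍ[ℝ]) - qI) ^ n) →
        ‖u‖ = ‖v‖) ∧
    (∀ T Tt : lp (fun _ : ℕ => ℍ[ℝ]) 2 → lp (fun _ : ℕ => ℍ[ℝ]) 2,
      (∀ x : lp (fun _ : ℕ => ℍ[ℝ]) 2,
        (T x : ∀ _ : ℕ, ℍ[ℝ]) 0 = qI * x 0 + (1 + 2 * (qJ * qI)) * x 1 + (1 + qJ) * x 2) →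
      (∀ (x : lp (fun _ : ℕ => ℍ[ℝ]) 2) (n : ℕ), 1 ≤ n → T x n = qI * x n + x (n + 1)) →
      (∀ x : lp (fun _ : ℕ => ℍ[ℝ]) 2,
        (Tt x : ∀ _ : ℕ, ℍ[ℝ]) 0
          = qI * x 0 + ((1 / 2 : ℍ[ℝ]) - (1 / 2 : ℍ[ℝ]) * qJ) * x 1 + x 2) →
      (∀ x : lp (fun _ : ℕ => ℍ[ℝ]) 2, (Tt x : ∀ _ : ℕ, ℍ[ℝ]) 1
          = (qJ * qI) * x 1 + (1 + qJ) * x 2) →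
      (∀ (x : lp (fun _ : ℕ => ℍ[ℝ]) 2) (n : ℕ), 2 ≤ n → Tt x n = qI * x n + x (n + 1)) →
      ¬ ∃ U : lp (fun _ : ℕ => ℍ[ℝ]) 2 ≃ₗᵢ[ℍ[ℝ]ᵐᵒᵖ] lp (fun _ : ℕ => ℍ[ℝ]) 2,
          ∀ x, U (T x) = Tt (U x)) := by
  exact ⟨part1, part2⟩
end
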